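/- arXiv:1708.04213 — 13 statements merged into one kernel-verified Lean document; each statement's English description precedes it below -/
import Mathlib

section
/- Let p be a prime and let (a,b;c) be admissible rational hypergeometric parameters for which p is a good prime. If for every index j ≥ 1 one has τ_j(c−1) ≤ max(τ_j(a−1), τ_j(b−1)), then v_p(A_m) ≥ 0 for every m ≥ 0; in particular all coefficients of ₂F₁(a,b;c;z) are p-adic integers. -/
open scoped BigOperators

/-- The `m`-th coefficient `A_m = (a)_m (b)_m / ((c)_m · m!)` of the Gauss
hypergeometric series `₂F₁(a,b;c;z)`. -/
noncomputable def hypCoeff (a b c : ℚ) (m : ℕ) : ℚ :=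
  ((ascPochhammer ℚ m).eval a * (ascPochhammer ℚ m).eval b) /
    ((ascPochhammer ℚ m).eval c * (m.factorial : ℚ))

/-- `₂F₁(a,b;c;z)` has `p`-adically unbounded coefficients. -/
def UnboundedAt (p : ℕ) (a b c : ℚ) : Prop :=
  ∀ N : ℕ, ∃ m : ℕ, padicValRat p (hypCoeff a b c m) < -(N : ℤ)

/-- `(a,b;c)` are admissible hypergeometric parameters. -/
def Admissible (a b c : ℚ) : Prop :=
  0 < a ∧ a < 1 ∧ 0 < b ∧ b < 1 ∧ 0 < c ∧ c < 1 ∧ a ≠ c ∧ b ≠ c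

/-- `τ : ℕ → ℤ` is the family of truncations of the rational number `x`
(with `v_p(x) ≥ 0`): `τ j` is the unique integer with `0 ≤ τ j < p^j` and
`v_p(x - τ j) ≥ j` (the latter interpreted as `x = τ j` or `j ≤ v_p(x - τ j)`). -/
def IsTrunc (p : ℕ) (x : ℚ) (τ : ℕ → ℤ) : Prop :=
  ∀ j : ℕ, 0 ≤ τ j ∧ τ j < (p : ℤ) ^ j ∧
    (x = (τ j : ℚ) ∨ (j : ℤ) ≤ padicValRat p (x - τ j))

section Aux
variable {p : ℕ} [hp : Fact p.Prime]

lemma count_cong (q t : ℕ) (m : ℕ) (ht : t < q) :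
    ((Finset.range m).filter (fun k => (k + t + 1) % q = 0)).card = (m + t) / q := by
  induction m with
  | zero => simp [Nat.div_eq_of_lt ht]
  | succ m ih =>
    rw [Finset.range_add_one, Finset.filter_insert]
    have he : m + 1 + t = m + t + 1 := by ring
    by_cases hd : (m + t + 1) % q = 0
    · rw [if_pos hd, Finset.card_insert_of_notMem (by simp), ih, he, Nat.succ_div,
        if_pos (Nat.dvd_of_mod_eq_zero hd)]
    · rw [if_neg hd, ih, he, Nat.succ_div, if_neg, add_zero]
      intro hdvd
      exact hd (Nat.mod_eq_zero_of_dvd hdvd)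

lemma val_iff {x : ℚ} {τ : ℕ → ℤ} (hx : 0 < x) (hτ : IsTrunc p (x - 1) τ)
    (k j : ℕ) :
    (j : ℤ) ≤ padicValRat p (x + k) ↔ (p : ℤ) ^ j ∣ ((k : ℤ) + 1 + τ j) := by
  obtain ⟨ht0, htlt, hdisj⟩ := hτ j
  have hwpos : (0 : ℤ) < (k : ℤ) + 1 + τ j := by omega
  have hwne : ((k : ℤ) + 1 + τ j) ≠ 0 := hwpos.ne'
  have hxk : x + (k : ℚ) ≠ 0 := by positivity
  by_cases heq : x - 1 = (τ j : ℚ)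
  · have hxw : x + (k : ℚ) = (((k : ℤ) + 1 + τ j : ℤ) : ℚ) := by
      push_cast
      linarith [heq]
    rw [hxw, padicValRat.of_int, padicValInt_dvd_iff]
    simp [hwne, Int.ofNat_le]
  · have hval : (j : ℤ) ≤ padicValRat p (x - 1 - τ j) := by
      rcases hdisj with h1 | h1
      · exact absurd h1 heq
      · exact h1
    set u : ℚ := x - 1 - (τ j : ℚ) with hu
    have hune : u ≠ 0 := sub_ne_zero.mpr heq
    set w : ℚ := (((k : ℤ) + 1 + τ j : ℤ) : ℚ) with hw
    have hwne' : w ≠ 0 := by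
      rw [hw]
      exact_mod_cast hwne
    have hsum : x + (k : ℚ) = u + w := by
      rw [hu, hw]
      push_cast
      ring
    have hvw : padicValRat p w = (padicValInt p ((k : ℤ) + 1 + τ j) : ℤ) := by
      rw [hw, padicValRat.of_int]
    constructor
    · intro hle
      by_contra hndvd
      have hlt : (padicValInt p ((k : ℤ) + 1 + τ j) : ℤ) < j := by
        rcases (padicValInt_dvd_iff j ((k : ℤ) + 1 + τ j)).not.mp hndvd with h
        push_neg at h
        exact_mod_cast h.2
      have hvwlt : padicValRat p w < padicValRat p u := by
        rw [hvw]; exact lt_of_lt_of_le hlt hval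
      have : padicValRat p (w + u) = padicValRat p w := by
        apply padicValRat.add_eq_of_lt (by rw [add_comm, ← hsum]; exact hxk) hwne' hune hvwlt
      rw [hsum, add_comm u w, this, hvw] at hle
      omega
    · intro hdvd
      have hj : (j : ℤ) ≤ padicValRat p w := by
        rw [hvw]
        rcases (padicValInt_dvd_iff j ((k : ℤ) + 1 + τ j)).mp hdvd with h | h
        · exact absurd h hwne
        · exact_mod_cast h
      have := padicValRat.min_le_padicValRat_add (p := p) (q := u) (r := w)
        (by rw [← hsum]; exact hxk)
      rw [hsum]
      exact le_trans (le_min hval hj) this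

lemma val_nonneg {x : ℚ} {τ : ℕ → ℤ} (hx : 0 < x) (hτ : IsTrunc p (x - 1) τ)
    (k : ℕ) : 0 ≤ padicValRat p (x + k) := by
  have := (val_iff hx hτ k 0).mpr (by simp)
  exact_mod_cast this

lemma poch_val {x : ℚ} (hx : 0 < x) (m : ℕ) :
    padicValRat p ((ascPochhammer ℚ m).eval x) =
      ∑ k ∈ Finset.range m, padicValRat p (x + k) := by
  induction m with
  | zero => simp
  | succ m ih =>
    rw [ascPochhammer_succ_eval, Finset.sum_range_succ, ← ih,
      padicValRat.mul (ne_of_gt (ascPochhammer_pos m x hx)) (by positivity)]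

lemma sum_val {x : ℚ} {τ : ℕ → ℤ} (hx : 0 < x) (hτ : IsTrunc p (x - 1) τ)
    (m J : ℕ) (hJ : ∀ k < m, padicValRat p (x + k) < J) :
    ∑ k ∈ Finset.range m, padicValRat p (x + k)
      = ((∑ j ∈ Finset.Ico 1 J, (m + (τ j).toNat) / p ^ j : ℕ) : ℤ) := by
  have hstep : ∀ k ∈ Finset.range m, padicValRat p (x + k)
      = (((Finset.Ico 1 J).filter (fun j : ℕ => (j : ℤ) ≤ padicValRat p (x + (k:ℚ)))).card : ℤ) := by
    intro k hk
    have h0 := val_nonneg hx hτ k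
    have hlt := hJ k (Finset.mem_range.mp hk)
    set v := padicValRat p (x + k) with hv
    have hfil : (Finset.Ico 1 J).filter (fun j : ℕ => (j : ℤ) ≤ v)
        = Finset.Ico 1 (v.toNat + 1) := by
      ext j
      simp only [Finset.mem_filter, Finset.mem_Ico]
      omega
    rw [hfil, Nat.card_Ico]
    omega
  have hcard : ∀ j ∈ Finset.Ico 1 J,
      ((Finset.range m).filter (fun k : ℕ => (j : ℤ) ≤ padicValRat p (x + (k:ℚ)))).card
        = (m + (τ j).toNat) / p ^ j := by
    intro j _
    obtain ⟨h0, h1, _⟩ := hτ j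
    have hiff : ∀ k : ℕ, ((j : ℤ) ≤ padicValRat p (x + k)) ↔ ((k + (τ j).toNat + 1) % p ^ j = 0) := by
      intro k
      rw [val_iff hx hτ k j]
      have hcast : ((k : ℤ) + 1 + τ j) = ((k + (τ j).toNat + 1 : ℕ) : ℤ) := by
        push_cast [Int.toNat_of_nonneg h0]
        ring
      rw [hcast, show ((p : ℤ) ^ j) = ((p ^ j : ℕ) : ℤ) by push_cast; ring,
        Int.natCast_dvd_natCast]
      exact ⟨Nat.mod_eq_zero_of_dvd, Nat.dvd_of_mod_eq_zero⟩
    have htlt : (τ j).toNat < p ^ j := by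
      have : ((τ j).toNat : ℤ) < ((p ^ j : ℕ) : ℤ) := by
        push_cast
        omega
      exact_mod_cast this
    rw [Finset.filter_congr (fun k _ => by rw [hiff k])]
    exact count_cong (p ^ j) (τ j).toNat m htlt
  have hnat : ∑ k ∈ Finset.range m,
      ((Finset.Ico 1 J).filter (fun j : ℕ => (j : ℤ) ≤ padicValRat p (x + (k:ℚ)))).card
      = ∑ j ∈ Finset.Ico 1 J, (m + (τ j).toNat) / p ^ j := by
    simp_rw [Finset.card_filter]
    rw [Finset.sum_comm]
    refine Finset.sum_congr rfl (fun j hj => ?_)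
    rw [← Finset.card_filter]
    exact hcard j hj
  rw [Finset.sum_congr rfl hstep, ← hnat]
  push_cast
  rfl

end Aux

/-- If `p` is a good prime for admissible parameters `(a,b;c)` and for every `j ≥ 1`
one has `τ_j(c-1) ≤ max(τ_j(a-1), τ_j(b-1))`, then every coefficient of
`₂F₁(a,b;c;z)` is a `p`-adic integer. -/
theorem stmt_1 (p : ℕ) (hp : p.Prime) (a b c : ℚ) (hadm : Admissible a b c)
    (hgood : padicValRat p (a - 1) = 0 ∧ padicValRat p (b - 1) = 0 ∧
      padicValRat p (c - 1) = 0)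
    (τa τb τc : ℕ → ℤ)
    (hτa : IsTrunc p (a - 1) τa) (hτb : IsTrunc p (b - 1) τb)
    (hτc : IsTrunc p (c - 1) τc)
    (h : ∀ j : ℕ, 1 ≤ j → τc j ≤ max (τa j) (τb j)) :
    ∀ m : ℕ, 0 ≤ padicValRat p (hypCoeff a b c m) := by
  haveI : Fact p.Prime := ⟨hp⟩
  obtain ⟨ha, -, hb, -, hc, -, -, -⟩ := hadm
  intro m
  set τ1 : ℕ → ℤ := fun _ => 0 with hτ1def
  have hτ1 : IsTrunc p ((1 : ℚ) - 1) τ1 := by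
    intro j
    refine ⟨le_refl _, pow_pos (by exact_mod_cast hp.pos) j, Or.inl (by norm_num)⟩
  have h1 : (0 : ℚ) < 1 := one_pos
  -- valuation of hypCoeff as a difference of sums
  have hPa := ascPochhammer_pos m a ha
  have hPb := ascPochhammer_pos m b hb
  have hPc := ascPochhammer_pos m c hc
  have hF : ((m.factorial : ℚ)) = (ascPochhammer ℚ m).eval 1 :=
    (ascPochhammer_eval_one ℚ m).symm
  have hFpos : (0 : ℚ) < (m.factorial : ℚ) := by positivity
  have hval : padicValRat p (hypCoeff a b c m)
      = (∑ k ∈ Finset.range m, padicValRat p (a + k)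
        + ∑ k ∈ Finset.range m, padicValRat p (b + k))
      - (∑ k ∈ Finset.range m, padicValRat p (c + k)
        + ∑ k ∈ Finset.range m, padicValRat p ((1 : ℚ) + k)) := by
    rw [hypCoeff, padicValRat.div (mul_ne_zero hPa.ne' hPb.ne')
        (mul_ne_zero hPc.ne' hFpos.ne'),
      padicValRat.mul hPa.ne' hPb.ne', padicValRat.mul hPc.ne' hFpos.ne',
      hF, poch_val ha, poch_val hb, poch_val hc, poch_val h1]
  -- a common bound J
  set Vf : ℕ → ℕ := fun k => (padicValRat p (a + k)).toNat + (padicValRat p (b + k)).toNat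
      + (padicValRat p (c + k)).toNat + (padicValRat p ((1:ℚ) + k)).toNat with hVf
  set J : ℕ := 1 + ∑ k ∈ Finset.range m, Vf k with hJdef
  have hsumle : ∀ k < m, Vf k < J := by
    intro k hk
    have := Finset.single_le_sum (f := Vf) (fun i _ => Nat.zero_le _)
      (Finset.mem_range.mpr hk)
    omega
  have hJa : ∀ k < m, padicValRat p (a + k) < J := by
    intro k hk
    have h0 := val_nonneg ha hτa k
    have := hsumle k hk
    simp only [hVf] at this
    omega
  have hJb : ∀ k < m, padicValRat p (b + k) < J := by
    intro k hk
    have h0 := val_nonneg hb hτb k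
    have := hsumle k hk
    simp only [hVf] at this
    omega
  have hJc : ∀ k < m, padicValRat p (c + k) < J := by
    intro k hk
    have h0 := val_nonneg hc hτc k
    have := hsumle k hk
    simp only [hVf] at this
    omega
  have hJ1 : ∀ k < m, padicValRat p ((1:ℚ) + k) < J := by
    intro k hk
    have h0 := val_nonneg h1 hτ1 k
    have := hsumle k hk
    simp only [hVf] at this
    omega
  rw [hval, sum_val ha hτa m J hJa, sum_val hb hτb m J hJb, sum_val hc hτc m J hJc,
    sum_val h1 hτ1 m J hJ1]
  have hnat : (∑ j ∈ Finset.Ico 1 J, (m + (τc j).toNat) / p ^ j)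
      + (∑ j ∈ Finset.Ico 1 J, (m + (τ1 j).toNat) / p ^ j)
      ≤ (∑ j ∈ Finset.Ico 1 J, (m + (τa j).toNat) / p ^ j)
      + (∑ j ∈ Finset.Ico 1 J, (m + (τb j).toNat) / p ^ j) := by
    rw [← Finset.sum_add_distrib, ← Finset.sum_add_distrib]
    refine Finset.sum_le_sum (fun j hj => ?_)
    have hj1 : 1 ≤ j := (Finset.mem_Ico.mp hj).1
    have hmax := h j hj1
    have h0a := (hτa j).1
    have h0b := (hτb j).1
    have h0c := (hτc j).1
    have hτ1j : (τ1 j).toNat = 0 := rfl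
    rw [hτ1j]
    rcases le_max_iff.mp hmax with hca | hcb
    · have : (τc j).toNat ≤ (τa j).toNat := by omega
      exact Nat.add_le_add (Nat.div_le_div_right (by omega)) (Nat.div_le_div_right (by omega))
    · have : (τc j).toNat ≤ (τb j).toNat := by omega
      rw [add_comm ((m + (τa j).toNat) / p ^ j)]
      exact Nat.add_le_add (Nat.div_le_div_right (by omega)) (Nat.div_le_div_right (by omega))
  omega
end

section
/- Let (a,b;c) be admissible rational hypergeometric parameters and let D be the least common multiple of the denominators of a, b and c. If there exist infinitely many primes p with p ≡ 1 (mod D) such that the coefficients of ₂F₁(a,b;c;z) are p-adically unbounded, then c < a and c < b. -/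
open scoped BigOperators
open Finset

lemma count_mod_mono (q m t t' : ℕ) (ht' : t' < q) (htt : t ≤ t') :
    ((range m).filter (fun k => k % q = t')).card ≤
      ((range m).filter (fun k => k % q = t)).card := by
  apply Finset.card_le_card_of_injOn (fun k => k - (t' - t))
  · intro k hk
    simp only [mem_coe, mem_filter, mem_range] at hk ⊢
    obtain ⟨hkm, hkq⟩ := hk
    have hmod := Nat.mod_le k q
    rw [hkq] at hmod
    have hdiv := Nat.div_add_mod k q
    refine ⟨by omega, ?_⟩
    have hk2 : k - (t' - t) = q * (k / q) + t := by omega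
    rw [hk2, Nat.mul_add_mod, Nat.mod_eq_of_lt (lt_of_le_of_lt htt ht')]
  · intro x hx y hy hxy
    simp only [coe_filter, Set.mem_setOf_eq, mem_range] at hx hy
    have h1 := Nat.mod_le x q
    have h2 := Nat.mod_le y q
    rw [hx.2] at h1; rw [hy.2] at h2
    simp only at hxy
    omega

lemma dvd_iff_mod (d e r k : ℕ) (hr : r ≤ d) :
    (d * e + 1) ∣ (r + d * k) ↔ k % (d * e + 1) = r * e := by
  set q := d * e + 1 with hq
  have hcop : Nat.Coprime d q := by
    have : Nat.Coprime d 1 := Nat.coprime_one_right d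
    simpa [hq, add_comm] using this.add_mul_left_right e
  have htlt : r * e < q := by
    have : r * e ≤ d * e := Nat.mul_le_mul_right e hr
    omega
  have hbase : q ∣ (r + d * (r * e)) := by
    have : r + d * (r * e) = r * q := by ring
    rw [this]; exact dvd_mul_left q r
  constructor
  · intro h
    have h1 : r + d * k ≡ r + d * (r * e) [MOD q] :=
      ((Nat.modEq_zero_iff_dvd).2 h).trans ((Nat.modEq_zero_iff_dvd).2 hbase).symm
    have h2 : d * k ≡ d * (r * e) [MOD q] := Nat.ModEq.add_left_cancel' r h1
    have h3 : k ≡ r * e [MOD q] := Nat.ModEq.cancel_left_of_coprime hcop.symm h2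
    calc k % q = (r * e) % q := h3
    _ = r * e := Nat.mod_eq_of_lt htlt
  · intro h
    have hdiv := Nat.div_add_mod k q
    obtain ⟨i, hk⟩ : ∃ i, k = q * i + r * e := ⟨k / q, by omega⟩
    have : r + d * k = r * q + d * q * i := by rw [hk]; ring
    rw [this]
    exact Dvd.dvd.add (dvd_mul_left q r) ⟨d * i, by ring⟩

lemma padicValNat_eq_card (p n J : ℕ) [hp : Fact p.Prime] (hn : 0 < n) (hnJ : n < p ^ J) :
    padicValNat p n = ((Ico 1 J).filter (fun j => p ^ j ∣ n)).card := by
  have hv : padicValNat p n < J := by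
    have h1 : p ^ padicValNat p n ≤ n := Nat.le_of_dvd hn pow_padicValNat_dvd
    exact (Nat.pow_lt_pow_iff_right hp.out.one_lt).mp (lt_of_le_of_lt h1 hnJ)
  have heq : (Ico 1 J).filter (fun j => p ^ j ∣ n) = Ico 1 (padicValNat p n + 1) := by
    ext j
    simp only [mem_filter, mem_Ico, padicValNat_dvd_iff_le hn.ne']
    omega
  rw [heq, Nat.card_Ico]
  omega

lemma sum_val_mono (p d r s m : ℕ) [hp : Fact p.Prime] (hr : 0 < r) (hrs : r ≤ s)
    (hsd : s ≤ d) (hmod : p % d = 1 % d) :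
    ∑ k ∈ range m, padicValNat p (s + d * k) ≤ ∑ k ∈ range m, padicValNat p (r + d * k) := by
  classical
  set J := d + d * m with hJ
  have hd0 : 0 < d := lt_of_lt_of_le (lt_of_lt_of_le hr hrs) hsd
  have hbound : ∀ x k, x ≤ d → k < m → x + d * k < p ^ J := by
    intro x k hxd hk
    have h1 : x + d * k < J := by
      have : d * (k + 1) ≤ d * m := Nat.mul_le_mul_left d hk
      have : d * k + d ≤ d * m := by rw [Nat.mul_add, Nat.mul_one] at this; omega
      omega
    calc x + d * k < J := h1
    _ < 2 ^ J := Nat.lt_two_pow_self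
    _ ≤ p ^ J := Nat.pow_le_pow_left hp.out.two_le J
  have expand : ∀ x, 0 < x → x ≤ d →
      ∑ k ∈ range m, padicValNat p (x + d * k)
        = ∑ j ∈ Ico 1 J, ((range m).filter (fun k => p ^ j ∣ (x + d * k))).card := by
    intro x hx hxd
    rw [Finset.sum_congr rfl (fun k hk => padicValNat_eq_card p (x + d * k) J (by positivity)
      (hbound x k hxd (mem_range.mp hk)))]
    simp_rw [Finset.card_filter]
    exact Finset.sum_comm
  rw [expand r hr (le_trans hrs hsd), expand s (lt_of_lt_of_le hr hrs) hsd]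
  apply Finset.sum_le_sum
  intro j _
  obtain ⟨e, hqe⟩ : ∃ e, p ^ j = d * e + 1 := by
    have h1 : p ^ j ≡ 1 [MOD d] := by
      have := (Nat.ModEq.pow j (hmod : p ≡ 1 [MOD d]))
      simpa using this
    have h2 : d ∣ p ^ j - 1 := (Nat.modEq_iff_dvd' (Nat.one_le_two_pow.trans
      (Nat.pow_le_pow_left hp.out.two_le j))).mp h1.symm
    obtain ⟨e, he⟩ := h2
    exact ⟨e, by have := Nat.one_le_two_pow.trans (Nat.pow_le_pow_left hp.out.two_le j); omega⟩
  have hcard : ∀ x, x ≤ d → ((range m).filter (fun k => p ^ j ∣ (x + d * k))).card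
      = ((range m).filter (fun k => k % p ^ j = x * e)).card := by
    intro x hxd
    congr 1
    apply Finset.filter_congr
    intro k _
    simp only [hqe, dvd_iff_mod d e x k hxd]
  rw [hcard s hsd, hcard r (le_trans hrs hsd), hqe]
  exact count_mod_mono _ m (r * e) (s * e)
    (by have : s * e ≤ d * e := Nat.mul_le_mul_right e hsd; omega)
    (Nat.mul_le_mul_right e hrs)

lemma val_poch (p : ℕ) [Fact p.Prime] (x : ℚ) (hx : 0 < x) (m : ℕ) :
    padicValRat p ((ascPochhammer ℚ m).eval x) = ∑ k ∈ range m, padicValRat p (x + k) := by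
  induction m with
  | zero => simp
  | succ n ih =>
    have h1 : (ascPochhammer ℚ n).eval x ≠ 0 := ne_of_gt (ascPochhammer_pos n x hx)
    have h2 : x + (n : ℚ) ≠ 0 := by positivity
    rw [ascPochhammer_succ_right, Polynomial.eval_mul]
    simp only [Polynomial.eval_add, Polynomial.eval_X, Polynomial.eval_natCast]
    rw [padicValRat.mul h1 h2, Finset.sum_range_succ, ih]

lemma hyp_val_nonneg (p D : ℕ) [hp : Fact p.Prime] (a b c : ℚ)
    (hDa : a.den ∣ D) (hDb : b.den ∣ D) (hDc : c.den ∣ D)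
    (hmod : p % D = 1 % D) (hD : 0 < D)
    (ha : 0 < a) (hac : a ≤ c) (hc1 : c ≤ 1) (hb0 : 0 < b) (hb1 : b ≤ 1) (m : ℕ) :
    0 ≤ padicValRat p (((ascPochhammer ℚ m).eval a * (ascPochhammer ℚ m).eval b) /
      ((ascPochhammer ℚ m).eval c * (m.factorial : ℚ))) := by
  have hp2 : 2 ≤ p := hp.out.two_le
  have hDdvd : D ∣ p - 1 := (Nat.modEq_iff_dvd' (by omega)).mp
    (show Nat.ModEq D 1 p from (hmod : Nat.ModEq D p 1).symm)
  have hpD0 : padicValNat p D = 0 := by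
    apply padicValNat.eq_zero_of_not_dvd
    intro hdvd
    have : p ∣ p - 1 := hdvd.trans hDdvd
    have := Nat.le_of_dvd (by omega) this
    omega
  have hDQ : (D : ℚ) ≠ 0 := by positivity
  -- construct integer numerators r with (r : ℚ) = x * D
  have getr : ∀ x : ℚ, 0 < x → x ≤ 1 → x.den ∣ D →
      ∃ r : ℕ, 0 < r ∧ r ≤ D ∧ (r : ℚ) = x * D := by
    intro x hx hx1 hdvd
    have hxd : (x.den : ℚ) ≠ 0 := by exact_mod_cast x.den_pos.ne'
    have heq : ((x.num.toNat * (D / x.den) : ℕ) : ℚ) = x * D := by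
      have hnum : ((x.num.toNat : ℕ) : ℚ) = (x.num : ℚ) := by
        have := Int.toNat_of_nonneg (Rat.num_pos.2 hx).le
        exact_mod_cast congrArg (fun z : ℤ => (z : ℚ)) this
      rw [Nat.cast_mul, Nat.cast_div hdvd hxd, hnum]
      have key : (x.num : ℚ) = x * x.den := (Rat.mul_den_eq_num x).symm
      rw [mul_div_assoc', div_eq_iff hxd, key]
      ring
    refine ⟨x.num.toNat * (D / x.den), ?_, ?_, heq⟩
    · rcases Nat.eq_zero_or_pos (x.num.toNat * (D / x.den)) with h0 | h0
      · rw [h0] at heq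
        have hpos : (0 : ℚ) < x * D := by positivity
        simp only [Nat.cast_zero] at heq
        linarith
      · exact h0
    · have h1 : ((x.num.toNat * (D / x.den) : ℕ) : ℚ) ≤ (D : ℚ) := by
        rw [heq]
        calc x * D ≤ 1 * D := by
              apply mul_le_mul_of_nonneg_right hx1 (by positivity)
        _ = D := one_mul _
      exact_mod_cast h1
  obtain ⟨ra, hra0, hraD, hraq⟩ := getr a ha (le_trans hac hc1) hDa
  obtain ⟨rb, hrb0, hrbD, hrbq⟩ := getr b hb0 hb1 hDb
  obtain ⟨rc, hrc0, hrcD, hrcq⟩ := getr c (lt_of_lt_of_le ha hac) hc1 hDc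
  -- the valuation of the Pochhammer evaluation as a natural sum
  have poch_val : ∀ (x : ℚ) (r : ℕ), 0 < x → 0 < r → (r : ℚ) = x * D →
      padicValRat p ((ascPochhammer ℚ m).eval x)
        = ((∑ k ∈ range m, padicValNat p (r + D * k) : ℕ) : ℤ) := by
    intro x r hx hr hrx
    rw [val_poch p x hx m, Nat.cast_sum]
    apply Finset.sum_congr rfl
    intro k _
    have hnum : ((r + D * k : ℕ) : ℚ) ≠ 0 := by
      have : 0 < r + D * k := by omega
      exact_mod_cast this.ne'
    have hxk : x + (k : ℚ) = ((r + D * k : ℕ) : ℚ) / (D : ℚ) := by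
      push_cast
      rw [hrx]
      field_simp
    rw [hxk, padicValRat.div hnum hDQ, padicValRat.of_nat, padicValRat.of_nat, hpD0]
    simp
  -- positivity of all four factors
  have hPa : (ascPochhammer ℚ m).eval a ≠ 0 := ne_of_gt (ascPochhammer_pos m a ha)
  have hPb : (ascPochhammer ℚ m).eval b ≠ 0 := ne_of_gt (ascPochhammer_pos m b hb0)
  have hPc : (ascPochhammer ℚ m).eval c ≠ 0 :=
    ne_of_gt (ascPochhammer_pos m c (lt_of_lt_of_le ha hac))
  have hFc : ((m.factorial : ℚ)) ≠ 0 := by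
    exact_mod_cast m.factorial_pos.ne'
  have hfac : ((m.factorial : ℚ)) = (ascPochhammer ℚ m).eval (1 : ℚ) :=
    (ascPochhammer_eval_one ℚ m).symm
  rw [padicValRat.div (mul_ne_zero hPa hPb) (mul_ne_zero hPc hFc),
    padicValRat.mul hPa hPb, padicValRat.mul hPc hFc, hfac,
    poch_val a ra ha hra0 hraq, poch_val b rb hb0 hrb0 hrbq,
    poch_val c rc (lt_of_lt_of_le ha hac) hrc0 hrcq,
    poch_val 1 D one_pos hD (by rw [one_mul])]
  have h1 : ∑ k ∈ range m, padicValNat p (rc + D * k)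
      ≤ ∑ k ∈ range m, padicValNat p (ra + D * k) := by
    apply sum_val_mono p D ra rc m hra0 ?_ hrcD hmod
    have : (ra : ℚ) ≤ (rc : ℚ) := by
      rw [hraq, hrcq]
      exact mul_le_mul_of_nonneg_right hac (by positivity)
    exact_mod_cast this
  have h2 : ∑ k ∈ range m, padicValNat p (D + D * k)
      ≤ ∑ k ∈ range m, padicValNat p (rb + D * k) :=
    sum_val_mono p D rb D m hrb0 hrbD le_rfl hmod
  omega

/-- If there are infinitely many primes `p ≡ 1 (mod D)` at which `₂F₁(a,b;c;z)`
has `p`-adically unbounded coefficients, then `c < a` and `c < b`. -/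
theorem stmt_4 (a b c : ℚ) (hadm : Admissible a b c)
    (D : ℕ) (hD : D = Nat.lcm (Nat.lcm a.den b.den) c.den)
    (hinf : {p : ℕ | p.Prime ∧ p % D = 1 % D ∧ UnboundedAt p a b c}.Infinite) :
    c < a ∧ c < b := by
  obtain ⟨p, hps⟩ := hinf.nonempty
  obtain ⟨hp, hmod, hub⟩ := hps
  haveI : Fact p.Prime := ⟨hp⟩
  obtain ⟨ha0, ha1, hb0, hb1, hc0, hc1, hac, hbc⟩ := hadm
  have hDa : a.den ∣ D := hD ▸ (Nat.dvd_lcm_left _ _).trans (Nat.dvd_lcm_left _ _)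
  have hDb : b.den ∣ D := hD ▸ (Nat.dvd_lcm_right _ _).trans (Nat.dvd_lcm_left _ _)
  have hDc : c.den ∣ D := hD ▸ Nat.dvd_lcm_right _ _
  have hDpos : 0 < D := by
    rw [hD]
    exact Nat.pos_of_ne_zero (Nat.lcm_ne_zero
      (Nat.lcm_ne_zero a.den_pos.ne' b.den_pos.ne') c.den_pos.ne')
  constructor
  · by_contra h
    push_neg at h
    obtain ⟨m, hm⟩ := hub 0
    have h0 := hyp_val_nonneg p D a b c hDa hDb hDc hmod hDpos ha0 h hc1.le hb0 hb1.le m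
    unfold hypCoeff at hm
    simp only [Nat.cast_zero, neg_zero] at hm
    exact absurd hm (not_lt.2 h0)
  · by_contra h
    push_neg at h
    obtain ⟨m, hm⟩ := hub 0
    have h0 := hyp_val_nonneg p D b a c hDb hDa hDc hmod hDpos hb0 h hc1.le ha0 ha1.le m
    have hsym : hypCoeff a b c m
        = ((ascPochhammer ℚ m).eval b * (ascPochhammer ℚ m).eval a) /
          ((ascPochhammer ℚ m).eval c * (m.factorial : ℚ)) := by
      unfold hypCoeff
      rw [mul_comm ((ascPochhammer ℚ m).eval a)]
    rw [hsym] at hm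
    simp only [Nat.cast_zero, neg_zero] at hm
    exact absurd hm (not_lt.2 h0)
end

section
/- Let n ≥ 1, let α_1,…,α_n and β_1,…,β_{n−1} be rational numbers none of which is an integer ≤ 0, and let p be a prime such that v_p(α_j−1) ≥ 0 for all j and v_p(β_k−1) ≥ 0 for all k. Then for every m ≥ 0 the m-th coefficient A_m = (∏_{j=1}^n (α_j)_m) / ((∏_{k=1}^{n−1} (β_k)_m) · m!) of the generalized hypergeometric series ₙF_{n−1}(α_1,…,α_n; β_1,…,β_{n−1}; z) satisfies v_p(A_m) = Σ_{j=1}^n c_p(α_j−1, m) − Σ_{k=1}^{n−1} c_p(β_k−1, m). -/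
open scoped BigOperators

/-- The `m`-th coefficient of the generalized hypergeometric series
`ₙF_{n−1}(α_1,…,α_n; β_1,…,β_{n−1}; z)`. -/
noncomputable def genHypCoeff (n : ℕ) (α : Fin n → ℚ) (β : Fin (n - 1) → ℚ)
    (m : ℕ) : ℚ :=
  (∏ j, (ascPochhammer ℚ m).eval (α j)) /
    ((∏ k, (ascPochhammer ℚ m).eval (β k)) * (m.factorial : ℚ))

/-- The number of carries in the base-`p` addition of `x` and `m`, where
`τ` is the family of truncations of `x`: the number of `j ≥ 1` with
`τ_j(x) + (m mod p^j) ≥ p^j`. -/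
noncomputable def carries (p : ℕ) (τ : ℕ → ℤ) (m : ℕ) : ℕ :=
  {j : ℕ | 1 ≤ j ∧ (p : ℤ) ^ j ≤ τ j + ((m % p ^ j : ℕ) : ℤ)}.ncard

section Aux
variable {p : ℕ} [hp : Fact p.Prime]

lemma trunc_dvd_iff {x : ℚ} {τ : ℕ → ℤ} (ht : IsTrunc p x τ) (j : ℕ) (t : ℤ)
    (hxt : x + (t : ℚ) ≠ 0) :
    (j : ℤ) ≤ padicValRat p (x + (t : ℚ)) ↔ (p : ℤ) ^ j ∣ τ j + t := by
  obtain ⟨h0, h1, h2⟩ := ht j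
  rcases h2 with heq | hv
  · have hver : (x + (t:ℚ)) = (((τ j + t : ℤ)) : ℚ) := by rw [heq]; push_cast; ring
    have hz : τ j + t ≠ 0 := by
      intro h; apply hxt; rw [hver]; exact_mod_cast h
    rw [hver, padicValRat.of_int]
    rw [padicValInt_dvd_iff]
    constructor
    · intro h; right; exact_mod_cast h
    · rintro (h | h)
      · exact absurd h hz
      · exact_mod_cast h
  · constructor
    · intro h
      rw [padicValInt_dvd_iff]
      by_cases hz : τ j + t = 0
      · left; exact hz
      right
      rw [← Nat.cast_le (α := ℤ), ← padicValRat.of_int (p := p)]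
      have hsum : (x + t) + ((τ j : ℚ) - x) = ((τ j + t : ℤ) : ℚ) := by push_cast; ring
      have hne : (x + t) + ((τ j : ℚ) - x) ≠ 0 := by
        rw [hsum]; exact_mod_cast hz
      have := padicValRat.min_le_padicValRat_add (p := p) hne
      rw [hsum] at this
      refine le_trans (le_min h ?_) this
      have : (τ j : ℚ) - x = -(x - τ j) := by ring
      rw [this, padicValRat.neg]; exact hv
    · intro h
      by_cases hz : τ j + t = 0
      · have hxx : x + (t:ℚ) = x - (τ j : ℚ) := by
          have : (t : ℚ) = -(τ j : ℚ) := by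
            have : (t : ℤ) = -(τ j) := by omega
            exact_mod_cast congrArg (fun z : ℤ => (z : ℚ)) this
          rw [this]; ring
        rw [hxx]; exact hv
      have hvz : (j : ℤ) ≤ padicValRat p (((τ j + t : ℤ)) : ℚ) := by
        rw [padicValRat.of_int]
        rcases (padicValInt_dvd_iff j (τ j + t)).mp h with h' | h'
        · exact absurd h' hz
        · exact_mod_cast h'
      have hsum : (((τ j + t : ℤ)) : ℚ) + (x - (τ j : ℚ)) = x + t := by push_cast; ring
      have hne : (((τ j + t : ℤ)) : ℚ) + (x - (τ j : ℚ)) ≠ 0 := by rw [hsum]; exact hxt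
      have := padicValRat.min_le_padicValRat_add (p := p) hne
      rw [hsum] at this
      exact le_trans (le_min hvz hv) this

omit hp in
lemma carries_zero {τ : ℕ → ℤ} (ht : ∀ j : ℕ, τ j < (p : ℤ) ^ j) : carries p τ 0 = 0 := by
  unfold carries
  convert Set.ncard_empty ℕ using 2
  ext j
  simp only [Set.mem_setOf_eq, Set.mem_empty_iff_false, iff_false, not_and]
  intro _
  have := ht j
  simp only [Nat.zero_mod, Nat.cast_zero, add_zero]
  omega
end Aux

section Step
variable {p : ℕ} [hp : Fact p.Prime]

lemma digit_core (P a R R' M A : ℤ) (h0 : 0 ≤ a) (h1 : a < P) (hR0 : 0 ≤ R)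
    (hR' : (R' = 0 ∧ R + 1 = P) ∨ (R + 1 < P ∧ R' = R + 1))
    (hb : P ∣ M ↔ R + 1 = P)
    (ha : P ∣ A ↔ a + R + 1 = P) :
    ((if P ≤ a + R' then 1 else 0) + (if P ∣ M then 1 else 0) : ℕ)
      = (if P ≤ a + R then 1 else 0) + (if P ∣ A then 1 else 0) := by
  classical
  simp only [hb, ha]
  rcases hR' with ⟨h1, h2⟩ | ⟨h1, h2⟩ <;> subst h2 <;> split_ifs <;> omega

lemma carries_step {x : ℚ} {τ : ℕ → ℤ} (ht : IsTrunc p x τ)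
    (hx : ∀ k : ℕ, 1 ≤ k → x + ((k : ℤ) : ℚ) ≠ 0) (m : ℕ) :
    (carries p τ (m + 1) : ℤ) + padicValRat p ((((m + 1 : ℕ) : ℤ)) : ℚ)
      = (carries p τ m : ℤ) + padicValRat p (x + ((((m + 1 : ℕ) : ℤ)) : ℚ)) := by
  classical
  set V : ℤ := padicValRat p (x + ((((m + 1 : ℕ) : ℤ)) : ℚ)) with hV
  have hV0 : 0 ≤ V := by
    have h := (trunc_dvd_iff ht 0 ((m+1:ℕ):ℤ) (hx (m+1) (by omega))).mpr (by simp)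
    rw [hV]; exact_mod_cast h
  set L : ℕ := 1 + padicValNat p (m+1)
      + ∑ i ∈ Finset.Icc 1 (m+1), (padicValRat p (x + ((i:ℤ):ℚ))).toNat with hL
  have hbound : ∀ j k : ℕ, 1 ≤ k → k ≤ m + 1 → ((p:ℤ)^j ∣ τ j + (k:ℤ)) → j < L := by
    intro j k hk1 hk2 hdvd
    have h1 : (j : ℤ) ≤ padicValRat p (x + ((k:ℤ):ℚ)) :=
      (trunc_dvd_iff ht j (k:ℤ) (hx k hk1)).mpr hdvd
    have h2 : j ≤ (padicValRat p (x + ((k:ℤ):ℚ))).toNat := by omega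
    have h3 : (padicValRat p (x + ((k:ℤ):ℚ))).toNat
        ≤ ∑ i ∈ Finset.Icc 1 (m+1), (padicValRat p (x + ((i:ℤ):ℚ))).toNat :=
      Finset.single_le_sum (f := fun i : ℕ => (padicValRat p (x + ((i:ℤ):ℚ))).toNat)
        (fun i _ => Nat.zero_le _) (Finset.mem_Icc.mpr ⟨hk1, hk2⟩)
    omega
  have hcar : ∀ m' : ℕ, m' ≤ m + 1 → carries p τ m' =
      ((Finset.range L).filter
        (fun j => 1 ≤ j ∧ (p:ℤ)^j ≤ τ j + ((m' % p ^ j : ℕ) : ℤ))).card := by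
    intro m' hm'
    rw [carries, ← Set.ncard_coe_finset]
    congr 1
    ext j
    simp only [Finset.coe_filter, Set.mem_setOf_eq, Finset.mem_range]
    constructor
    · rintro ⟨hj1, hj2⟩
      refine ⟨?_, hj1, hj2⟩
      have h0 := (ht j).1
      have h1 := (ht j).2.1
      set k : ℤ := (p:ℤ)^j - τ j with hk
      have hkle : k ≤ ((m' % p ^ j : ℕ) : ℤ) := by omega
      have hmle : ((m' % p ^ j : ℕ) : ℤ) ≤ (m' : ℤ) := by
        exact_mod_cast Nat.mod_le m' (p^j)
      refine hbound j k.toNat (by omega) (by omega) ?_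
      have h2 : τ j + ((k.toNat : ℕ) : ℤ) = (p:ℤ)^j := by omega
      rw [h2]
    · rintro ⟨_, hj1, hj2⟩; exact ⟨hj1, hj2⟩
  set fa := (Finset.range L).filter
      (fun j => 1 ≤ j ∧ (p:ℤ)^j ∣ τ j + ((m+1:ℕ):ℤ)) with hfa
  set fb := (Finset.range L).filter
      (fun j => 1 ≤ j ∧ (p:ℤ)^j ∣ ((m+1:ℕ):ℤ)) with hfb
  have hfacard : fa = Finset.Icc 1 V.toNat := by
    ext j
    simp only [hfa, Finset.mem_filter, Finset.mem_range, Finset.mem_Icc]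
    constructor
    · rintro ⟨_, hj1, hdvd⟩
      refine ⟨hj1, ?_⟩
      have h1 := (trunc_dvd_iff ht j ((m+1:ℕ):ℤ) (hx (m+1) (by omega))).mpr hdvd
      rw [← hV] at h1
      omega
    · rintro ⟨hj1, hj2⟩
      have hjV : (j : ℤ) ≤ V := by omega
      rw [hV] at hjV
      have hdvd : (p:ℤ)^j ∣ τ j + ((m+1:ℕ):ℤ) :=
        (trunc_dvd_iff ht j ((m+1:ℕ):ℤ) (hx (m+1) (by omega))).mp hjV
      exact ⟨hbound j (m+1) (by omega) le_rfl hdvd, hj1, hdvd⟩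
  have hfacard' : (fa.card : ℤ) = V := by
    rw [hfacard, Nat.card_Icc]; omega
  have hfbcard : fb.card = padicValNat p (m+1) := by
    have : fb = Finset.Icc 1 (padicValNat p (m+1)) := by
      ext j
      simp only [hfb, Finset.mem_filter, Finset.mem_range, Finset.mem_Icc]
      have hdv : ((p:ℤ)^j ∣ ((m+1:ℕ):ℤ)) ↔ p^j ∣ (m+1) := by
        constructor
        · intro h; exact_mod_cast h
        · intro h; exact_mod_cast h
      rw [hdv, padicValNat_dvd_iff_le (by omega : m + 1 ≠ 0)]
      omega
    rw [this, Nat.card_Icc]; omega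
  have key : (((Finset.range L).filter
        (fun j => 1 ≤ j ∧ (p:ℤ)^j ≤ τ j + (((m+1) % p ^ j : ℕ) : ℤ))).card + fb.card)
      = (((Finset.range L).filter
        (fun j => 1 ≤ j ∧ (p:ℤ)^j ≤ τ j + ((m % p ^ j : ℕ) : ℤ))).card + fa.card) := by
    rw [hfa, hfb, Finset.card_filter, Finset.card_filter, Finset.card_filter,
      Finset.card_filter, ← Finset.sum_add_distrib, ← Finset.sum_add_distrib]
    refine Finset.sum_congr rfl ?_
    intro j _
    by_cases hj : 1 ≤ j
    swap
    · simp [hj]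
    simp only [hj, true_and]
    have h0 := (ht j).1
    have h1 := (ht j).2.1
    have hP : 2 ≤ (p:ℤ)^j := by
      have h2p : 2 ≤ p := hp.out.two_le
      have : p ≤ p^j := Nat.le_self_pow (by omega) p
      have : 2 ≤ p^j := by omega
      exact_mod_cast this
    have hRlt : ((m % p ^ j : ℕ) : ℤ) < (p:ℤ)^j := by
      have : m % p^j < p^j := Nat.mod_lt _ (pow_pos hp.out.pos j)
      exact_mod_cast this
    have hR0 : (0:ℤ) ≤ ((m % p ^ j : ℕ) : ℤ) := by positivity
    have hq : (m : ℤ) = (p:ℤ)^j * ((m / p^j : ℕ) : ℤ) + ((m % p^j : ℕ) : ℤ) := by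
      exact_mod_cast (Nat.div_add_mod m (p^j)).symm
    have hb : ((p:ℤ)^j ∣ ((m+1:ℕ):ℤ)) ↔ ((m % p^j : ℕ):ℤ) + 1 = (p:ℤ)^j := by
      have h2 : ((m+1:ℕ):ℤ) = (p:ℤ)^j * ((m / p^j : ℕ):ℤ)
          + (((m % p^j :ℕ):ℤ) + 1) := by push_cast; push_cast at hq; omega
      rw [h2, dvd_add_right (Dvd.intro _ rfl)]
      constructor
      · intro hd
        have hle := Int.le_of_dvd (by omega) hd
        omega
      · intro h; rw [h]
    have ha : ((p:ℤ)^j ∣ τ j + ((m+1:ℕ):ℤ)) ↔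
        τ j + ((m % p^j : ℕ):ℤ) + 1 = (p:ℤ)^j := by
      have h2 : τ j + ((m+1:ℕ):ℤ) = (p:ℤ)^j * ((m / p^j : ℕ):ℤ)
          + (τ j + ((m % p^j :ℕ):ℤ) + 1) := by push_cast; push_cast at hq; omega
      rw [h2, dvd_add_right (Dvd.intro _ rfl)]
      constructor
      · intro hd
        have hle := Int.le_of_dvd (by omega) hd
        have hd2 : (p:ℤ)^j ∣ (τ j + ((m % p^j :ℕ):ℤ) + 1) - (p:ℤ)^j :=
          dvd_sub hd dvd_rfl
        rcases eq_or_lt_of_le (show (0:ℤ) ≤ (τ j + ((m % p^j :ℕ):ℤ) + 1) - (p:ℤ)^j by omega)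
          with h | h
        · omega
        · have := Int.le_of_dvd h hd2; omega
      · intro h; rw [h]
    have hR' : ((((m+1) % p^j : ℕ):ℤ) = 0 ∧ ((m % p^j : ℕ):ℤ) + 1 = (p:ℤ)^j)
        ∨ (((m % p^j : ℕ):ℤ) + 1 < (p:ℤ)^j ∧ (((m+1) % p^j : ℕ):ℤ) = ((m % p^j : ℕ):ℤ) + 1) := by
      have hn2 : 2 ≤ p^j := by exact_mod_cast hP
      have hmod : (m+1) % p^j = (m % p^j + 1) % p^j := by
        conv_lhs => rw [Nat.add_mod]
        rw [Nat.mod_eq_of_lt (show 1 < p^j by omega)]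
      by_cases hc : m % p^j + 1 = p^j
      · left
        constructor
        · rw [hmod, hc, Nat.mod_self]; simp
        · exact_mod_cast hc
      · right
        have hlt : m % p^j + 1 < p^j := by
          have : m % p^j < p^j := Nat.mod_lt _ (by omega)
          omega
        constructor
        · exact_mod_cast hlt
        · rw [hmod, Nat.mod_eq_of_lt hlt]; push_cast; ring
    exact digit_core ((p:ℤ)^j) (τ j) ((m % p^j : ℕ):ℤ) (((m+1) % p^j : ℕ):ℤ)
      ((m+1:ℕ):ℤ) (τ j + ((m+1:ℕ):ℤ)) h0 h1 hR0 hR' hb ha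
  have hval : padicValRat p ((((m + 1 : ℕ) : ℤ)) : ℚ) = (padicValNat p (m+1) : ℤ) := by
    have hcast : ((((m + 1 : ℕ) : ℤ)) : ℚ) = (((m+1:ℕ)) : ℚ) := by push_cast; ring
    rw [hcast, padicValRat.of_nat]
  rw [hcar (m+1) le_rfl, hcar m (by omega), hval, ← hfacard', ← hfbcard]
  exact_mod_cast key
end Step

section Main
variable {p : ℕ} [hp : Fact p.Prime]

lemma poch_ne_zero {y : ℚ} (hy : ∀ i : ℕ, y + (i : ℚ) ≠ 0) (m : ℕ) :
    (ascPochhammer ℚ m).eval y ≠ 0 := by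
  induction m with
  | zero => simp
  | succ m ih =>
    rw [ascPochhammer_succ_eval]
    exact mul_ne_zero ih (hy m)

lemma main_val {x : ℚ} {τ : ℕ → ℤ} (ht : IsTrunc p x τ)
    (hx : ∀ k : ℕ, 1 ≤ k → x + ((k : ℤ) : ℚ) ≠ 0) (m : ℕ) :
    padicValRat p ((ascPochhammer ℚ m).eval (x + 1))
      = (carries p τ m : ℤ) + padicValRat p (m.factorial : ℚ) := by
  have hy : ∀ i : ℕ, (x + 1) + (i : ℚ) ≠ 0 := by
    intro i
    have := hx (i + 1) (by omega)
    intro h; apply this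
    push_cast; push_cast at h; linarith
  induction m with
  | zero =>
    simp [carries_zero (fun j => (ht j).2.1)]
  | succ m ih =>
    rw [ascPochhammer_succ_eval]
    have hx1 : (x + 1) + (m : ℚ) ≠ 0 := hy m
    rw [padicValRat.mul (poch_ne_zero hy m) hx1, ih]
    have hfac : ((m+1).factorial : ℚ) = ((((m+1:ℕ):ℤ)) : ℚ) * (m.factorial : ℚ) := by
      push_cast [Nat.factorial_succ]; ring
    rw [hfac, padicValRat.mul (by positivity) (by positivity)]
    have hstep := carries_step ht hx m
    have hcast : (x + 1) + (m : ℚ) = x + ((((m+1:ℕ):ℤ)) : ℚ) := by push_cast; ring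
    rw [hcast]
    omega

lemma padicValRat_prod {ι : Type*} (s : Finset ι) (f : ι → ℚ) (hf : ∀ i ∈ s, f i ≠ 0) :
    padicValRat p (∏ i ∈ s, f i) = ∑ i ∈ s, padicValRat p (f i) := by
  classical
  induction s using Finset.cons_induction with
  | empty => simp
  | cons a s ha ih =>
    rw [Finset.prod_cons, Finset.sum_cons,
      padicValRat.mul (hf a (Finset.mem_cons_self a s))
        (Finset.prod_ne_zero_iff.mpr (fun i hi => hf i (Finset.mem_cons_of_mem hi))),
      ih (fun i hi => hf i (Finset.mem_cons_of_mem hi))]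
end Main


/-- Valuation formula: `v_p(A_m) = Σ_j c_p(α_j−1, m) − Σ_k c_p(β_k−1, m)` for the
coefficients of `ₙF_{n−1}`, when `v_p(α_j−1) ≥ 0` and `v_p(β_k−1) ≥ 0`. -/
theorem stmt_6 (n : ℕ) (hn : 1 ≤ n) (α : Fin n → ℚ) (β : Fin (n - 1) → ℚ)
    (hα : ∀ j, ∀ z : ℤ, z ≤ 0 → α j ≠ (z : ℚ))
    (hβ : ∀ k, ∀ z : ℤ, z ≤ 0 → β k ≠ (z : ℚ))
    (p : ℕ) (hp : p.Prime)
    (hvα : ∀ j, α j - 1 = 0 ∨ 0 ≤ padicValRat p (α j - 1))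
    (hvβ : ∀ k, β k - 1 = 0 ∨ 0 ≤ padicValRat p (β k - 1))
    (τα : Fin n → ℕ → ℤ) (τβ : Fin (n - 1) → ℕ → ℤ)
    (hτα : ∀ j, IsTrunc p (α j - 1) (τα j))
    (hτβ : ∀ k, IsTrunc p (β k - 1) (τβ k)) :
    ∀ m : ℕ, padicValRat p (genHypCoeff n α β m) =
      (∑ j, (carries p (τα j) m : ℤ)) - ∑ k, (carries p (τβ k) m : ℤ) := by
  have : Fact p.Prime := ⟨hp⟩
  intro m
  have hxα : ∀ j, ∀ k : ℕ, 1 ≤ k → (α j - 1) + ((k:ℤ):ℚ) ≠ 0 := by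
    intro j k hk h
    apply hα j (1 - (k:ℤ)) (by omega)
    push_cast at h ⊢
    linarith
  have hxβ : ∀ j, ∀ k : ℕ, 1 ≤ k → (β j - 1) + ((k:ℤ):ℚ) ≠ 0 := by
    intro j k hk h
    apply hβ j (1 - (k:ℤ)) (by omega)
    push_cast at h ⊢
    linarith
  have hyα : ∀ j, ∀ i : ℕ, α j + (i : ℚ) ≠ 0 := by
    intro j i h
    apply hα j (-(i:ℤ)) (by omega)
    push_cast at h ⊢
    linarith
  have hyβ : ∀ k, ∀ i : ℕ, β k + (i : ℚ) ≠ 0 := by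
    intro k i h
    apply hβ k (-(i:ℤ)) (by omega)
    push_cast at h ⊢
    linarith
  have hαval : ∀ j, padicValRat p ((ascPochhammer ℚ m).eval (α j)) =
      (carries p (τα j) m : ℤ) + padicValRat p (m.factorial : ℚ) := by
    intro j
    have h := main_val (hτα j) (hxα j) m
    have e : α j - 1 + 1 = α j := by ring
    rwa [e] at h
  have hβval : ∀ k, padicValRat p ((ascPochhammer ℚ m).eval (β k)) =
      (carries p (τβ k) m : ℤ) + padicValRat p (m.factorial : ℚ) := by
    intro k
    have h := main_val (hτβ k) (hxβ k) m
    have e : β k - 1 + 1 = β k := by ring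
    rwa [e] at h
  have hnum : (∏ j, (ascPochhammer ℚ m).eval (α j)) ≠ 0 :=
    Finset.prod_ne_zero_iff.mpr (fun j _ => poch_ne_zero (hyα j) m)
  have hden1 : (∏ k, (ascPochhammer ℚ m).eval (β k)) ≠ 0 :=
    Finset.prod_ne_zero_iff.mpr (fun k _ => poch_ne_zero (hyβ k) m)
  have hden2 : (m.factorial : ℚ) ≠ 0 := by positivity
  rw [genHypCoeff, padicValRat.div hnum (mul_ne_zero hden1 hden2),
    padicValRat.mul hden1 hden2,
    padicValRat_prod _ _ (fun j _ => poch_ne_zero (hyα j) m),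
    padicValRat_prod _ _ (fun k _ => poch_ne_zero (hyβ k) m),
    Finset.sum_congr rfl (fun j _ => hαval j),
    Finset.sum_congr rfl (fun k _ => hβval k),
    Finset.sum_add_distrib, Finset.sum_add_distrib,
    Finset.sum_const, Finset.sum_const, Finset.card_univ, Finset.card_univ,
    Fintype.card_fin, Fintype.card_fin, nsmul_eq_mul, nsmul_eq_mul]
  have hcast : ((n - 1 : ℕ) : ℤ) = (n : ℤ) - 1 := by omega
  rw [hcast]
  ring
end

section
/- Let n ≥ 1 and let α_1,…,α_n, β_1,…,β_{n−1} be admissible rational hypergeometric parameters, i.e. 0 < α_j, β_k < 1 for all j, k and α_j ≠ β_k for all j, k. Let p be a good prime, i.e. v_p(α_j−1) = v_p(β_k−1) = 0 for all j, k, and let M be the least common multiple of the multiplicative orders of p modulo the reduced denominators of the α_j−1 and β_k−1. Then the coefficients A_m = (∏_j (α_j)_m) / ((∏_k (β_k)_m) · m!) of ₙF_{n−1} satisfy v_p(A_{m·p^M}) = v_p(A_m) for all m ≥ 0. -/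
open scoped BigOperators

section StmtSevenAux

variable {p : ℕ}

private lemma myPadicValNat_prod (hp : p.Prime) {ι : Type*} (s : Finset ι) (f : ι → ℕ)
    (hf : ∀ i ∈ s, f i ≠ 0) :
    padicValNat p (∏ i ∈ s, f i) = ∑ i ∈ s, padicValNat p (f i) := by
  haveI : Fact p.Prime := ⟨hp⟩
  classical
  induction s using Finset.induction_on with
  | empty => simp
  | insert _ _ hx ih =>
    rename_i x s'
    rw [Finset.prod_insert hx, Finset.sum_insert hx,
      padicValNat.mul (hf _ (Finset.mem_insert_self _ _))
        (Finset.prod_ne_zero_iff.mpr fun i hi => hf i (Finset.mem_insert_of_mem hi)),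
      ih fun i hi => hf i (Finset.mem_insert_of_mem hi)]

private lemma myPadicValRat_prod (hp : p.Prime) {ι : Type*} (s : Finset ι) (f : ι → ℚ)
    (hf : ∀ i ∈ s, f i ≠ 0) :
    padicValRat p (∏ i ∈ s, f i) = ∑ i ∈ s, padicValRat p (f i) := by
  haveI : Fact p.Prime := ⟨hp⟩
  classical
  induction s using Finset.induction_on with
  | empty => simp
  | insert _ _ hx ih =>
    rename_i x s'
    rw [Finset.prod_insert hx, Finset.sum_insert hx,
      padicValRat.mul (hf _ (Finset.mem_insert_self _ _))
        (Finset.prod_ne_zero_iff.mpr fun i hi => hf i (Finset.mem_insert_of_mem hi)),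
      ih fun i hi => hf i (Finset.mem_insert_of_mem hi)]

private lemma mySum_padicValNat_range (hp : p.Prime) (n : ℕ) :
    ∑ i ∈ Finset.range (n + 1), padicValNat p i = padicValNat p n.factorial := by
  haveI : Fact p.Prime := ⟨hp⟩
  induction n with
  | zero => simp
  | succ n ih =>
    rw [Finset.sum_range_succ, ih, Nat.factorial_succ,
      padicValNat.mul (Nat.succ_ne_zero n) (Nat.factorial_ne_zero n)]
    simp only [Nat.succ_eq_add_one]; omega

private lemma myVal_fact_add (hp : p.Prime) {M t : ℕ} (ht : t ≤ p ^ M - 1) :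
    padicValNat p t.factorial + padicValNat p (p ^ M - 1 - t).factorial =
      padicValNat p (p ^ M - 1).factorial := by
  haveI : Fact p.Prime := ⟨hp⟩
  have hq1 : 1 ≤ p ^ M := Nat.one_le_pow _ _ hp.pos
  have hlog : Nat.log p (p ^ M - 1) < M + 1 :=
    lt_of_le_of_lt (Nat.log_mono_right (Nat.sub_le _ _))
      (by rw [Nat.log_pow hp.one_lt]; omega)
  have hemult := hp.emultiplicity_choose (n := p ^ M - 1) (k := t) (b := M + 1) ht hlog
  have hempty :
      {i ∈ Finset.Ico 1 (M + 1) | p ^ i ≤ t % p ^ i + (p ^ M - 1 - t) % p ^ i} = ∅ := by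
    rw [Finset.filter_eq_empty_iff]
    intro i hi
    obtain ⟨hi1, hi2⟩ := Finset.mem_Ico.mp hi
    intro hcon
    set X := p ^ i with hX
    have hX1 : 1 < X := Nat.one_lt_pow (by omega) hp.one_lt
    obtain ⟨Y, hY⟩ : X ∣ p ^ M := pow_dvd_pow p (by omega)
    have hY1 : 1 ≤ Y := by
      rcases Nat.eq_zero_or_pos Y with h | h
      · rw [h, Nat.mul_zero] at hY; omega
      · exact h
    have hXexp : p ^ M - 1 = (X - 1) + X * (Y - 1) := by
      have h2 : X * Y = X * (Y - 1) + X := by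
        rcases Nat.exists_eq_add_of_le hY1 with ⟨y, hy⟩
        subst hy
        simp [Nat.mul_add, Nat.add_comm]
      omega
    have hmod : (p ^ M - 1) % X = X - 1 := by
      rw [hXexp, Nat.add_mul_mod_self_left, Nat.mod_eq_of_lt (by omega)]
    have hA : t % X < X := Nat.mod_lt _ (by omega)
    have hB : (p ^ M - 1 - t) % X < X := Nat.mod_lt _ (by omega)
    have hsummod : (t % X + (p ^ M - 1 - t) % X) % X = X - 1 := by
      rw [← Nat.add_mod, show t + (p ^ M - 1 - t) = p ^ M - 1 by omega, hmod]
    have h2 : (t % X + (p ^ M - 1 - t) % X) % X = t % X + (p ^ M - 1 - t) % X - X := by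
      rw [Nat.mod_eq_sub_mod hcon, Nat.mod_eq_of_lt (by omega)]
    omega
  rw [hempty] at hemult
  have hnd : ¬ p ∣ (p ^ M - 1).choose t := by
    rw [← emultiplicity_eq_zero]
    simpa using hemult
  have hval0 : padicValNat p ((p ^ M - 1).choose t) = 0 :=
    padicValNat.eq_zero_iff.mpr (Or.inr (Or.inr hnd))
  have hchoose := Nat.choose_mul_factorial_mul_factorial ht
  rw [← hchoose, padicValNat.mul (Nat.mul_ne_zero (Nat.choose_pos ht).ne' t.factorial_ne_zero)
      (p ^ M - 1 - t).factorial_ne_zero,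
    padicValNat.mul (Nat.choose_pos ht).ne' t.factorial_ne_zero, hval0, zero_add]

private lemma myVal_block (hp : p.Prime) {a d M : ℕ} (m : ℕ) (ha : 1 ≤ a) (had : a ≤ d)
    (hpd : ¬ p ∣ d) (hdM : d ∣ p ^ M - 1) :
    padicValNat p (∏ i ∈ Finset.range (p ^ M), (a + (m * p ^ M + i) * d)) =
      M + padicValNat p (a + m * d) + padicValNat p (p ^ M - 1).factorial := by
  haveI : Fact p.Prime := ⟨hp⟩
  set q := p ^ M with hqdef
  have hq1 : 1 ≤ q := Nat.one_le_pow _ _ hp.pos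
  have hd1 : 1 ≤ d := le_trans ha had
  obtain ⟨e, he⟩ := hdM
  set t := a * e with htdef
  have hdt : t * d = a * (q - 1) := by rw [htdef, he]; ring
  have htq1 : t ≤ q - 1 := by
    have h1 : t * d ≤ (q - 1) * d := by
      rw [hdt, mul_comm (q-1) d]; exact Nat.mul_le_mul_right _ had
    exact Nat.le_of_mul_le_mul_right h1 (by omega)
  have htq : t < q := by omega
  set F : ℕ → ℕ := fun i => a + (m * q + i) * d with hF
  have hF0 : ∀ i, F i ≠ 0 := fun i => by
    have := Nat.le_add_right a ((m * q + i) * d); simp only [hF]; omega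
  have hkey : F t = q * (a + m * d) := by
    have h2 : a * (q - 1) + a = a * q := by
      calc a * (q - 1) + a = a * ((q - 1) + 1) := by ring
      _ = a * q := by rw [Nat.sub_add_cancel hq1]
    calc F t = (a * (q - 1) + a) + m * q * d := by simp only [hF]; rw [Nat.add_mul, hdt]; ring
    _ = a * q + m * q * d := by rw [h2]
    _ = q * (a + m * d) := by ring
  have hqFt : p ^ M ∣ F t := by rw [hkey, hqdef]; exact Dvd.intro _ rfl
  have herase : ∀ i ∈ (Finset.range q).erase t,
      padicValNat p (F i) = padicValNat p ((t - i) + (i - t)) := by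
    intro i hi
    obtain ⟨hit, hiq⟩ := Finset.mem_erase.mp hi
    have hiq' : i < q := Finset.mem_range.mp hiq
    set k := (t - i) + (i - t) with hk
    have hk0 : k ≠ 0 := by omega
    have hkq : k < q := by omega
    set j := padicValNat p k with hj
    have hpj : p ^ j ∣ k := pow_padicValNat_dvd
    have hjM : j < M := by
      have h1 : p ^ j ≤ k := Nat.le_of_dvd (Nat.pos_of_ne_zero hk0) hpj
      have h2 : p ^ j < p ^ M := by omega
      exact (Nat.pow_lt_pow_iff_right hp.one_lt).mp h2
    have hrel : F i + k * d = F t ∨ F t + k * d = F i := by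
      rcases Nat.lt_or_ge i t with h | h
      · left
        have : i + k = t := by omega
        calc F i + k * d = a + (m * q + (i + k)) * d := by simp only [hF]; ring
        _ = F t := by rw [this]
      · right
        have : t + k = i := by omega
        calc F t + k * d = a + (m * q + (t + k)) * d := by simp only [hF]; ring
        _ = F i := by rw [this]
    have hdvd1 : p ^ j ∣ F i := by
      have hjd : p ^ j ∣ k * d := hpj.mul_right d
      have hjFt : p ^ j ∣ F t := dvd_trans (pow_dvd_pow p hjM.le) hqFt
      rcases hrel with h | h
      · have h2 := Nat.dvd_sub hjFt hjd
        rwa [show F t - k * d = F i by omega] at h2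
      · rw [← h]; exact dvd_add hjFt hjd
    have hndvd : ¬ p ^ (j + 1) ∣ F i := by
      intro hcon
      have hjFt : p ^ (j + 1) ∣ F t := dvd_trans (pow_dvd_pow p hjM) hqFt
      have hkd : p ^ (j + 1) ∣ k * d := by
        rcases hrel with h | h
        · have h2 := Nat.dvd_sub hjFt hcon
          rwa [show F t - F i = k * d by omega] at h2
        · have h2 := Nat.dvd_sub hcon hjFt
          rwa [show F i - F t = k * d by omega] at h2
      have hcop : Nat.Coprime (p ^ (j + 1)) d :=
        Nat.Coprime.pow_left _ (hp.coprime_iff_not_dvd.mpr hpd)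
      exact pow_succ_padicValNat_not_dvd hk0 (hcop.dvd_of_dvd_mul_right hkd)
    have hle1 : j ≤ padicValNat p (F i) := (padicValNat_dvd_iff_le (hF0 i)).mp hdvd1
    have hle2 : padicValNat p (F i) ≤ j := by
      by_contra hcc
      exact hndvd ((padicValNat_dvd_iff_le (hF0 i)).mpr (by omega))
    omega
  rw [← Finset.mul_prod_erase _ F (Finset.mem_range.mpr htq),
    padicValNat.mul (hF0 t)
      (Finset.prod_ne_zero_iff.mpr fun i _ => hF0 i),
    hkey, padicValNat.mul (by omega) (by omega), padicValNat.prime_pow,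
    myPadicValNat_prod hp _ _ fun i _ => hF0 i,
    Finset.sum_congr rfl herase]
  have hsum0 : ∑ i ∈ (Finset.range q).erase t, padicValNat p ((t - i) + (i - t))
      = ∑ i ∈ Finset.range q, padicValNat p ((t - i) + (i - t)) :=
    Finset.sum_erase _ (by simp)
  rw [hsum0]
  have hsplit : ∑ i ∈ Finset.range q, padicValNat p ((t - i) + (i - t))
      = (∑ i ∈ Finset.range (t + 1), padicValNat p ((t - i) + (i - t)))
        + ∑ i ∈ Finset.Ico (t + 1) q, padicValNat p ((t - i) + (i - t)) := by
    rw [Finset.range_eq_Ico, ← Finset.sum_Ico_consecutive _ (Nat.zero_le (t+1)) (by omega),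
      ← Finset.range_eq_Ico]
  rw [hsplit]
  have hfirst : ∑ i ∈ Finset.range (t + 1), padicValNat p ((t - i) + (i - t))
      = padicValNat p t.factorial := by
    calc ∑ i ∈ Finset.range (t + 1), padicValNat p ((t - i) + (i - t))
        = ∑ i ∈ Finset.range (t + 1), padicValNat p (t + 1 - 1 - i) := by
          refine Finset.sum_congr rfl fun i hi => ?_
          have := Finset.mem_range.mp hi
          congr 1
          omega
      _ = ∑ i ∈ Finset.range (t + 1), padicValNat p i :=
          Finset.sum_range_reflect (fun i => padicValNat p i) (t + 1)
      _ = padicValNat p t.factorial := mySum_padicValNat_range hp t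
  have hsecond : ∑ i ∈ Finset.Ico (t + 1) q, padicValNat p ((t - i) + (i - t))
      = padicValNat p (q - 1 - t).factorial := by
    calc ∑ i ∈ Finset.Ico (t + 1) q, padicValNat p ((t - i) + (i - t))
        = ∑ i ∈ Finset.range (q - (t + 1)),
            padicValNat p ((t - (t + 1 + i)) + ((t + 1 + i) - t)) :=
          Finset.sum_Ico_eq_sum_range _ _ _
      _ = ∑ i ∈ Finset.range (q - 1 - t), padicValNat p (i + 1) := by
          rw [show q - (t + 1) = q - 1 - t by omega]
          exact Finset.sum_congr rfl fun i hi => by congr 1; omega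
      _ = (∑ i ∈ Finset.range (q - 1 - t), padicValNat p (i + 1)) + padicValNat p 0 :=
          (by simp)
      _ = ∑ i ∈ Finset.range (q - 1 - t + 1), padicValNat p i :=
          (Finset.sum_range_succ' (fun i => padicValNat p i) (q - 1 - t)).symm
      _ = padicValNat p (q - 1 - t).factorial := mySum_padicValNat_range hp (q - 1 - t)
  rw [hfirst, hsecond, myVal_fact_add hp (by omega)]

private lemma myVal_iter (hp : p.Prime) {a d M : ℕ} (ha : 1 ≤ a) (had : a ≤ d)
    (hpd : ¬ p ∣ d) (hdM : d ∣ p ^ M - 1) (m : ℕ) :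
    padicValNat p (∏ i ∈ Finset.range (m * p ^ M), (a + i * d)) =
      padicValNat p (∏ i ∈ Finset.range m, (a + i * d))
        + m * (M + padicValNat p (p ^ M - 1).factorial) := by
  haveI : Fact p.Prime := ⟨hp⟩
  have hF0 : ∀ i : ℕ, a + i * d ≠ 0 := fun i => by
    have := Nat.le_add_right a (i * d); omega
  induction m with
  | zero => simp
  | succ m ih =>
    have hsplit : ∏ i ∈ Finset.range ((m + 1) * p ^ M), (a + i * d)
        = (∏ i ∈ Finset.range (m * p ^ M), (a + i * d))
          * ∏ i ∈ Finset.range (p ^ M), (a + (m * p ^ M + i) * d) := by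
      rw [add_mul, one_mul, Finset.prod_range_add]
    rw [hsplit,
      padicValNat.mul (Finset.prod_ne_zero_iff.mpr fun i _ => hF0 i)
        (Finset.prod_ne_zero_iff.mpr fun i _ => hF0 _),
      ih, myVal_block hp m ha had hpd hdM, Finset.prod_range_succ,
      padicValNat.mul (Finset.prod_ne_zero_iff.mpr fun i _ => hF0 i) (hF0 m)]
    ring

private lemma myPoch_eval_pos {γ : ℚ} (h0 : 0 < γ) (k : ℕ) :
    0 < (ascPochhammer ℚ k).eval γ := by
  induction k with
  | zero => simp
  | succ k ih =>
    rw [ascPochhammer_succ_eval]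
    exact mul_pos ih (by positivity)

private lemma myPoch_eval_eq {γ : ℚ} (a d : ℕ) (hd : (d : ℚ) ≠ 0) (hγ : γ = (a : ℚ) / d)
    (k : ℕ) :
    (ascPochhammer ℚ k).eval γ =
      ((∏ i ∈ Finset.range k, (a + i * d) : ℕ) : ℚ) / (d : ℚ) ^ k := by
  induction k with
  | zero => simp
  | succ k ih =>
    rw [ascPochhammer_succ_eval, ih, Finset.prod_range_succ, hγ]
    have hstep : (a : ℚ) / d + k = ((a + k * d : ℕ) : ℚ) / d := by
      push_cast
      field_simp
    rw [hstep, div_mul_div_comm, ← Nat.cast_mul, pow_succ]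

private lemma myVal_poch (hp : p.Prime) {γ : ℚ} (h0 : 0 < γ) (hpd : ¬ p ∣ γ.den) (k : ℕ) :
    padicValRat p ((ascPochhammer ℚ k).eval γ) =
      padicValNat p (∏ i ∈ Finset.range k, (γ.num.toNat + i * γ.den)) := by
  haveI : Fact p.Prime := ⟨hp⟩
  set a := γ.num.toNat with hadef
  set d := γ.den with hddef
  have hd0 : (d : ℚ) ≠ 0 := by exact_mod_cast γ.den_nz
  have hnum : (a : ℤ) = γ.num := Int.toNat_of_nonneg (Rat.num_pos.mpr h0).le
  have hγ : γ = (a : ℚ) / d := by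
    rw [show ((a : ℕ) : ℚ) = ((a : ℤ) : ℚ) by push_cast; ring, hnum]
    exact (Rat.num_div_den γ).symm
  have hF0 : ∀ i : ℕ, a + i * d ≠ 0 := fun i => by
    have h1 : 1 ≤ a := by
      have := Rat.num_pos.mpr h0
      omega
    omega
  have hN0 : (∏ i ∈ Finset.range k, (a + i * d)) ≠ 0 :=
    Finset.prod_ne_zero_iff.mpr fun i _ => hF0 i
  rw [myPoch_eval_eq a d hd0 hγ k,
    padicValRat.div (by exact_mod_cast hN0) (pow_ne_zero _ hd0),
    padicValRat.pow (d : ℚ)]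
  have hvd : padicValRat p (d : ℚ) = 0 := by
    rw [padicValRat.of_nat]
    simp [padicValNat.eq_zero_iff, hpd]
  rw [hvd, padicValRat.of_nat]
  ring

private lemma myDen_sub_one (γ : ℚ) : (γ - 1).den = γ.den := by
  have hd0 : (0 : ℤ) < (γ.den : ℤ) := by exact_mod_cast γ.pos
  have hcop : IsCoprime (γ.num - γ.den) (γ.den : ℤ) := by
    have h1 : IsCoprime γ.num (γ.den : ℤ) := by
      rw [Int.isCoprime_iff_gcd_eq_one]
      exact γ.reduced
    simpa [sub_eq_add_neg] using h1.add_mul_right_left (-1)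
  have hcop' : (γ.num - γ.den).natAbs.Coprime (γ.den : ℤ).natAbs :=
    Int.isCoprime_iff_gcd_eq_one.mp hcop
  have hval : γ - 1 = ((γ.num - γ.den : ℤ) : ℚ) / ((γ.den : ℤ) : ℚ) := by
    push_cast
    rw [sub_div, Rat.num_div_den]
    have : ((γ.den : ℚ)) ≠ 0 := by exact_mod_cast γ.den_nz
    field_simp
  have h2 := Rat.den_div_eq_of_coprime hd0 hcop'
  rw [hval]
  exact_mod_cast h2

private lemma myNot_dvd_den (hp : p.Prime) {x : ℚ} (h : padicValRat p x = 0) : ¬ p ∣ x.den := by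
  haveI : Fact p.Prime := ⟨hp⟩
  intro hdvd
  have hnum : ¬ p ∣ x.num.natAbs := by
    intro hc
    exact hp.not_dvd_one (x.reduced ▸ Nat.dvd_gcd hc hdvd)
  have hA : padicValNat p x.num.natAbs = 0 :=
    padicValNat.eq_zero_iff.mpr (Or.inr (Or.inr hnum))
  have hB : padicValNat p x.den ≠ 0 := by
    simp only [ne_eq, padicValNat.eq_zero_iff, not_or]
    exact ⟨hp.ne_one, x.den_nz, fun hc => hc hdvd⟩
  rw [padicValRat_def, padicValInt, hA] at h
  omega

private lemma myVal_poch_shift (hp : p.Prime) {γ : ℚ} {M : ℕ} (h0 : 0 < γ) (h1 : γ ≤ 1)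
    (hpd : ¬ p ∣ γ.den) (hdM : γ.den ∣ p ^ M - 1) (m : ℕ) :
    padicValRat p ((ascPochhammer ℚ (m * p ^ M)).eval γ) =
      padicValRat p ((ascPochhammer ℚ m).eval γ)
        + (m * (M + padicValNat p (p ^ M - 1).factorial) : ℕ) := by
  have ha : 1 ≤ γ.num.toNat := by
    have := Rat.num_pos.mpr h0
    omega
  have had : γ.num.toNat ≤ γ.den := by
    have hdpos : (0 : ℚ) < γ.den := by exact_mod_cast γ.pos
    have hnum : (γ.num : ℚ) = γ * γ.den := by
      have hne : ((γ.den : ℚ)) ≠ 0 := hdpos.ne'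
      exact (div_eq_iff hne).mp (Rat.num_div_den γ)
    have hq : (γ.num : ℚ) ≤ (γ.den : ℚ) := by
      rw [hnum]
      calc γ * (γ.den : ℚ) ≤ 1 * γ.den := mul_le_mul_of_nonneg_right h1 hdpos.le
      _ = γ.den := one_mul _
    have hq2 : γ.num ≤ (γ.den : ℤ) := by exact_mod_cast hq
    omega
  rw [myVal_poch hp h0 hpd, myVal_poch hp h0 hpd, myVal_iter hp ha had hpd hdM m]
  push_cast
  ring

private lemma myVal_fact_shift (hp : p.Prime) (M m : ℕ) :
    padicValNat p (m * p ^ M).factorial =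
      padicValNat p m.factorial + m * (M + padicValNat p (p ^ M - 1).factorial) := by
  have h := myVal_iter (M := M) (a := 1) (d := 1) hp le_rfl le_rfl hp.not_dvd_one (one_dvd _) m
  have hfac : ∀ k : ℕ, ∏ i ∈ Finset.range k, (1 + i * 1) = k.factorial := by
    intro k
    calc ∏ i ∈ Finset.range k, (1 + i * 1) = ∏ i ∈ Finset.range k, (i + 1) :=
      Finset.prod_congr rfl fun i _ => by ring
    _ = k.factorial := Finset.prod_range_add_one_eq_factorial k
  rwa [hfac, hfac] at h

end StmtSevenAux

/-- Periodicity of valuations: for admissible parameters and a good prime `p`,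
with `M` the lcm of the multiplicative orders of `p` modulo the reduced
denominators of the `α_j − 1` and `β_k − 1`, one has
`v_p(A_{m·p^M}) = v_p(A_m)` for all `m`. -/
theorem stmt_7 (n : ℕ) (hn : 1 ≤ n) (α : Fin n → ℚ) (β : Fin (n - 1) → ℚ)
    (hadm : (∀ j, 0 < α j ∧ α j < 1) ∧ (∀ k, 0 < β k ∧ β k < 1) ∧
      ∀ j k, α j ≠ β k)
    (p : ℕ) (hp : p.Prime)
    (hgood : (∀ j, padicValRat p (α j - 1) = 0) ∧
      (∀ k, padicValRat p (β k - 1) = 0))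
    (M : ℕ)
    (hM : M = Nat.lcm
      ((Finset.univ : Finset (Fin n)).lcm fun j => orderOf (p : ZMod (α j - 1).den))
      ((Finset.univ : Finset (Fin (n - 1))).lcm fun k => orderOf (p : ZMod (β k - 1).den))) :
    ∀ m : ℕ, padicValRat p (genHypCoeff n α β (m * p ^ M)) =
      padicValRat p (genHypCoeff n α β m) := by
  obtain ⟨hα, hβ, -⟩ := hadm
  obtain ⟨hgα, hgβ⟩ := hgood
  haveI : Fact p.Prime := ⟨hp⟩
  have hq1 : 1 ≤ p ^ M := Nat.one_le_pow _ _ hp.pos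
  intro m
  -- per-parameter divisibility facts
  have hdenfact : ∀ γ : ℚ, padicValRat p (γ - 1) = 0 →
      orderOf (p : ZMod (γ - 1).den) ∣ M → ¬ p ∣ γ.den ∧ γ.den ∣ p ^ M - 1 := by
    intro γ hg hord
    have hden : (γ - 1).den = γ.den := myDen_sub_one γ
    constructor
    · have := myNot_dvd_den hp hg
      rwa [hden] at this
    · have hpow : (p : ZMod (γ - 1).den) ^ M = 1 := orderOf_dvd_iff_pow_eq_one.mp hord
      have hcast : ((p ^ M : ℕ) : ZMod (γ - 1).den) = ((1 : ℕ) : ZMod (γ - 1).den) := by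
        push_cast
        rw [hpow]
      have hmodeq : (1 : ℕ) ≡ p ^ M [MOD (γ - 1).den] :=
        ((ZMod.natCast_eq_natCast_iff _ _ _).mp hcast).symm
      have := (Nat.modEq_iff_dvd' hq1).mp hmodeq
      rwa [hden] at this
  have hdα : ∀ j, ¬ p ∣ (α j).den ∧ (α j).den ∣ p ^ M - 1 := fun j =>
    hdenfact (α j) (hgα j)
      (by rw [hM]
          exact Dvd.dvd.trans
            (Finset.dvd_lcm (f := fun j => orderOf (p : ZMod (α j - 1).den))
              (Finset.mem_univ j))
            (Nat.dvd_lcm_left _ _))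
  have hdβ : ∀ l, ¬ p ∣ (β l).den ∧ (β l).den ∣ p ^ M - 1 := fun l =>
    hdenfact (β l) (hgβ l)
      (by rw [hM]
          exact Dvd.dvd.trans
            (Finset.dvd_lcm (f := fun l => orderOf (p : ZMod (β l - 1).den))
              (Finset.mem_univ l))
            (Nat.dvd_lcm_right _ _))
  -- valuation formula for the coefficients
  have hvalA : ∀ k : ℕ, padicValRat p (genHypCoeff n α β k) =
      (∑ j, padicValRat p ((ascPochhammer ℚ k).eval (α j)))
        - ((∑ l, padicValRat p ((ascPochhammer ℚ k).eval (β l)))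
            + (padicValNat p k.factorial : ℤ)) := by
    intro k
    have hprodα : (∏ j, (ascPochhammer ℚ k).eval (α j)) ≠ 0 :=
      Finset.prod_ne_zero_iff.mpr fun j _ => (myPoch_eval_pos (hα j).1 k).ne'
    have hprodβ : (∏ l, (ascPochhammer ℚ k).eval (β l)) ≠ 0 :=
      Finset.prod_ne_zero_iff.mpr fun l _ => (myPoch_eval_pos (hβ l).1 k).ne'
    have hf : ((k.factorial : ℕ) : ℚ) ≠ 0 := by exact_mod_cast k.factorial_ne_zero
    rw [genHypCoeff, padicValRat.div hprodα (mul_ne_zero hprodβ hf),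
      padicValRat.mul hprodβ hf,
      myPadicValRat_prod hp _ _ (fun j _ => (myPoch_eval_pos (hα j).1 k).ne'),
      myPadicValRat_prod hp _ _ (fun l _ => (myPoch_eval_pos (hβ l).1 k).ne'),
      padicValRat.of_nat]
  rw [hvalA, hvalA]
  have hsα : ∑ j, padicValRat p ((ascPochhammer ℚ (m * p ^ M)).eval (α j))
      = (∑ j, padicValRat p ((ascPochhammer ℚ m).eval (α j)))
        + (n : ℤ) * (m * (M + padicValNat p (p ^ M - 1).factorial) : ℕ) := by
    rw [Finset.sum_congr rfl fun j _ =>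
      myVal_poch_shift hp (hα j).1 (hα j).2.le (hdα j).1 (hdα j).2 m]
    rw [Finset.sum_add_distrib, Finset.sum_const, Finset.card_univ, Fintype.card_fin,
      nsmul_eq_mul]
  have hsβ : ∑ l, padicValRat p ((ascPochhammer ℚ (m * p ^ M)).eval (β l))
      = (∑ l, padicValRat p ((ascPochhammer ℚ m).eval (β l)))
        + ((n - 1 : ℕ) : ℤ) * (m * (M + padicValNat p (p ^ M - 1).factorial) : ℕ) := by
    rw [Finset.sum_congr rfl fun l _ =>
      myVal_poch_shift hp (hβ l).1 (hβ l).2.le (hdβ l).1 (hdβ l).2 m]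
    rw [Finset.sum_add_distrib, Finset.sum_const, Finset.card_univ, Fintype.card_fin,
      nsmul_eq_mul]
  have hsf : (padicValNat p (m * p ^ M).factorial : ℤ)
      = (padicValNat p m.factorial : ℤ)
        + (m * (M + padicValNat p (p ^ M - 1).factorial) : ℕ) := by
    rw [myVal_fact_shift hp M m]
    push_cast
    ring
  rw [hsα, hsβ, hsf]
  have hn1 : ((n - 1 : ℕ) : ℤ) = (n : ℤ) - 1 := by
    omega
  rw [hn1]
  ring
end

section
/- Let n ≥ 1 and let α_1,…,α_n, β_1,…,β_{n−1} be admissible rational hypergeometric parameters, i.e. 0 < α_j, β_k < 1 for all j, k and α_j ≠ β_k for all j, k, and let p be a good prime, i.e. v_p(α_j−1) = v_p(β_k−1) = 0 for all j, k. Then the p-adic valuations of the coefficients A_m = (∏_j (α_j)_m) / ((∏_k (β_k)_m) · m!) of ₙF_{n−1} are unbounded above: for every B ∈ ℕ there exists m with v_p(A_m) ≥ B. -/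
open scoped BigOperators

open Finset

lemma aux_count_mod (q c r : ℕ) (hq : 0 < q) (hr : r < q) :
    ((range (q * c)).filter (fun k => k % q = r)).card = c := by
  have himg : (range (q * c)).filter (fun k => k % q = r)
      = (range c).image (fun i => i * q + r) := by
    ext k
    simp only [mem_filter, mem_range, mem_image]
    constructor
    · rintro ⟨h1, h2⟩
      refine ⟨k / q, Nat.div_lt_of_lt_mul h1, ?_⟩
      have h3 := Nat.div_add_mod k q
      have h4 : k / q * q = q * (k / q) := Nat.mul_comm _ _
      omega
    · rintro ⟨i, hi, rfl⟩
      have h5 : (i + 1) * q ≤ c * q := Nat.mul_le_mul_right q hi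
      have h6 : (i + 1) * q = i * q + q := by ring
      refine ⟨by rw [Nat.mul_comm q c]; omega, ?_⟩
      simp [Nat.add_mod, Nat.mul_mod_left, Nat.mod_eq_of_lt hr]
  rw [himg, Finset.card_image_of_injective _ ?_, card_range]
  intro x y h
  simp only at h
  have : x * q = y * q := by omega
  exact Nat.eq_of_mul_eq_mul_right hq this

lemma aux_residue (p : ℕ) (hp : p.Prime) (j a b : ℕ) (hb : ¬ p ∣ b) :
    ∃ r < p ^ j, ∀ k : ℕ, (p ^ j ∣ a + k * b ↔ k % p ^ j = r) := by
  set q := p ^ j with hqdef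
  haveI : NeZero q := ⟨(pow_pos hp.pos j).ne'⟩
  have hco : Nat.Coprime b q := ((hp.coprime_iff_not_dvd.mpr hb).symm).pow_right j
  have hbu : IsUnit (b : ZMod q) := (ZMod.isUnit_iff_coprime b q).mpr hco
  obtain ⟨u, hu⟩ := hbu
  set z : ZMod q := (-(a : ZMod q)) * ↑u⁻¹ with hz
  refine ⟨z.val, ZMod.val_lt z, fun k => ?_⟩
  rw [← ZMod.natCast_eq_zero_iff]
  push_cast
  have step1 : ((a : ZMod q) + (k : ZMod q) * (b : ZMod q) = 0) ↔ ((k : ZMod q) = z) := by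
    constructor
    · intro h
      have hk : (k : ZMod q) * (b : ZMod q) = -(a : ZMod q) := by linear_combination h
      rw [hz, ← hk, ← hu, Units.mul_inv_cancel_right]
    · intro h
      rw [h, hz, ← hu, Units.inv_mul_cancel_right]
      ring
  rw [step1, show z = ((z.val : ℕ) : ZMod q) from (ZMod.natCast_zmod_val z).symm,
    ZMod.natCast_eq_natCast_iff', Nat.mod_eq_of_lt (ZMod.val_lt z),
    ZMod.val_cast_of_lt (ZMod.val_lt z)]

lemma aux_count_full (p : ℕ) (hp : p.Prime) (a b T j : ℕ) (hb : ¬ p ∣ b) (hj : j ≤ T) :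
    ((range (p ^ T)).filter (fun k => p ^ j ∣ a + k * b)).card = p ^ (T - j) := by
  obtain ⟨r, hr, hchar⟩ := aux_residue p hp j a b hb
  have hsplit : p ^ T = p ^ j * p ^ (T - j) := by
    rw [← pow_add, Nat.add_sub_cancel' hj]
  have : (range (p ^ T)).filter (fun k => p ^ j ∣ a + k * b)
      = (range (p ^ j * p ^ (T - j))).filter (fun k => k % p ^ j = r) := by
    rw [← hsplit]
    ext k
    simp [hchar]
  rw [this, aux_count_mod _ _ _ (pow_pos hp.pos j) hr]

lemma aux_count_pred (p : ℕ) (hp : p.Prime) (a b T j : ℕ) (hb : ¬ p ∣ b)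
    (hj : j ≤ T) (hex : ¬ p ^ j ∣ a + (p ^ T - 1) * b) :
    ((range (p ^ T - 1)).filter (fun k => p ^ j ∣ a + k * b)).card = p ^ (T - j) := by
  have h1 : 1 ≤ p ^ T := Nat.one_le_pow T p hp.pos
  have h2 : p ^ T = (p ^ T - 1) + 1 := by omega
  rw [← aux_count_full p hp a b T j hb hj, h2, Finset.range_add_one, Finset.filter_insert,
    if_neg hex]
  simp

lemma aux_count_pred_mem (p : ℕ) (hp : p.Prime) (a b T j : ℕ) (hb : ¬ p ∣ b)
    (hj : j ≤ T) (hex : p ^ j ∣ a + (p ^ T - 1) * b) :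
    ((range (p ^ T - 1)).filter (fun k => p ^ j ∣ a + k * b)).card + 1 = p ^ (T - j) := by
  have h1 : 1 ≤ p ^ T := Nat.one_le_pow T p hp.pos
  have h2 : p ^ T = (p ^ T - 1) + 1 := by omega
  rw [← aux_count_full p hp a b T j hb hj, h2, Finset.range_add_one, Finset.filter_insert,
    if_pos hex, Finset.card_insert_of_notMem (by simp)]
  simp

lemma aux_count_le_one (p : ℕ) (hp : p.Prime) (a b j m : ℕ) (hb : ¬ p ∣ b)
    (hm : m ≤ p ^ j) :
    ((range m).filter (fun k => p ^ j ∣ a + k * b)).card ≤ 1 := by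
  obtain ⟨r, hr, hchar⟩ := aux_residue p hp j a b hb
  apply Finset.card_le_one.mpr
  intro x hx y hy
  simp only [mem_filter, mem_range, hchar] at hx hy
  have hx' : x % p ^ j = x := Nat.mod_eq_of_lt (lt_of_lt_of_le hx.1 hm)
  have hy' : y % p ^ j = y := Nat.mod_eq_of_lt (lt_of_lt_of_le hy.1 hm)
  omega

lemma aux_val_eq_card (p : ℕ) (hp : p.Prime) (c J : ℕ) (hc : 0 < c) (hcJ : c < p ^ J) :
    padicValNat p c = ((Ico 1 J).filter (fun j => p ^ j ∣ c)).card := by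
  haveI : Fact p.Prime := ⟨hp⟩
  have hv : padicValNat p c < J := by
    by_contra h
    push_neg at h
    have hd : p ^ J ∣ c := dvd_trans (pow_dvd_pow p h) pow_padicValNat_dvd
    exact absurd (Nat.le_of_dvd hc hd) (by omega)
  have hfe : (Ico 1 J).filter (fun j => p ^ j ∣ c) = Ico 1 (padicValNat p c + 1) := by
    ext j
    simp only [mem_filter, mem_Ico]
    constructor
    · rintro ⟨⟨hj1, hj2⟩, hd⟩
      exact ⟨hj1, Nat.lt_succ_of_le ((padicValNat_dvd_iff_le hc.ne').mp hd)⟩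
    · rintro ⟨hj1, hj2⟩
      exact ⟨⟨hj1, by omega⟩, (padicValNat_dvd_iff_le hc.ne').mpr (by omega)⟩
  rw [hfe, Nat.card_Ico]
  omega

lemma aux_val_prod (p : ℕ) (hp : p.Prime) (a b m J : ℕ) (ha : 0 < a)
    (hJ : ∀ k, k < m → a + k * b < p ^ J) :
    padicValNat p (∏ k ∈ range m, (a + k * b))
      = ∑ j ∈ Ico 1 J, ((range m).filter (fun k => p ^ j ∣ a + k * b)).card := by
  have hne : ∀ k ∈ range m, a + k * b ≠ 0 := fun k _ => by omega
  have h1 : padicValNat p (∏ k ∈ range m, (a + k * b))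
      = ∑ k ∈ range m, padicValNat p (a + k * b) := by
    rw [← Nat.factorization_def _ hp, Nat.factorization_prod hne]
    simp only [Finsupp.finset_sum_apply]
    exact Finset.sum_congr rfl fun k _ => Nat.factorization_def _ hp
  rw [h1]
  have h2 : ∀ k ∈ range m, padicValNat p (a + k * b)
      = ((Ico 1 J).filter (fun j => p ^ j ∣ a + k * b)).card := fun k hk =>
    aux_val_eq_card p hp _ J (by omega) (hJ k (mem_range.mp hk))
  rw [Finset.sum_congr rfl h2]
  simp only [Finset.card_filter]
  rw [Finset.sum_comm]

lemma aux_hJ (p : ℕ) (hp : p.Prime) (a b T : ℕ) :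
    ∀ k, k < p ^ T - 1 → a + k * b < p ^ (T + (a + b) + 1) := by
  intro k hk
  have h1 : 1 ≤ p ^ T := Nat.one_le_pow T p hp.pos
  have h2 : k * b ≤ p ^ T * b := Nat.mul_le_mul_right b (by omega)
  have h3 : a ≤ a * p ^ T := Nat.le_mul_of_pos_right a (by omega)
  have h4 : a * p ^ T + p ^ T * b = (a + b) * p ^ T := by ring
  have h5 : (a + b) * p ^ T < 2 ^ (a + b) * p ^ T :=
    mul_lt_mul_of_pos_right (Nat.lt_two_pow_self (n := a + b)) (by omega)
  have h6 : 2 ^ (a + b) ≤ p ^ (a + b) := Nat.pow_le_pow_left hp.two_le _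
  have h7 : p ^ (a + b) * p ^ T = p ^ (T + (a + b)) := by rw [← pow_add]; ring_nf
  have h8 : p ^ (T + (a + b)) ≤ p ^ (T + (a + b) + 1) :=
    Nat.pow_le_pow_right hp.pos (by omega)
  have h9 : 2 ^ (a + b) * p ^ T ≤ p ^ (a + b) * p ^ T := Nat.mul_le_mul_right _ h6
  omega

lemma aux_lower (p : ℕ) (hp : p.Prime) (a b T : ℕ) (ha : 0 < a) (hb : ¬ p ∣ b)
    (hex : ¬ p ∣ a + (p ^ T - 1) * b) :
    ∑ j ∈ Ico 1 (T + 1), p ^ (T - j)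
      ≤ padicValNat p (∏ k ∈ range (p ^ T - 1), (a + k * b)) := by
  rw [aux_val_prod p hp a b (p ^ T - 1) (T + (a + b) + 1) ha (aux_hJ p hp a b T)]
  have hsub : Ico 1 (T + 1) ⊆ Ico 1 (T + (a + b) + 1) := Finset.Ico_subset_Ico le_rfl (by omega)
  calc ∑ j ∈ Ico 1 (T + 1), p ^ (T - j)
      = ∑ j ∈ Ico 1 (T + 1), ((range (p ^ T - 1)).filter (fun k => p ^ j ∣ a + k * b)).card := by
        refine Finset.sum_congr rfl fun j hj => ?_
        rw [mem_Ico] at hj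
        exact (aux_count_pred p hp a b T j hb (by omega)
          (fun hd => hex (dvd_trans (dvd_pow_self p (by omega : j ≠ 0)) hd))).symm
    _ ≤ ∑ j ∈ Ico 1 (T + (a + b) + 1), ((range (p ^ T - 1)).filter (fun k => p ^ j ∣ a + k * b)).card :=
        Finset.sum_le_sum_of_subset hsub

lemma aux_upper (p : ℕ) (hp : p.Prime) (a b T : ℕ) (ha : 0 < a) (hb : ¬ p ∣ b)
    (hex : ¬ p ∣ a + (p ^ T - 1) * b) :
    padicValNat p (∏ k ∈ range (p ^ T - 1), (a + k * b))
      ≤ (∑ j ∈ Ico 1 (T + 1), p ^ (T - j)) + (a + b) := by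
  rw [aux_val_prod p hp a b (p ^ T - 1) (T + (a + b) + 1) ha (aux_hJ p hp a b T)]
  rw [← Finset.sum_Ico_consecutive _ (by omega : 1 ≤ T + 1) (by omega : T + 1 ≤ T + (a + b) + 1)]
  have hfirst : ∑ j ∈ Ico 1 (T + 1), ((range (p ^ T - 1)).filter (fun k => p ^ j ∣ a + k * b)).card
      = ∑ j ∈ Ico 1 (T + 1), p ^ (T - j) := by
    refine Finset.sum_congr rfl fun j hj => ?_
    rw [mem_Ico] at hj
    exact aux_count_pred p hp a b T j hb (by omega)
      (fun hd => hex (dvd_trans (dvd_pow_self p (by omega : j ≠ 0)) hd))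
  have hsecond : ∑ j ∈ Ico (T + 1) (T + (a + b) + 1),
      ((range (p ^ T - 1)).filter (fun k => p ^ j ∣ a + k * b)).card ≤ a + b := by
    calc ∑ j ∈ Ico (T + 1) (T + (a + b) + 1),
        ((range (p ^ T - 1)).filter (fun k => p ^ j ∣ a + k * b)).card
        ≤ ∑ _j ∈ Ico (T + 1) (T + (a + b) + 1), 1 := by
          refine Finset.sum_le_sum fun j hj => ?_
          rw [mem_Ico] at hj
          refine aux_count_le_one p hp a b j (p ^ T - 1) hb ?_
          have : p ^ T ≤ p ^ j := Nat.pow_le_pow_right hp.pos (by omega)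
          omega
      _ = a + b := by rw [Finset.sum_const, Nat.card_Ico, smul_eq_mul]; omega
  omega

lemma aux_fact (p : ℕ) (hp : p.Prime) (T : ℕ) :
    padicValNat p (p ^ T - 1).factorial + T = ∑ j ∈ Ico 1 (T + 1), p ^ (T - j) := by
  have h1 : 1 ≤ p ^ T := Nat.one_le_pow T p hp.pos
  have hfac : (p ^ T - 1).factorial = ∏ k ∈ range (p ^ T - 1), (1 + k * 1) := by
    rw [← prod_range_add_one_eq_factorial]
    exact Finset.prod_congr rfl fun k _ => by ring
  rw [hfac, aux_val_prod p hp 1 1 (p ^ T - 1) (T + 1) one_pos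
    (fun k hk => by
      have : p ^ T ≤ p ^ (T + 1) := Nat.pow_le_pow_right hp.pos (by omega)
      omega)]
  have hcnt : ∀ j ∈ Ico 1 (T + 1),
      ((range (p ^ T - 1)).filter (fun k => p ^ j ∣ 1 + k * 1)).card + 1 = p ^ (T - j) := by
    intro j hj
    rw [mem_Ico] at hj
    refine aux_count_pred_mem p hp 1 1 T j (by simpa using hp.one_lt.ne') (by omega) ?_
    have : 1 + (p ^ T - 1) * 1 = p ^ T := by omega
    rw [this]
    exact pow_dvd_pow p (by omega)
  calc (∑ j ∈ Ico 1 (T + 1), ((range (p ^ T - 1)).filter (fun k => p ^ j ∣ 1 + k * 1)).card) + T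
      = ∑ j ∈ Ico 1 (T + 1),
          (((range (p ^ T - 1)).filter (fun k => p ^ j ∣ 1 + k * 1)).card + 1) := by
        rw [Finset.sum_add_distrib, Finset.sum_const, Nat.card_Ico, smul_eq_mul]
        omega
    _ = ∑ j ∈ Ico 1 (T + 1), p ^ (T - j) := Finset.sum_congr rfl hcnt

lemma aux_exclusion (p : ℕ) (hp : p.Prime) (a b T : ℕ) (hT : 1 ≤ T) (hab : a < b)
    (hnd : ¬ p ∣ (b - a)) : ¬ p ∣ a + (p ^ T - 1) * b := by
  intro h
  apply hnd
  have h1 : 1 ≤ p ^ T := Nat.one_le_pow T p hp.pos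
  have h2 : p ∣ p ^ T * b := dvd_mul_of_dvd_left (dvd_pow_self p (by omega : T ≠ 0)) b
  have h3 := Nat.dvd_sub h2 h
  have e : p ^ T * b = (p ^ T - 1) * b + b := by
    rw [Nat.sub_one_mul]
    have : b ≤ p ^ T * b := Nat.le_mul_of_pos_left b (by omega)
    omega
  have e2 : p ^ T * b - (a + (p ^ T - 1) * b) = b - a := by omega
  rwa [e2] at h3

lemma aux_poch (m : ℕ) (x : ℚ) :
    (ascPochhammer ℚ m).eval x = ∏ k ∈ range m, (x + k) := by
  induction m with
  | zero => simp
  | succ m ih => rw [ascPochhammer_succ_eval, ih, Finset.prod_range_succ]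

lemma aux_poch_pos (m : ℕ) (x : ℚ) (hx : 0 < x) : 0 < (ascPochhammer ℚ m).eval x := by
  rw [aux_poch]
  exact Finset.prod_pos fun k _ => by positivity

lemma aux_padicValRat_prod (p : ℕ) (hp : p.Prime) {ι : Type*} (s : Finset ι) (f : ι → ℚ)
    (hf : ∀ i ∈ s, f i ≠ 0) :
    padicValRat p (∏ i ∈ s, f i) = ∑ i ∈ s, padicValRat p (f i) := by
  haveI : Fact p.Prime := ⟨hp⟩
  induction s using Finset.cons_induction with
  | empty => simp
  | cons i s hi ih =>
    rw [Finset.prod_cons, Finset.sum_cons,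
      padicValRat.mul (hf i (Finset.mem_cons_self i s))
        (Finset.prod_ne_zero_iff.mpr fun j hj => hf j (Finset.mem_cons_of_mem hj)),
      ih (fun j hj => hf j (Finset.mem_cons_of_mem hj))]

lemma aux_val_poch (p : ℕ) (hp : p.Prime) (a b m : ℕ) (ha : 0 < a) (hb : 0 < b)
    (hpb : ¬ p ∣ b) :
    padicValRat p ((ascPochhammer ℚ m).eval ((a : ℚ) / b))
      = (padicValNat p (∏ k ∈ range m, (a + k * b)) : ℤ) := by
  haveI : Fact p.Prime := ⟨hp⟩
  rw [aux_poch]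
  have hb0 : (b : ℚ) ≠ 0 := Nat.cast_ne_zero.mpr hb.ne'
  have hfac : ∀ k ∈ range m, (a : ℚ) / b + (k : ℚ) = ((a + k * b : ℕ) : ℚ) / (b : ℚ) := by
    intro k _
    rw [eq_div_iff hb0]
    push_cast
    field_simp
  rw [Finset.prod_congr rfl hfac, Finset.prod_div_distrib, Finset.prod_const, card_range,
    ← Nat.cast_prod]
  have hNpos : 0 < ∏ k ∈ range m, (a + k * b) := Finset.prod_pos fun k _ => by omega
  have hN : ((∏ k ∈ range m, (a + k * b) : ℕ) : ℚ) ≠ 0 := Nat.cast_ne_zero.mpr hNpos.ne'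
  have hB : ((b : ℚ) ^ m) ≠ 0 := pow_ne_zero _ hb0
  rw [padicValRat.div hN hB]
  have h2 : padicValRat p ((b : ℚ) ^ m) = 0 := by
    rw [show ((b : ℚ) ^ m) = ((b ^ m : ℕ) : ℚ) by push_cast; ring, padicValRat.of_nat,
      padicValNat.eq_zero_of_not_dvd (fun h => hpb (hp.dvd_of_dvd_pow h))]
    simp
  rw [padicValRat.of_nat, h2]
  ring

lemma aux_param (p : ℕ) (hp : p.Prime) (x : ℚ) (h0 : 0 < x) (h1 : x < 1)
    (hg : padicValRat p (x - 1) = 0) :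
    ∃ a b : ℕ, 0 < a ∧ a < b ∧ ¬ p ∣ b ∧ ¬ p ∣ (b - a) ∧ x = (a : ℚ) / b := by
  haveI : Fact p.Prime := ⟨hp⟩
  set a := x.num.toNat with hadef
  set b := x.den with hbdef
  have hnum : 0 < x.num := Rat.num_pos.mpr h0
  have ha : 0 < a := by omega
  have hab : a < b := by
    have := Rat.lt_one_iff_num_lt_denom.mpr h1
    omega
  have hxa : ((a : ℕ) : ℚ) = (x.num : ℚ) := by
    have h := Int.toNat_of_nonneg hnum.le
    exact_mod_cast congrArg (fun z : ℤ => (z : ℚ)) h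
  have hx : x = (a : ℚ) / b := by rw [hxa, hbdef, Rat.num_div_den]
  have hcop : Nat.Coprime a b := by
    have hred := x.reduced
    have : x.num.natAbs = a := by omega
    rwa [this] at hred
  have hsub : x - 1 = -(((b - a : ℕ) : ℚ) / (b : ℚ)) := by
    rw [hx, Nat.cast_sub hab.le]
    have hb0 : (b : ℚ) ≠ 0 := Nat.cast_ne_zero.mpr (by omega)
    field_simp
    ring
  have hba : 0 < b - a := by omega
  have hval : (padicValNat p (b - a) : ℤ) - (padicValNat p b : ℤ) = 0 := by
    rw [← padicValRat.of_nat (n := b - a), ← padicValRat.of_nat (n := b),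
      ← padicValRat.div (Nat.cast_ne_zero.mpr hba.ne') (Nat.cast_ne_zero.mpr (by omega : b ≠ 0)),
      ← padicValRat.neg, ← hsub]
    exact hg
  have hnb : ¬ p ∣ b := by
    intro hdvd
    have hpa : ¬ p ∣ a := by
      intro hpa
      have hone : p ∣ 1 := Nat.coprime_iff_gcd_eq_one.mp hcop ▸ Nat.dvd_gcd hpa hdvd
      have := Nat.le_of_dvd one_pos hone
      have := hp.one_lt
      omega
    have hpd : ¬ p ∣ (b - a) := by
      intro h2
      refine hpa ?_
      have h3 := Nat.dvd_sub hdvd h2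
      rwa [show b - (b - a) = a by omega] at h3
    have hz : padicValNat p (b - a) = 0 := padicValNat.eq_zero_of_not_dvd hpd
    have hb1 : 1 ≤ padicValNat p b := one_le_padicValNat_of_dvd (by omega) hdvd
    omega
  refine ⟨a, b, ha, hab, hnb, ?_, hx⟩
  intro h2
  have hvb : padicValNat p b = 0 := padicValNat.eq_zero_of_not_dvd hnb
  have h1v : 1 ≤ padicValNat p (b - a) := one_le_padicValNat_of_dvd hba.ne' h2
  omega

/-- For admissible parameters and a good prime `p`, the `p`-adic valuations of the
coefficients of `ₙF_{n−1}` are unbounded above. -/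
theorem stmt_8 (n : ℕ) (hn : 1 ≤ n) (α : Fin n → ℚ) (β : Fin (n - 1) → ℚ)
    (hadm : (∀ j, 0 < α j ∧ α j < 1) ∧ (∀ k, 0 < β k ∧ β k < 1) ∧
      ∀ j k, α j ≠ β k)
    (p : ℕ) (hp : p.Prime)
    (hgood : (∀ j, padicValRat p (α j - 1) = 0) ∧
      (∀ k, padicValRat p (β k - 1) = 0)) :
    ∀ B : ℕ, ∃ m : ℕ, (B : ℤ) ≤ padicValRat p (genHypCoeff n α β m) := by
  obtain ⟨hα, hβ, -⟩ := hadm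
  obtain ⟨hgα, hgβ⟩ := hgood
  haveI : Fact p.Prime := ⟨hp⟩
  intro B
  choose Aa Ab hA0 hAab hApb hApd hAx using
    fun i => aux_param p hp (α i) (hα i).1 (hα i).2 (hgα i)
  choose Ba Bb hB0 hBab hBpb hBpd hBx using
    fun k => aux_param p hp (β k) (hβ k).1 (hβ k).2 (hgβ k)
  set D : ℕ := ∑ k, (Ba k + Bb k) with hD
  set T : ℕ := B + D + 1 with hT
  refine ⟨p ^ T - 1, ?_⟩
  set S : ℕ := ∑ j ∈ Finset.Ico 1 (T + 1), p ^ (T - j) with hS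
  have hfacval : (padicValNat p (p ^ T - 1).factorial : ℤ) = (S : ℤ) - (T : ℤ) := by
    have h := aux_fact p hp T
    rw [hS]
    omega
  have hlow : ∀ i, (S : ℤ) ≤ padicValRat p ((ascPochhammer ℚ (p ^ T - 1)).eval (α i)) := by
    intro i
    rw [hAx i, aux_val_poch p hp _ _ (p ^ T - 1) (hA0 i) (by have := hAab i; omega) (hApb i)]
    exact_mod_cast aux_lower p hp (Aa i) (Ab i) T (hA0 i) (hApb i)
      (aux_exclusion p hp (Aa i) (Ab i) T (by omega) (hAab i) (hApd i))
  have hup : ∀ k, padicValRat p ((ascPochhammer ℚ (p ^ T - 1)).eval (β k))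
      ≤ (S : ℤ) + ((Ba k : ℤ) + (Bb k : ℤ)) := by
    intro k
    rw [hBx k, aux_val_poch p hp _ _ (p ^ T - 1) (hB0 k) (by have := hBab k; omega) (hBpb k)]
    exact_mod_cast aux_upper p hp (Ba k) (Bb k) T (hB0 k) (hBpb k)
      (aux_exclusion p hp (Ba k) (Bb k) T (by omega) (hBab k) (hBpd k))
  have hnum_ne : ∀ i : Fin n, (ascPochhammer ℚ (p ^ T - 1)).eval (α i) ≠ 0 :=
    fun i => (aux_poch_pos _ _ (hα i).1).ne'
  have hden_ne : ∀ k : Fin (n - 1), (ascPochhammer ℚ (p ^ T - 1)).eval (β k) ≠ 0 :=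
    fun k => (aux_poch_pos _ _ (hβ k).1).ne'
  have hfac_ne : (((p ^ T - 1).factorial : ℕ) : ℚ) ≠ 0 :=
    Nat.cast_ne_zero.mpr (Nat.factorial_ne_zero _)
  have hP : (∏ i, (ascPochhammer ℚ (p ^ T - 1)).eval (α i)) ≠ 0 :=
    Finset.prod_ne_zero_iff.mpr fun i _ => hnum_ne i
  have hQ1 : (∏ k, (ascPochhammer ℚ (p ^ T - 1)).eval (β k)) ≠ 0 :=
    Finset.prod_ne_zero_iff.mpr fun k _ => hden_ne k
  have hQ : (∏ k, (ascPochhammer ℚ (p ^ T - 1)).eval (β k)) * (((p ^ T - 1).factorial : ℕ) : ℚ) ≠ 0 :=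
    mul_ne_zero hQ1 hfac_ne
  have hsplit : padicValRat p (genHypCoeff n α β (p ^ T - 1))
      = (∑ i, padicValRat p ((ascPochhammer ℚ (p ^ T - 1)).eval (α i)))
        - ((∑ k, padicValRat p ((ascPochhammer ℚ (p ^ T - 1)).eval (β k)))
          + padicValRat p (((p ^ T - 1).factorial : ℕ) : ℚ)) := by
    rw [genHypCoeff, padicValRat.div hP hQ, padicValRat.mul hQ1 hfac_ne,
      aux_padicValRat_prod p hp _ _ (fun i _ => hnum_ne i),
      aux_padicValRat_prod p hp _ _ (fun k _ => hden_ne k)]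
  have hfacval2 : padicValRat p (((p ^ T - 1).factorial : ℕ) : ℚ) = (S : ℤ) - (T : ℤ) := by
    rw [padicValRat.of_nat]
    exact hfacval
  have hsum1 : (n : ℤ) * (S : ℤ)
      ≤ ∑ i, padicValRat p ((ascPochhammer ℚ (p ^ T - 1)).eval (α i)) := by
    calc (n : ℤ) * (S : ℤ) = ∑ _i : Fin n, (S : ℤ) := by
          rw [Finset.sum_const, Finset.card_univ, Fintype.card_fin, nsmul_eq_mul]
      _ ≤ _ := Finset.sum_le_sum fun i _ => hlow i
  have hsum2 : (∑ k, padicValRat p ((ascPochhammer ℚ (p ^ T - 1)).eval (β k)))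
      ≤ ((n - 1 : ℕ) : ℤ) * (S : ℤ) + (D : ℤ) := by
    calc (∑ k, padicValRat p ((ascPochhammer ℚ (p ^ T - 1)).eval (β k)))
        ≤ ∑ k : Fin (n - 1), ((S : ℤ) + ((Ba k : ℤ) + (Bb k : ℤ))) :=
          Finset.sum_le_sum fun k _ => hup k
      _ = ((n - 1 : ℕ) : ℤ) * (S : ℤ) + (D : ℤ) := by
          rw [Finset.sum_add_distrib, Finset.sum_const, Finset.card_univ, Fintype.card_fin,
            nsmul_eq_mul, hD]
          push_cast
          ring
  have hn1 : ((n - 1 : ℕ) : ℤ) = (n : ℤ) - 1 := by omega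
  rw [hsplit, hfacval2]
  rw [hn1] at hsum2
  have hTval : (T : ℤ) = (B : ℤ) + (D : ℤ) + 1 := by rw [hT]; push_cast; ring
  linarith
end

section
/- Let p be a prime, let x be a p-adic integer, and let n be a natural number such that x ≠ −k for every integer k with 1 ≤ k ≤ n. Then the p-adic valuation of the binomial value binom(x+n, n) = (x+1)(x+2)⋯(x+n)/n! equals the number of integers j ≥ 1 such that τ_j(x) + (n mod p^j) ≥ p^j, i.e. the number of carries occurring in the base-p addition of x and n. -/
open Finset

private lemma padic_val_prod {p : ℕ} [Fact p.Prime] (s : Finset ℕ) (f : ℕ → ℚ_[p])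
    (h : ∀ i ∈ s, f i ≠ 0) :
    (∏ i ∈ s, f i).valuation = ∑ i ∈ s, (f i).valuation := by
  classical
  induction s using Finset.induction_on with
  | empty => simp [Padic.valuation_one]
  | insert c s hnot ih =>
    rw [Finset.prod_insert hnot, Finset.sum_insert hnot,
      Padic.valuation_mul (h c (Finset.mem_insert_self c s))
        (Finset.prod_ne_zero_iff.2 fun i hi => h i (Finset.mem_insert_of_mem hi)),
      ih (fun i hi => h i (Finset.mem_insert_of_mem hi))]

private lemma prod_range_asc (a n : ℕ) :
    ∏ i ∈ Finset.range n, (a + i + 1) = n.factorial * (a + n).choose n := by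
  rw [← Nat.ascFactorial_eq_factorial_mul_choose]
  induction n with
  | zero => simp
  | succ n ih => rw [Finset.prod_range_succ, ih, Nat.ascFactorial_succ]; ring

/-- Kummer's theorem for `p`-adic integers: for `x ∈ ℤ_p` and `n ∈ ℕ` with
`x ≠ -k` for all `1 ≤ k ≤ n`, the `p`-adic valuation of
`binom(x+n, n) = (x+1)(x+2)⋯(x+n)/n!` equals the number of carries in the
base-`p` addition of `x` and `n`, i.e. the number of `j ≥ 1` with
`τ_j(x) + (n mod p^j) ≥ p^j`. -/
theorem stmt_9 (p : ℕ) [Fact p.Prime] (x : ℤ_[p]) (n : ℕ)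
    (hx : ∀ k : ℕ, 1 ≤ k → k ≤ n → x ≠ -(k : ℤ_[p])) :
    ((∏ i ∈ Finset.range n, ((x : ℚ_[p]) + (i : ℚ_[p]) + 1)) /
        (n.factorial : ℚ_[p])).valuation =
      ({j : ℕ | 1 ≤ j ∧ p ^ j ≤ x.appr j + n % p ^ j}.ncard : ℤ) := by
  have hp : p.Prime := Fact.out
  have hp1 : (1 : ℝ) < p := by exact_mod_cast hp.one_lt
  have hp0 : (0 : ℝ) < p := lt_trans one_pos hp1
  -- nonzero factors
  have hxk : ∀ k : ℕ, 1 ≤ k → k ≤ n → (x + (k : ℤ_[p])) ≠ 0 := by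
    intro k h1 h2 h0
    rw [add_eq_zero_iff_eq_neg] at h0
    exact hx k h1 h2 h0
  -- choose the cutoff M
  set V : ℕ := (Finset.Icc (1 : ℕ) n).sup (fun k : ℕ => (x + (k : ℤ_[p])).valuation) with hV
  set M : ℕ := V + n + 1 with hMdef
  have hnM : n < p ^ M := by
    calc n < 2 ^ n := Nat.lt_two_pow_self
    _ ≤ 2 ^ M := Nat.pow_le_pow_right (by omega) (by omega)
    _ ≤ p ^ M := Nat.pow_le_pow_left hp.two_le M
  set a : ℕ := x.appr M with ha
  have haM : a < p ^ M := x.appr_lt M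
  -- valuations of x + k are < M
  have hvalk : ∀ k : ℕ, 1 ≤ k → k ≤ n → (x + (k : ℤ_[p])).valuation < (M : ℤ) := by
    intro k h1 h2
    have hle : (x + (k : ℤ_[p])).valuation ≤ V :=
      Finset.le_sup (f := fun k : ℕ => (x + (k : ℤ_[p])).valuation)
        (Finset.mem_Icc.2 ⟨h1, h2⟩)
    have hnn := Nat.zero_le (x + (k : ℤ_[p])).valuation
    omega
  have hnormk : ∀ k : ℕ, 1 ≤ k → k ≤ n →
      (p : ℝ) ^ (-(M : ℤ)) < ‖x + (k : ℤ_[p])‖ := by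
    intro k h1 h2
    rw [PadicInt.norm_eq_zpow_neg_valuation (hxk k h1 h2)]
    exact zpow_lt_zpow_right₀ hp1 (by have := hvalk k h1 h2; omega)
  have hax : ‖x - (a : ℤ_[p])‖ ≤ (p : ℝ) ^ (-(M : ℤ)) :=
    (PadicInt.norm_le_pow_iff_mem_span_pow _ M).2 (x.appr_spec M)
  -- norms, hence valuations, of x + k and a + k agree
  have hnorm_eq : ∀ k : ℕ, 1 ≤ k → k ≤ n →
      ‖(a : ℤ_[p]) + (k : ℤ_[p])‖ = ‖x + (k : ℤ_[p])‖ := by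
    intro k h1 h2
    have hlt : ‖(a : ℤ_[p]) - x‖ < ‖x + (k : ℤ_[p])‖ := by
      rw [norm_sub_rev]; exact lt_of_le_of_lt hax (hnormk k h1 h2)
    have : (a : ℤ_[p]) + (k : ℤ_[p]) = (x + (k : ℤ_[p])) + ((a : ℤ_[p]) - x) := by ring
    rw [this, PadicInt.norm_add_eq_max_of_ne hlt.ne',
      max_eq_left hlt.le]
  have hval_eq : ∀ k : ℕ, 1 ≤ k → k ≤ n →
      ((x : ℚ_[p]) + (k : ℚ_[p])).valuation = ((a + k : ℕ) : ℚ_[p]).valuation := by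
    intro k h1 h2
    have hcx : ((x : ℚ_[p]) + (k : ℚ_[p])) = ((x + (k : ℤ_[p]) : ℤ_[p]) : ℚ_[p]) := by
      push_cast; ring
    have hca : ((a + k : ℕ) : ℚ_[p]) = (((a : ℤ_[p]) + (k : ℤ_[p]) : ℤ_[p]) : ℚ_[p]) := by
      push_cast; ring
    have h1' : (x + (k : ℤ_[p])).valuation = ((a : ℤ_[p]) + (k : ℤ_[p])).valuation := by
      have hne1 : (x + (k : ℤ_[p])) ≠ 0 := hxk k h1 h2
      have hne2 : ((a : ℤ_[p]) + (k : ℤ_[p])) ≠ 0 := by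
        intro h0
        have := hnorm_eq k h1 h2
        rw [h0, norm_zero] at this
        exact hxk k h1 h2 (norm_eq_zero.1 this.symm)
      have := hnorm_eq k h1 h2
      rw [PadicInt.norm_eq_zpow_neg_valuation hne1, PadicInt.norm_eq_zpow_neg_valuation hne2] at this
      have := zpow_right_injective₀ hp0 hp1.ne' this
      omega
    rw [hcx, hca]
    rw [PadicInt.valuation_coe, PadicInt.valuation_coe]; exact_mod_cast h1'
  -- the carry finset
  set F : Finset ℕ :=
    (Finset.Ico 1 (M + 1)).filter (fun j => p ^ j ≤ x.appr j + n % p ^ j) with hF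
  -- no carries beyond M
  have hno_carry : ∀ j : ℕ, M < j → ¬ (p ^ j ≤ x.appr j + n % p ^ j) := by
    intro j hj hcar
    have hlt := x.appr_lt j
    set m : ℕ := p ^ j - x.appr j with hm
    have hm1 : 1 ≤ m := by omega
    have hmn : m ≤ n := by
      have : n % p ^ j ≤ n := Nat.mod_le _ _
      omega
    have hmem : x + (m : ℤ_[p]) ∈ Ideal.span {(p : ℤ_[p]) ^ j} := by
      have heq : x + (m : ℤ_[p]) = (x - (x.appr j : ℤ_[p])) + ((p : ℤ_[p]) ^ j) := by
        have : ((x.appr j : ℕ) : ℤ_[p]) + (m : ℤ_[p]) = ((p : ℤ_[p]) ^ j) := by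
          have : (x.appr j) + m = p ^ j := by omega
          calc ((x.appr j : ℕ) : ℤ_[p]) + (m : ℤ_[p]) = (((x.appr j) + m : ℕ) : ℤ_[p]) := by
                push_cast; ring
          _ = ((p ^ j : ℕ) : ℤ_[p]) := by rw [this]
          _ = (p : ℤ_[p]) ^ j := by push_cast; ring
        linear_combination this
      rw [heq]
      exact Ideal.add_mem _ (x.appr_spec j) (Ideal.mem_span_singleton.2 dvd_rfl)
    have hnorm := (PadicInt.norm_le_pow_iff_mem_span_pow _ j).2 hmem
    have : ‖x + (m : ℤ_[p])‖ ≤ (p : ℝ) ^ (-(M : ℤ)) := by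
      refine le_trans hnorm (zpow_le_zpow_right₀ hp1.le ?_)
      omega
    exact absurd (lt_of_lt_of_le (hnormk m hm1 hmn) this) (lt_irrefl _)
  -- appr at level j ≤ M equals a % p^j
  have happr : ∀ j : ℕ, j ≤ M → x.appr j = a % p ^ j := by
    intro j hj
    obtain ⟨c, hc⟩ := x.dvd_appr_sub_appr j M hj
    have hmono : x.appr j ≤ a := x.appr_mono hj
    have : a = x.appr j + p ^ j * c := by omega
    rw [this, Nat.add_mul_mod_self_left, Nat.mod_eq_of_lt (x.appr_lt j)]
  -- the carry set is the carry finset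
  have hset : {j : ℕ | 1 ≤ j ∧ p ^ j ≤ x.appr j + n % p ^ j} = (F : Set ℕ) := by
    ext j
    simp only [hF, Finset.coe_filter, Set.mem_setOf_eq, Finset.mem_Ico]
    constructor
    · rintro ⟨h1, h2⟩
      refine ⟨⟨h1, ?_⟩, h2⟩
      by_contra hjM
      exact hno_carry j (by omega) h2
    · rintro ⟨⟨h1, _⟩, h2⟩
      exact ⟨h1, h2⟩
  -- counting : the finset card equals padic valuation of the binomial coefficient
  have hcard : padicValNat p ((a + n).choose n) = F.card := by
    have hlog : Nat.log p (a + n) < M + 1 := by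
      rcases Nat.eq_zero_or_pos (a + n) with h0 | h0
      · simp [h0]
      · refine Nat.log_lt_of_lt_pow (by omega) ?_
        calc a + n < p ^ M + p ^ M := by omega
        _ = 2 * p ^ M := by ring
        _ ≤ p * p ^ M := Nat.mul_le_mul_right _ hp.two_le
        _ = p ^ (M + 1) := by ring
    rw [padicValNat_choose' hlog, hF]
    congr 1
    apply Finset.filter_congr
    intro j hj
    rw [Finset.mem_Ico] at hj
    rw [happr j (by omega)]
    omega
  -- compute the valuation of the numerator
  have hfact_ne : ∀ i : ℕ, i ∈ Finset.range n → ((x : ℚ_[p]) + (i : ℚ_[p]) + 1) ≠ 0 := by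
    intro i hi
    rw [Finset.mem_range] at hi
    have : ((x : ℚ_[p]) + (i : ℚ_[p]) + 1) = ((x + ((i + 1 : ℕ) : ℤ_[p]) : ℤ_[p]) : ℚ_[p]) := by
      push_cast; ring
    rw [this]
    intro h
    exact hxk (i + 1) (by omega) (by omega) (PadicInt.coe_eq_zero.1 h)
  have hA : (∏ i ∈ Finset.range n, ((x : ℚ_[p]) + (i : ℚ_[p]) + 1)).valuation =
      ((n.factorial * (a + n).choose n : ℕ) : ℚ_[p]).valuation := by
    rw [padic_val_prod _ _ hfact_ne]
    have : ∀ i ∈ Finset.range n,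
        ((x : ℚ_[p]) + (i : ℚ_[p]) + 1).valuation = (((a + i + 1 : ℕ)) : ℚ_[p]).valuation := by
      intro i hi
      rw [Finset.mem_range] at hi
      have h1 : ((x : ℚ_[p]) + (i : ℚ_[p]) + 1) = ((x : ℚ_[p]) + ((i + 1 : ℕ) : ℚ_[p])) := by
        push_cast; ring
      have h2 : (a + i + 1 : ℕ) = (a + (i + 1) : ℕ) := by omega
      rw [h1, h2]
      exact hval_eq (i + 1) (by omega) (by omega)
    rw [Finset.sum_congr rfl this, ← padic_val_prod _ _ (fun i _ =>
      Nat.cast_ne_zero.2 (by omega))]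
    congr 1
    rw [← Nat.cast_prod, prod_range_asc]
  -- put it together
  have hAne : (∏ i ∈ Finset.range n, ((x : ℚ_[p]) + (i : ℚ_[p]) + 1)) ≠ 0 :=
    Finset.prod_ne_zero_iff.2 hfact_ne
  have hBne : ((n.factorial : ℚ_[p])) ≠ 0 := by
    exact_mod_cast Nat.cast_ne_zero.2 n.factorial_ne_zero
  have hdiv : ((∏ i ∈ Finset.range n, ((x : ℚ_[p]) + (i : ℚ_[p]) + 1)) /
      (n.factorial : ℚ_[p])).valuation =
      (∏ i ∈ Finset.range n, ((x : ℚ_[p]) + (i : ℚ_[p]) + 1)).valuation -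
        (n.factorial : ℚ_[p]).valuation := by
    have h1 := Padic.valuation_mul (div_ne_zero hAne hBne) hBne
    rw [div_mul_cancel₀ _ hBne] at h1
    omega
  rw [hdiv, hA, hset, Set.ncard_coe_finset, ← hcard]
  have hCpos : 0 < (a + n).choose n := Nat.choose_pos (Nat.le_add_left n a)
  rw [Padic.valuation_natCast, Padic.valuation_natCast,
    padicValNat.mul n.factorial_ne_zero (by omega)]
  push_cast
  ring
end

section
/- Let p be a prime, x a p-adic integer, and n a natural number. Then the set {j ≥ 1 : τ_j(x) + (n mod p^j) ≥ p^j} of carry positions in the base-p addition of x and n is infinite if and only if x = −k for some integer k with 1 ≤ k ≤ n. -/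
open PadicInt

lemma aux_zero (p : ℕ) [Fact p.Prime] (y : ℤ_[p]) (S : Set ℕ) (hS : S.Infinite)
    (h : ∀ j ∈ S, y ∈ Ideal.span {(p:ℤ_[p])^j}) : y = 0 := by
  by_contra hy
  have h0 : 0 < ‖y‖ := norm_pos_iff.mpr hy
  have hp1 : (1:ℝ) < p := by exact_mod_cast (Fact.out : p.Prime).one_lt
  have hinv : (p:ℝ)⁻¹ < 1 := inv_lt_one_of_one_lt₀ hp1
  obtain ⟨m, hm⟩ := exists_pow_lt_of_lt_one h0 hinv
  obtain ⟨j, hjS, hjm⟩ := hS.exists_gt m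
  have h1 : ‖y‖ ≤ (p:ℝ) ^ (-(j:ℤ)) := (norm_le_pow_iff_mem_span_pow y j).mpr (h j hjS)
  have h2 : (p:ℝ) ^ (-(j:ℤ)) ≤ ((p:ℝ)⁻¹) ^ m := by
    rw [zpow_neg, ← inv_zpow, zpow_natCast]
    exact pow_le_pow_of_le_one (by positivity) (le_of_lt hinv) hjm.le
  linarith

lemma aux_dvd (p : ℕ) [Fact p.Prime] (x : ℤ_[p]) (j k : ℕ) :
    (p:ℤ_[p])^j ∣ x + k ↔ (p^j : ℤ) ∣ (x.appr j + k : ℤ) := by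
  have hs := x.appr_spec j
  rw [Ideal.mem_span_singleton] at hs
  rw [← pow_p_dvd_int_iff]
  constructor
  · intro h
    have : (((x.appr j + k : ℤ)) : ℤ_[p]) = (x + k) - (x - x.appr j) := by
      push_cast; ring
    rw [this]
    exact dvd_sub h hs
  · intro h
    have : x + k = (((x.appr j + k : ℤ)) : ℤ_[p]) + (x - x.appr j) := by
      push_cast; ring
    rw [this]
    exact dvd_add h hs

/-- For `x ∈ ℤ_p` and `n ∈ ℕ`, the set of carry positions in the base-`p`
addition of `x` and `n` is infinite if and only if `x = -k` for some integer
`1 ≤ k ≤ n`. -/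
theorem stmt_10 (p : ℕ) [Fact p.Prime] (x : ℤ_[p]) (n : ℕ) :
    {j : ℕ | 1 ≤ j ∧ p ^ j ≤ x.appr j + n % p ^ j}.Infinite ↔
      ∃ k : ℕ, 1 ≤ k ∧ k ≤ n ∧ x = -(k : ℤ_[p]) := by
  have hp1 : 1 < p := (Fact.out : p.Prime).one_lt
  constructor
  · intro hS
    set S := {j : ℕ | 1 ≤ j ∧ p ^ j ≤ x.appr j + n % p ^ j} with hSdef
    set S' := S \ Set.Iic n with hS'def
    have hS' : S'.Infinite := hS.diff (Set.finite_Iic n)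
    have hnp : ∀ j ∈ S', n < p ^ j := fun j hj =>
      lt_trans (by simpa using hj.2) (Nat.lt_pow_self hp1 : j < p ^ j)
    -- for j ∈ S', k_j := p^j - appr j ∈ [1,n] and p^j ∣ x + k_j
    have hkey : ∀ j ∈ S', 1 ≤ p^j - x.appr j ∧ p^j - x.appr j ≤ n ∧
        (p:ℤ_[p])^j ∣ x + (p^j - x.appr j : ℕ) := by
      intro j hj
      have hlt := x.appr_lt j
      have hmod : n % p ^ j = n := Nat.mod_eq_of_lt (hnp j hj)
      have hge : p ^ j ≤ x.appr j + n := by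
        have := hj.1.2
        rwa [hmod] at this
      refine ⟨by omega, by omega, ?_⟩
      rw [aux_dvd]
      have : ((x.appr j : ℤ) + (p^j - x.appr j : ℕ)) = (p^j : ℤ) := by
        push_cast [Nat.cast_sub hlt.le]; ring
      rw [this]
  -- pigeonhole
    by_contra hcon
    push_neg at hcon
    have hfin : ∀ k ∈ Finset.Icc 1 n, {j ∈ S' | p^j - x.appr j = k}.Finite := by
      intro k hk
      by_contra hinf
      have hz : x + (k:ℤ_[p]) = 0 := by
        apply aux_zero p _ _ hinf
        intro j hj
        rw [Ideal.mem_span_singleton, ← hj.2]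
        exact (hkey j hj.1).2.2
      exact hcon k (Finset.mem_Icc.mp hk).1 (Finset.mem_Icc.mp hk).2
        (by linear_combination hz)
    have : S' ⊆ ⋃ k ∈ Finset.Icc 1 n, {j ∈ S' | p^j - x.appr j = k} := by
      intro j hj
      obtain ⟨h1, h2, _⟩ := hkey j hj
      exact Set.mem_biUnion (Finset.mem_Icc.mpr ⟨h1, h2⟩) ⟨hj, rfl⟩
    exact hS' ((Set.Finite.biUnion (Finset.finite_toSet _) hfin).subset this)
  · rintro ⟨k, hk1, hkn, hxk⟩
    have hinf2 : {j : ℕ | n < p ^ j ∧ 1 ≤ j}.Infinite := by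
      refine Set.Infinite.mono (fun j hj => ?_) (Set.Ioi_infinite n)
      have hj' : n < j := Set.mem_Ioi.mp hj
      exact ⟨lt_trans hj' (Nat.lt_pow_self hp1 : j < p ^ j), by omega⟩
    refine Set.Infinite.mono (fun j hj => ?_) hinf2
    obtain ⟨hnj, hj1⟩ := hj
    have hlt := x.appr_lt j
    have hmod : n % p ^ j = n := Nat.mod_eq_of_lt hnj
    refine ⟨hj1, ?_⟩
    rw [hmod]
    have hdvd : (p^j : ℤ) ∣ (x.appr j + k : ℤ) := by
      rw [← aux_dvd, hxk]
      simp
    have hpos : (0:ℤ) < (x.appr j + k : ℤ) := by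
      have : (1:ℤ) ≤ k := by exact_mod_cast hk1
      positivity
    have hle := Int.le_of_dvd hpos hdvd
    have hnat : p ^ j ≤ x.appr j + k := by exact_mod_cast hle
    omega
end

section
/- Let (a,b;c) and (r,s;t) be two triples of rational numbers such that (i) none of a, b, c, a−c, b−c is an integer, and (ii) a−r, b−s and c−t are all integers. Then for every prime p, the series ₂F₁(a,b;c;z) has p-adically unbounded coefficients if and only if ₂F₁(r,s;t;z) has p-adically unbounded coefficients. -/
open scoped BigOperators

def NonIntQ (x : ℚ) : Prop := ∀ z : ℤ, x ≠ (z : ℚ)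

namespace HypAux

lemma nonint_ne_zero {x : ℚ} (h : NonIntQ x) : x ≠ 0 := by
  simpa using h 0

lemma nonint_add_nat {x : ℚ} (h : NonIntQ x) (m : ℕ) : x + (m : ℚ) ≠ 0 := by
  intro he
  exact h (-(m : ℤ)) (by push_cast; linarith)

lemma nonint_add_int {x : ℚ} (h : NonIntQ x) (z : ℤ) : NonIntQ (x + (z : ℚ)) := by
  intro w he
  exact h (w - z) (by push_cast; linarith)

lemma nonint_add_one {x : ℚ} (h : NonIntQ x) : NonIntQ (x + 1) := by
  simpa using nonint_add_int h 1

lemma nonint_sub_one {x : ℚ} (h : NonIntQ x) : NonIntQ (x - 1) := by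
  have := nonint_add_int h (-1)
  simpa [sub_eq_add_neg] using this

lemma poch_ne_zero {x : ℚ} (h : NonIntQ x) (m : ℕ) :
    (ascPochhammer ℚ m).eval x ≠ 0 := by
  induction m with
  | zero => simp
  | succ n ih =>
    rw [ascPochhammer_succ_eval]
    exact mul_ne_zero ih (nonint_add_nat h n)

lemma hypCoeff_ne_zero {a b c : ℚ} (ha : NonIntQ a) (hb : NonIntQ b) (hc : NonIntQ c)
    (m : ℕ) : hypCoeff a b c m ≠ 0 := by
  unfold hypCoeff
  exact div_ne_zero (mul_ne_zero (poch_ne_zero ha m) (poch_ne_zero hb m))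
    (mul_ne_zero (poch_ne_zero hc m) (by exact_mod_cast m.factorial_ne_zero))

lemma hypCoeff_zero (a b c : ℚ) : hypCoeff a b c 0 = 1 := by
  simp [hypCoeff]

lemma hypCoeff_succ {a b c : ℚ} (ha : NonIntQ a) (hb : NonIntQ b) (hc : NonIntQ c) (m : ℕ) :
    hypCoeff a b c (m + 1) = hypCoeff a b c m * ((a + m) * (b + m)) / ((c + m) * (m + 1)) := by
  unfold hypCoeff
  rw [ascPochhammer_succ_eval, ascPochhammer_succ_eval, ascPochhammer_succ_eval,
    Nat.factorial_succ]
  have h1 := poch_ne_zero ha m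
  have h2 := poch_ne_zero hb m
  have h3 := poch_ne_zero hc m
  have h4 : (m.factorial : ℚ) ≠ 0 := by exact_mod_cast m.factorial_ne_zero
  have h5 := nonint_add_nat hc m
  have h6 : ((m : ℚ) + 1) ≠ 0 := by positivity
  field_simp
  push_cast
  ring

/-- `x * (x+1)_m = (x)_m * (x+m)` -/
lemma poch_shift (x : ℚ) (m : ℕ) :
    x * (ascPochhammer ℚ m).eval (x + 1) = (ascPochhammer ℚ m).eval x * (x + m) := by
  have h1 : (ascPochhammer ℚ (m + 1)).eval x
      = x * (ascPochhammer ℚ m).eval (x + 1) := by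
    rw [ascPochhammer_succ_left]
    simp [Polynomial.eval_comp]
  rw [← h1, ascPochhammer_succ_eval]

lemma hypCoeff_a_succ {a b c : ℚ} (ha : NonIntQ a) (hc : NonIntQ c) (m : ℕ) :
    hypCoeff (a + 1) b c m = hypCoeff a b c m * (a + m) / a := by
  unfold hypCoeff
  have hsh := poch_shift a m
  have ha0 := nonint_ne_zero ha
  have hpa := poch_ne_zero ha m
  have h4 : (m.factorial : ℚ) ≠ 0 := by exact_mod_cast m.factorial_ne_zero
  rw [div_mul_eq_mul_div, div_div,
    div_eq_div_iff (mul_ne_zero (poch_ne_zero hc m) h4)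
      (mul_ne_zero (mul_ne_zero (poch_ne_zero hc m) h4) ha0)]
  linear_combination ((ascPochhammer ℚ m).eval b * ((ascPochhammer ℚ m).eval c * (m.factorial : ℚ))) * hsh

lemma hypCoeff_c_succ {a b c : ℚ} (hc : NonIntQ c) (m : ℕ) :
    hypCoeff a b (c + 1) m = hypCoeff a b c m * c / (c + m) := by
  unfold hypCoeff
  have hsh := poch_shift c m
  have hc0 := nonint_ne_zero hc
  have hpc := poch_ne_zero hc m
  have hpc1 := poch_ne_zero (nonint_add_one hc) m
  have hcm := nonint_add_nat hc m
  have h4 : (m.factorial : ℚ) ≠ 0 := by exact_mod_cast m.factorial_ne_zero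
  rw [div_mul_eq_mul_div, div_div, div_eq_div_iff (by exact mul_ne_zero hpc1 h4) (by exact mul_ne_zero (mul_ne_zero hpc h4) hcm)]
  linear_combination (-((ascPochhammer ℚ m).eval a * (ascPochhammer ℚ m).eval b * (m.factorial : ℚ))) * hsh

end HypAux

section Val

variable (p : ℕ) [hp : Fact p.Prime]

lemma val_nat_nonneg (m : ℕ) : 0 ≤ padicValRat p (m : ℚ) := by
  rw [padicValRat.of_nat]
  exact Int.natCast_nonneg _

lemma val_shift_ge (x : ℚ) (m : ℕ) :
    x + (m : ℚ) = 0 ∨ min (padicValRat p x) 0 ≤ padicValRat p (x + m) := by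
  by_cases h : x + (m : ℚ) = 0
  · exact Or.inl h
  right
  rcases eq_or_ne x 0 with hx | hx
  · subst hx
    simpa using (min_le_right (padicValRat p 0) 0).trans (val_nat_nonneg p m)
  rcases Nat.eq_zero_or_pos m with hm | hm
  · subst hm
    simpa using min_le_left (padicValRat p x) 0
  have hm' : (m : ℚ) ≠ 0 := by positivity
  calc min (padicValRat p x) 0 ≤ min (padicValRat p x) (padicValRat p m) :=
        min_le_min le_rfl (val_nat_nonneg p m)
    _ ≤ padicValRat p (x + m) := padicValRat.min_le_padicValRat_add h

lemma val_add_ge' {q r : ℚ} {C : ℤ} (hq : q = 0 ∨ C ≤ padicValRat p q)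
    (hr : r = 0 ∨ C ≤ padicValRat p r) : q + r = 0 ∨ C ≤ padicValRat p (q + r) := by
  by_cases h : q + r = 0
  · exact Or.inl h
  right
  rcases hq with hq | hq
  · rw [hq, zero_add] at h ⊢
    exact hr.resolve_left h
  rcases hr with hr | hr
  · rw [hr, add_zero] at h ⊢
    exact hq
  exact le_trans (le_min hq hr) (padicValRat.min_le_padicValRat_add h)

end Val

namespace HypAux

/-- `p`-adic boundedness of the coefficients. -/
def Bdd (p : ℕ) (a b c : ℚ) : Prop :=
  ∃ N : ℤ, ∀ m : ℕ, -N ≤ padicValRat p (hypCoeff a b c m)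

variable {p : ℕ} [hp : Fact p.Prime] {a b c : ℚ}

lemma bdd_a_up (ha : NonIntQ a) (hb : NonIntQ b) (hc : NonIntQ c) :
    Bdd p a b c → Bdd p (a + 1) b c := by
  rintro ⟨N, hN⟩
  refine ⟨N + padicValRat p a - min (padicValRat p a) 0, fun m => ?_⟩
  rw [hypCoeff_a_succ ha hc m,
    padicValRat.div (mul_ne_zero (hypCoeff_ne_zero ha hb hc m) (nonint_add_nat ha m))
      (nonint_ne_zero ha),
    padicValRat.mul (hypCoeff_ne_zero ha hb hc m) (nonint_add_nat ha m)]
  have h1 := hN m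
  have h2 : min (padicValRat p a) 0 ≤ padicValRat p (a + m) :=
    (val_shift_ge p a m).resolve_left (nonint_add_nat ha m)
  linarith

lemma bdd_c_down (ha : NonIntQ a) (hb : NonIntQ b) (hc : NonIntQ c) :
    Bdd p a b (c + 1) → Bdd p a b c := by
  rintro ⟨N, hN⟩
  refine ⟨N + padicValRat p c - min (padicValRat p c) 0, fun m => ?_⟩
  have e : hypCoeff a b c m = hypCoeff a b (c + 1) m * (c + m) / c := by
    rw [hypCoeff_c_succ hc m]
    field_simp [nonint_ne_zero hc, nonint_add_nat hc m]
  rw [e,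
    padicValRat.div (mul_ne_zero (hypCoeff_ne_zero ha hb (nonint_add_one hc) m)
      (nonint_add_nat hc m)) (nonint_ne_zero hc),
    padicValRat.mul (hypCoeff_ne_zero ha hb (nonint_add_one hc) m) (nonint_add_nat hc m)]
  have h1 := hN m
  have h2 : min (padicValRat p c) 0 ≤ padicValRat p (c + m) :=
    (val_shift_ge p c m).resolve_left (nonint_add_nat hc m)
  linarith

/-- contiguous relation for the down-shift in `a`. -/
lemma id_a_down (ha : NonIntQ a) (hb : NonIntQ b) (hc : NonIntQ c)
    (hca : c - a ≠ 0) (m : ℕ) :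
    hypCoeff (a - 1) b c (m + 1) =
      hypCoeff a b c (m + 1) + ((m : ℚ) + 1) / (c - a) * hypCoeff a b c (m + 1)
        + -((b + m) / (c - a) * hypCoeff a b c m) := by
  have ha1 : a - 1 ≠ 0 := nonint_ne_zero (nonint_sub_one ha)
  have ham : a + (m : ℚ) ≠ 0 := nonint_add_nat ha m
  have hcm : c + (m : ℚ) ≠ 0 := nonint_add_nat hc m
  have hm1 : (m : ℚ) + 1 ≠ 0 := by positivity
  have hbm : b + (m : ℚ) ≠ 0 := nonint_add_nat hb m
  have e0 : hypCoeff a b c (m + 1) * (a - 1) =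
      hypCoeff (a - 1) b c (m + 1) * (a + (m : ℚ)) := by
    have h := hypCoeff_a_succ (a := a - 1) (b := b) (c := c) (nonint_sub_one ha) hc (m + 1)
    rw [show a - 1 + 1 = a by ring] at h
    rw [h, div_mul_cancel₀ _ ha1]
    push_cast
    ring
  have e2 : hypCoeff a b c (m + 1) * ((c + m) * ((m : ℚ) + 1)) =
      hypCoeff a b c m * ((a + m) * (b + m)) := by
    rw [hypCoeff_succ ha hb hc m, div_mul_cancel₀]
    exact mul_ne_zero hcm hm1
  have B_expr : hypCoeff (a - 1) b c (m + 1) =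
      hypCoeff a b c (m + 1) * (a - 1) / (a + (m : ℚ)) :=
    (eq_div_iff ham).mpr e0.symm
  have Am_expr : hypCoeff a b c m =
      hypCoeff a b c (m + 1) * ((c + m) * ((m : ℚ) + 1)) / ((a + m) * (b + m)) :=
    (eq_div_iff (mul_ne_zero ham hbm)).mpr e2.symm
  rw [B_expr, Am_expr]
  field_simp
  ring

lemma bdd_a_down (ha : NonIntQ a) (hb : NonIntQ b) (hc : NonIntQ c)
    (hca : c - a ≠ 0) : Bdd p a b c → Bdd p (a - 1) b c := by
  rintro ⟨N, hN⟩
  have hN0 : 0 ≤ N := by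
    have := hN 0
    rw [hypCoeff_zero, padicValRat.one] at this
    linarith
  set d : ℤ := padicValRat p (c - a) with hd
  set e : ℤ := min (padicValRat p b) 0 with he
  refine ⟨N - min 0 (min (-d) (e - d)), fun m => ?_⟩
  rw [neg_sub]
  match m with
  | 0 =>
    rw [hypCoeff_zero, padicValRat.one]
    have : min 0 (min (-d) (e - d)) ≤ 0 := min_le_left _ _
    linarith
  | Nat.succ m =>
    set C : ℤ := min 0 (min (-d) (e - d)) - N with hC
    have goal' : C ≤ padicValRat p (hypCoeff (a - 1) b c (m + 1)) := by
      rw [id_a_down ha hb hc hca m]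
      have hA1 := hypCoeff_ne_zero ha hb hc (m + 1)
      have hAm := hypCoeff_ne_zero ha hb hc m
      have hm1 : (m : ℚ) + 1 ≠ 0 := by positivity
      have hbm : b + (m : ℚ) ≠ 0 := nonint_add_nat hb m
      -- term 1
      have t1 : C ≤ padicValRat p (hypCoeff a b c (m + 1)) := by
        have := hN (m + 1)
        have : min 0 (min (-d) (e - d)) ≤ 0 := min_le_left _ _
        have := hN (m + 1)
        rw [hC]
        linarith [hN (m + 1), (min_le_left (0:ℤ) (min (-d) (e - d)))]
      -- term 2
      have t2 : C ≤ padicValRat p (((m : ℚ) + 1) / (c - a) * hypCoeff a b c (m + 1)) := by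
        rw [padicValRat.mul (div_ne_zero hm1 hca) hA1, padicValRat.div hm1 hca]
        have hv1 : (0 : ℤ) ≤ padicValRat p ((m : ℚ) + 1) := by
          have := val_nat_nonneg p (m + 1)
          push_cast at this
          exact this
        have hmin : min 0 (min (-d) (e - d)) ≤ -d :=
          le_trans (min_le_right _ _) (min_le_left _ _)
        rw [hC]
        linarith [hN (m + 1)]
      -- term 3
      have t3 : C ≤ padicValRat p (-((b + m) / (c - a) * hypCoeff a b c m)) := by
        rw [padicValRat.neg, padicValRat.mul (div_ne_zero hbm hca) hAm,
          padicValRat.div hbm hca]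
        have hvb : e ≤ padicValRat p (b + m) := by
          rw [he]
          exact (val_shift_ge p b m).resolve_left hbm
        have hmin : min 0 (min (-d) (e - d)) ≤ e - d :=
          le_trans (min_le_right _ _) (min_le_right _ _)
        rw [hC]
        linarith [hN m]
      have h12 := val_add_ge' p (Or.inr t1) (Or.inr t2)
      have h123 := val_add_ge' p h12 (Or.inr t3)
      refine h123.resolve_left ?_
      rw [← id_a_down ha hb hc hca m]
      exact hypCoeff_ne_zero (nonint_sub_one ha) hb hc (m + 1)
    exact goal'

end HypAux

namespace HypAux

variable {p : ℕ} [hp : Fact p.Prime] {a b c : ℚ}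

/-- contiguous relation for the up-shift in `c`. -/
lemma id_c_up (ha : NonIntQ a) (hb : NonIntQ b) (hc : NonIntQ c)
    (hca : c - a ≠ 0) (hcb : c - b ≠ 0) (m : ℕ) :
    hypCoeff a b (c + 1) m =
      c / ((c - a) * (c - b)) * (((m : ℚ) + 1) * hypCoeff a b c (m + 1))
        + -(c / ((c - a) * (c - b)) * ((a + b - c + m) * hypCoeff a b c m)) := by
  rw [hypCoeff_c_succ hc m, hypCoeff_succ ha hb hc m]
  have hc0 := nonint_ne_zero hc
  have hcm := nonint_add_nat hc m
  have hm1 : (m : ℚ) + 1 ≠ 0 := by positivity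
  field_simp
  ring

lemma bdd_c_up (ha : NonIntQ a) (hb : NonIntQ b) (hc : NonIntQ c)
    (hca : c - a ≠ 0) (hcb : c - b ≠ 0) : Bdd p a b c → Bdd p a b (c + 1) := by
  rintro ⟨N, hN⟩
  set K : ℚ := c / ((c - a) * (c - b)) with hK
  have hK0 : K ≠ 0 := div_ne_zero (nonint_ne_zero hc) (mul_ne_zero hca hcb)
  set k : ℤ := padicValRat p K with hk
  set E : ℤ := min (padicValRat p (a + b - c)) 0 with hE
  have hE0 : E ≤ 0 := min_le_right _ _
  refine ⟨N - k - E, fun m => ?_⟩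
  have hgoal : k + E - N ≤ padicValRat p (hypCoeff a b (c + 1) m) := by
    rw [id_c_up ha hb hc hca hcb m]
    have hA1 := hypCoeff_ne_zero ha hb hc (m + 1)
    have hAm := hypCoeff_ne_zero ha hb hc m
    have hm1 : (m : ℚ) + 1 ≠ 0 := by positivity
    have t1 : k + E - N ≤ padicValRat p (K * (((m : ℚ) + 1) * hypCoeff a b c (m + 1))) := by
      rw [padicValRat.mul hK0 (mul_ne_zero hm1 hA1), padicValRat.mul hm1 hA1]
      have hv1 : (0 : ℤ) ≤ padicValRat p ((m : ℚ) + 1) := by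
        have := val_nat_nonneg p (m + 1)
        push_cast at this
        exact this
      linarith [hN (m + 1)]
    have t2 : -(K * ((a + b - c + m) * hypCoeff a b c m)) = 0 ∨
        k + E - N ≤ padicValRat p (-(K * ((a + b - c + m) * hypCoeff a b c m))) := by
      by_cases hx : a + b - c + (m : ℚ) = 0
      · left
        rw [hx]
        ring
      · right
        have hge : E ≤ padicValRat p (a + b - c + m) := (val_shift_ge p (a + b - c) m).resolve_left hx
        rw [padicValRat.neg, padicValRat.mul hK0 (mul_ne_zero hx hAm),
          padicValRat.mul hx hAm]
        linarith [hN m]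
    have h12 := val_add_ge' p (Or.inr t1) t2
    refine h12.resolve_left ?_
    rw [← id_c_up ha hb hc hca hcb m]
    exact hypCoeff_ne_zero ha hb (nonint_add_one hc) m
  linarith [hgoal]

lemma hypCoeff_comm (a b c : ℚ) (m : ℕ) : hypCoeff a b c m = hypCoeff b a c m := by
  unfold hypCoeff
  rw [mul_comm ((ascPochhammer ℚ m).eval a)]

lemma bdd_comm : Bdd p a b c ↔ Bdd p b a c :=
  exists_congr fun N => forall_congr' fun m => by rw [hypCoeff_comm]

lemma step_a (ha : NonIntQ a) (hb : NonIntQ b) (hc : NonIntQ c)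
    (hac : NonIntQ (a - c)) : Bdd p a b c ↔ Bdd p (a + 1) b c := by
  constructor
  · exact bdd_a_up ha hb hc
  · intro h
    have hca : c - (a + 1) ≠ 0 := by
      intro h0
      have h1 : NonIntQ (a - c + (1 : ℤ)) := nonint_add_int hac 1
      exact nonint_ne_zero (by simpa using h1) (by linarith)
    have := bdd_a_down (nonint_add_one ha) hb hc hca h
    rwa [add_sub_cancel_right] at this

lemma step_c (ha : NonIntQ a) (hb : NonIntQ b) (hc : NonIntQ c)
    (hac : NonIntQ (a - c)) (hbc : NonIntQ (b - c)) :
    Bdd p a b c ↔ Bdd p a b (c + 1) := by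
  constructor
  · refine bdd_c_up ha hb hc ?_ ?_
    · intro h0
      exact nonint_ne_zero hac (by linarith)
    · intro h0
      exact nonint_ne_zero hbc (by linarith)
  · exact bdd_c_down ha hb hc

lemma nonint_shift {x y : ℚ} (h : NonIntQ x) (z : ℤ) (hy : y = x + (z : ℚ)) :
    NonIntQ y := by
  rw [hy]
  exact nonint_add_int h z

lemma bdd_shift_a (ha : NonIntQ a) (hb : NonIntQ b) (hc : NonIntQ c)
    (hac : NonIntQ (a - c)) (z : ℤ) : Bdd p a b c ↔ Bdd p (a + (z : ℚ)) b c := by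
  induction z using Int.induction_on with
  | zero => simp
  | succ k ih =>
    have hstep := step_a (p := p) (b := b) (nonint_add_int ha (k : ℤ)) hb hc
      (nonint_shift hac (k : ℤ) (by push_cast; ring))
    rw [show (a + ((k : ℤ) : ℚ)) + 1 = a + (((k : ℤ) + 1 : ℤ) : ℚ) by push_cast; ring] at hstep
    exact ih.trans hstep
  | pred k ih =>
    have hstep := step_a (p := p) (b := b) (a := a + ((-(k : ℤ) - 1 : ℤ) : ℚ))
      (nonint_add_int ha _) hb hc (nonint_shift hac (-(k : ℤ) - 1) (by push_cast; ring))
    rw [show (a + ((-(k : ℤ) - 1 : ℤ) : ℚ)) + 1 = a + ((-(k : ℤ) : ℤ) : ℚ) by push_cast; ring]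
      at hstep
    exact ih.trans hstep.symm

lemma bdd_shift_b (ha : NonIntQ a) (hb : NonIntQ b) (hc : NonIntQ c)
    (hbc : NonIntQ (b - c)) (z : ℤ) : Bdd p a b c ↔ Bdd p a (b + (z : ℚ)) c := by
  rw [bdd_comm (a := a)]
  rw [bdd_comm (a := a)]
  exact bdd_shift_a hb ha hc hbc z

lemma bdd_shift_c (ha : NonIntQ a) (hb : NonIntQ b) (hc : NonIntQ c)
    (hac : NonIntQ (a - c)) (hbc : NonIntQ (b - c)) (z : ℤ) :
    Bdd p a b c ↔ Bdd p a b (c + (z : ℚ)) := by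
  induction z using Int.induction_on with
  | zero => simp
  | succ k ih =>
    have hstep := step_c (p := p) ha hb (nonint_add_int hc (k : ℤ))
      (nonint_shift hac (-(k : ℤ)) (by push_cast; ring))
      (nonint_shift hbc (-(k : ℤ)) (by push_cast; ring))
    rw [show (c + ((k : ℤ) : ℚ)) + 1 = c + (((k : ℤ) + 1 : ℤ) : ℚ) by push_cast; ring] at hstep
    exact ih.trans hstep
  | pred k ih =>
    have hstep := step_c (p := p) ha hb (c := c + ((-(k : ℤ) - 1 : ℤ) : ℚ))
      (nonint_add_int hc _)
      (nonint_shift hac (-(-(k : ℤ) - 1)) (by push_cast; ring))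
      (nonint_shift hbc (-(-(k : ℤ) - 1)) (by push_cast; ring))
    rw [show (c + ((-(k : ℤ) - 1 : ℤ) : ℚ)) + 1 = c + ((-(k : ℤ) : ℤ) : ℚ) by push_cast; ring]
      at hstep
    exact ih.trans hstep.symm

end HypAux

namespace HypAux

lemma unbounded_iff_not_bdd (p : ℕ) (a b c : ℚ) :
    UnboundedAt p a b c ↔ ¬ Bdd p a b c := by
  constructor
  · rintro h ⟨N, hN⟩
    obtain ⟨m, hm⟩ := h N.toNat
    have h1 := hN m
    have h2 : N ≤ (N.toNat : ℤ) := Int.self_le_toNat N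
    linarith
  · intro h N
    by_contra hno
    push_neg at hno
    exact h ⟨(N : ℤ), fun m => hno m⟩

end HypAux

/-- Integer shifts of hypergeometric parameters do not affect `p`-adic
(un)boundedness of coefficients: if none of `a, b, c, a−c, b−c` is an integer and
`a−r, b−s, c−t` are integers, then for every prime `p`, `₂F₁(a,b;c;z)` has
`p`-adically unbounded coefficients iff `₂F₁(r,s;t;z)` does. -/
theorem stmt_11 (a b c r s t : ℚ)
    (ha : ∀ z : ℤ, a ≠ (z : ℚ)) (hb : ∀ z : ℤ, b ≠ (z : ℚ))
    (hc : ∀ z : ℤ, c ≠ (z : ℚ))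
    (hac : ∀ z : ℤ, a - c ≠ (z : ℚ)) (hbc : ∀ z : ℤ, b - c ≠ (z : ℚ))
    (har : ∃ z : ℤ, a - r = (z : ℚ)) (hbs : ∃ z : ℤ, b - s = (z : ℚ))
    (hct : ∃ z : ℤ, c - t = (z : ℚ))
    (p : ℕ) (hp : p.Prime) :
    UnboundedAt p a b c ↔ UnboundedAt p r s t := by
  haveI : Fact p.Prime := ⟨hp⟩
  obtain ⟨z1, hz1⟩ := har
  obtain ⟨z2, hz2⟩ := hbs
  obtain ⟨z3, hz3⟩ := hct
  have hr : r = a + ((-z1 : ℤ) : ℚ) := by push_cast; linarith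
  have hs : s = b + ((-z2 : ℤ) : ℚ) := by push_cast; linarith
  have ht : t = c + ((-z3 : ℤ) : ℚ) := by push_cast; linarith
  have ha' : NonIntQ a := ha
  have hb' : NonIntQ b := hb
  have hc' : NonIntQ c := hc
  have hac' : NonIntQ (a - c) := hac
  have hbc' : NonIntQ (b - c) := hbc
  have hr' : NonIntQ r := HypAux.nonint_shift ha' _ hr
  have hs' : NonIntQ s := HypAux.nonint_shift hb' _ hs
  have hrc : NonIntQ (r - c) := HypAux.nonint_shift hac' (-z1) (by rw [hr]; push_cast; ring)
  have hsc : NonIntQ (s - c) := HypAux.nonint_shift hbc' (-z2) (by rw [hs]; push_cast; ring)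
  have h1 : HypAux.Bdd p a b c ↔ HypAux.Bdd p r b c := by
    rw [hr]
    exact HypAux.bdd_shift_a ha' hb' hc' hac' (-z1)
  have h2 : HypAux.Bdd p r b c ↔ HypAux.Bdd p r s c := by
    rw [hs]
    exact HypAux.bdd_shift_b hr' hb' hc' hbc' (-z2)
  have h3 : HypAux.Bdd p r s c ↔ HypAux.Bdd p r s t := by
    rw [ht]
    exact HypAux.bdd_shift_c hr' hs' hc' hrc hsc (-z3)
  rw [HypAux.unbounded_iff_not_bdd, HypAux.unbounded_iff_not_bdd]
  exact not_congr ((h1.trans h2).trans h3)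
end

section
/- Let p be a prime and let x be a nonzero rational number with v_p(x) = 0. Then there exist an integer M ≥ 1 and an integer y with 1 ≤ y ≤ p^M − 1 such that x = y/(1 − p^M) if and only if −1 ≤ x < 0. (The left-hand condition expresses that x has a purely periodic p-adic expansion.) -/
/-- A nonzero rational `x` with `v_p(x) = 0` has a purely periodic `p`-adic
expansion — i.e. `x = y/(1 − p^M)` for some `M ≥ 1` and integer
`1 ≤ y ≤ p^M − 1` — if and only if `−1 ≤ x < 0`. -/
theorem stmt_12 (p : ℕ) (hp : p.Prime) (x : ℚ) (hx : x ≠ 0)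
    (hv : padicValRat p x = 0) :
    (∃ M : ℕ, 1 ≤ M ∧ ∃ y : ℤ, 1 ≤ y ∧ y ≤ (p : ℤ) ^ M - 1 ∧
      x = (y : ℚ) / (1 - (p : ℚ) ^ M)) ↔ (-1 ≤ x ∧ x < 0) := by
  have hp2 : (2 : ℕ) ≤ p := hp.two_le
  have hppow : ∀ M : ℕ, 1 ≤ M → (2 : ℚ) ≤ (p : ℚ) ^ M := by
    intro M hM
    calc (2:ℚ) = 2 ^ 1 := by norm_num
    _ ≤ (p : ℚ) ^ 1 := by norm_num; exact_mod_cast hp2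
    _ ≤ (p : ℚ) ^ M := pow_le_pow_right₀ (by exact_mod_cast hp.one_le) hM
  constructor
  · rintro ⟨M, hM, y, hy1, hy2, hxy⟩
    have hpM := hppow M hM
    have hneg : (1 : ℚ) - (p : ℚ) ^ M < 0 := by linarith
    have hy1' : (1 : ℚ) ≤ (y : ℚ) := by exact_mod_cast hy1
    have hy2' : (y : ℚ) ≤ (p : ℚ) ^ M - 1 := by exact_mod_cast hy2
    subst hxy
    constructor
    · rw [le_div_iff_of_neg hneg]; linarith
    · rw [div_neg_iff]; left; exact ⟨by linarith, hneg⟩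
  · rintro ⟨hge, hlt⟩
    have hbpos : 0 < x.den := x.pos
    have hcop : Nat.Coprime p x.den := by
      rw [hp.coprime_iff_not_dvd]
      intro hdvd
      have hna : ¬ p ∣ x.num.natAbs := by
        intro h
        have h1 := Nat.dvd_gcd h hdvd
        rw [x.reduced] at h1
        exact hp.one_lt.ne' (Nat.dvd_one.mp h1)
      have hva : padicValInt p x.num = 0 :=
        padicValInt.eq_zero_of_not_dvd (by rwa [Int.natCast_dvd])
      have hvb : 1 ≤ padicValNat p x.den :=
        haveI : Fact p.Prime := ⟨hp⟩
        one_le_padicValNat_of_dvd hbpos.ne' hdvd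
      rw [padicValRat_def, hva] at hv
      omega
    set M := Nat.totient x.den with hM
    have hM1 : 1 ≤ M := Nat.totient_pos.mpr hbpos
    have heuler : p ^ M ≡ 1 [MOD x.den] := Nat.ModEq.pow_totient hcop
    have hdvd : ((x.den : ℤ)) ∣ (p : ℤ) ^ M - 1 := by
      have h' : ((x.den : ℤ)) ∣ ((1 : ℤ) - (p : ℤ) ^ M) := by
        exact_mod_cast (Nat.modEq_iff_dvd).mp heuler
      have := dvd_neg.mpr h'
      rwa [neg_sub] at this
    obtain ⟨q, hq⟩ := hdvd
    have hpM2 : (2 : ℤ) ≤ (p : ℤ) ^ M := by exact_mod_cast hppow M hM1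
    have hbz : (0 : ℤ) < (x.den : ℤ) := by exact_mod_cast hbpos
    have hqpos : 1 ≤ q := by nlinarith
    have haneg : x.num < 0 := Rat.num_neg.mpr hlt
    have hab : -x.num ≤ (x.den : ℤ) := by
      have hx' : (-1 : ℚ) ≤ (x.num : ℚ) / (x.den : ℚ) := by
        rwa [Rat.num_div_den]
      have hb0 : (0:ℚ) < (x.den:ℚ) := by exact_mod_cast hbpos
      rw [le_div_iff₀ hb0] at hx'
      have : -((x.den:ℚ)) ≤ (x.num:ℚ) := by linarith
      exact_mod_cast (by linarith : -(x.num:ℚ) ≤ (x.den:ℚ))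
    refine ⟨M, hM1, (-x.num) * q, ?_, ?_, ?_⟩
    · nlinarith
    · calc (-x.num) * q ≤ (x.den : ℤ) * q := by nlinarith
        _ = (p:ℤ)^M - 1 := hq.symm
    · have hbne : ((x.den:ℚ)) ≠ 0 := by positivity
      have hne : (1 : ℚ) - (p : ℚ) ^ M ≠ 0 := by have := hppow M hM1; linarith
      have hqQ : ((p:ℚ))^M - 1 = (x.den:ℚ) * (q:ℚ) := by exact_mod_cast hq
      have hxd : x * (x.den : ℚ) = (x.num : ℚ) := by
        have h := div_mul_cancel₀ (x.num:ℚ) hbne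
        rwa [Rat.num_div_den x] at h
      rw [eq_div_iff hne]
      push_cast
      have h1 : (1:ℚ) - (p:ℚ)^M = -((x.den:ℚ) * (q:ℚ)) := by linarith
      rw [h1, mul_neg, ← mul_assoc, hxd]
      ring
end

section
/- Let p be a prime and let n, d be coprime integers with d ≥ 1, p ∤ n, p ∤ d and −1 ≤ n/d < 0. Then the least integer M ≥ 1 for which there exists an integer y with 1 ≤ y ≤ p^M − 1 and n/d = y/(1 − p^M) is equal to the multiplicative order of p in (ℤ/dℤ)^×. (This M is the minimal period of the purely periodic p-adic expansion of n/d.) -/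
set_option maxHeartbeats 1000000


/-- For coprime integers `n, d` with `d ≥ 1`, `p ∤ n`, `p ∤ d` and
`−1 ≤ n/d < 0`, the minimal period of the purely periodic `p`-adic expansion of
`n/d` — i.e. the least `M ≥ 1` for which `n/d = y/(1 − p^M)` with
`1 ≤ y ≤ p^M − 1` — equals the multiplicative order of `p` in `(ℤ/dℤ)^×`. -/
theorem stmt_13 (p : ℕ) (hp : p.Prime) (n : ℤ) (d : ℕ) (hd : 1 ≤ d)
    (hcop : Int.gcd n (d : ℤ) = 1) (hpn : ¬ (p : ℤ) ∣ n) (hpd : ¬ p ∣ d)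
    (hx1 : -1 ≤ (n : ℚ) / (d : ℚ)) (hx2 : (n : ℚ) / (d : ℚ) < 0) :
    IsLeast {M : ℕ | 1 ≤ M ∧ ∃ y : ℤ, 1 ≤ y ∧ y ≤ (p : ℤ) ^ M - 1 ∧
        (n : ℚ) / (d : ℚ) = (y : ℚ) / (1 - (p : ℚ) ^ M)}
      (orderOf (p : ZMod d)) := by
  haveI : NeZero d := ⟨by omega⟩
  have hdQ : (0 : ℚ) < (d : ℚ) := by exact_mod_cast (by omega : 0 < d)
  have hnneg : n < 0 := by
    by_contra h
    push_neg at h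
    have : (0 : ℚ) ≤ (n : ℚ) / (d : ℚ) :=
      div_nonneg (by exact_mod_cast h) hdQ.le
    linarith
  have hnd : -(d : ℤ) ≤ n := by
    have h1 : (-1 : ℚ) * (d : ℚ) ≤ (n : ℚ) := (le_div_iff₀ hdQ).mp hx1
    have h2 : (-(d : ℚ)) ≤ (n : ℚ) := by linarith
    exact_mod_cast h2
  have hp2 : 2 ≤ p := hp.two_le
  -- key equivalence : (p : ZMod d)^M = 1 ↔ (d:ℤ) ∣ p^M - 1
  have key : ∀ M : ℕ, ((p : ZMod d) ^ M = 1) ↔ (d : ℤ) ∣ (p : ℤ) ^ M - 1 := by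
    intro M
    rw [← ZMod.intCast_zmod_eq_zero_iff_dvd]
    push_cast
    constructor
    · intro h; rw [h]; ring
    · intro h
      have : ((p : ZMod d)) ^ M - 1 = 0 := by linear_combination h
      linear_combination this
  have hu : IsUnit (p : ZMod d) := (ZMod.isUnit_prime_iff_not_dvd hp).mpr hpd
  obtain ⟨u, hu⟩ := hu
  have hM₀pos : 0 < orderOf (p : ZMod d) := by
    rw [← hu, orderOf_units]
    exact orderOf_pos u
  set M₀ := orderOf (p : ZMod d) with hM₀
  constructor
  · -- membership
    refine ⟨hM₀pos, ?_⟩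
    have hdvd : (d : ℤ) ∣ (p : ℤ) ^ M₀ - 1 := (key M₀).mp (pow_orderOf_eq_one _)
    obtain ⟨k, hk⟩ := hdvd
    have hpM : 2 ≤ (p : ℤ) ^ M₀ := by
      calc (2:ℤ) ≤ (p:ℤ) := by exact_mod_cast hp2
      _ ≤ (p:ℤ)^M₀ := le_self_pow₀ (by exact_mod_cast hp.one_le) (by omega)
    have hkpos : 1 ≤ k := by nlinarith [show (1:ℤ) ≤ (d:ℤ) from by exact_mod_cast hd]
    refine ⟨(-n) * k, ?_, ?_, ?_⟩
    · nlinarith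
    · nlinarith [show (1:ℤ) ≤ (d:ℤ) from by exact_mod_cast hd]
    · have hne : (1 : ℚ) - (p : ℚ) ^ M₀ ≠ 0 := by
        have : (2:ℚ) ≤ (p:ℚ)^M₀ := by exact_mod_cast hpM
        linarith
      rw [div_eq_div_iff hdQ.ne' hne]
      have hkQ : (d : ℚ) * (k : ℚ) = (p : ℚ) ^ M₀ - 1 := by
        have := congrArg (fun z : ℤ => (z : ℚ)) hk
        push_cast at this
        linarith
      push_cast
      linear_combination (n : ℚ) * hkQ
  · -- lower bound
    rintro M ⟨hM1, y, hy1, hy2, hEq⟩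
    have hpM : 2 ≤ (p : ℤ) ^ M := by
      calc (2:ℤ) ≤ (p:ℤ) := by exact_mod_cast hp2
      _ ≤ (p:ℤ)^M := le_self_pow₀ (by exact_mod_cast hp.one_le) (by omega)
    have hne : (1 : ℚ) - (p : ℚ) ^ M ≠ 0 := by
      have : (2:ℚ) ≤ (p:ℚ)^M := by exact_mod_cast hpM
      linarith
    rw [div_eq_div_iff hdQ.ne' hne] at hEq
    have hZ : n * (1 - (p : ℤ) ^ M) = y * d := by
      have : ((n * (1 - (p : ℤ) ^ M) : ℤ) : ℚ) = ((y * d : ℤ) : ℚ) := by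
        push_cast; linarith [hEq]
      exact_mod_cast this
    have hdvd : (d : ℤ) ∣ ((p : ℤ) ^ M - 1) * n := by
      refine ⟨-y, ?_⟩
      linarith [hZ, mul_comm ((p:ℤ)^M - 1) n]
    have hdvd' : (d : ℤ) ∣ (p : ℤ) ^ M - 1 :=
      Int.dvd_of_dvd_mul_left_of_gcd_one hdvd (by rwa [Int.gcd_comm] at hcop)
    have : (p : ZMod d) ^ M = 1 := (key M).mpr hdvd'
    exact Nat.le_of_dvd (by omega) (orderOf_dvd_of_pow_eq_one this)
end

section
/- Let x = n/d be a rational number with n, d coprime integers and 0 < x < 1, and let p be a prime with v_p(x − 1) = 0 (equivalently, p ∤ d and p ∤ (n − d)). Let M be the multiplicative order of p modulo d. Then for each index j with 0 ≤ j < M, the j-th p-adic digit of x − 1, namely (τ_{j+1}(x−1) − τ_j(x−1))/p^j, equals ⌊{−p^{M−1−j}·x}·p⌋, where {·} denotes the fractional part and ⌊·⌋ the floor. -/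
open scoped BigOperators

lemma digit_div_aux (p P Q a' b c L : ℤ)
    (hp : 2 ≤ p) (hP : 1 ≤ P) (hQ : 1 ≤ Q)
    (ha'0 : 0 ≤ a') (ha'P : a' ≤ P - 1)
    (hc0 : 0 ≤ c) (hcp : c ≤ p - 1)
    (hb0 : 0 ≤ b) (hbQ : b ≤ Q - 1)
    (hL : L = (p * a' + c) * Q + b)
    (hLD : L < p * P * Q - 1) :
    (P * L) / (p * P * Q - 1) = a' ∧ (p * (P * L)) / (p * P * Q - 1) = p * a' + c := by
  have hpP : (2:ℤ) ≤ p * P := by nlinarith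
  have hDpos : (0:ℤ) < p * P * Q - 1 := by nlinarith
  have hcase : a' ≤ P - 2 ∨ c ≤ p - 2 ∨ b ≤ Q - 2 := by
    by_contra h
    push_neg at h
    obtain ⟨h1, h2, h3⟩ := h
    have ha : a' = P - 1 := by omega
    have hc : c = p - 1 := by omega
    have hb : b = Q - 1 := by omega
    have : L = p * P * Q - 1 := by rw [hL, ha, hc, hb]; ring
    omega
  have hR1 : a' + c * (P * Q) + b * P < p * P * Q - 1 := by
    rcases hcase with h | h | h
    · nlinarith [mul_le_mul_of_nonneg_right hcp (by positivity : (0:ℤ) ≤ P * Q),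
        mul_le_mul_of_nonneg_right hbQ (by positivity : (0:ℤ) ≤ P)]
    · nlinarith [mul_le_mul_of_nonneg_right h (by positivity : (0:ℤ) ≤ P * Q),
        mul_le_mul_of_nonneg_right hbQ (by positivity : (0:ℤ) ≤ P)]
    · nlinarith [mul_le_mul_of_nonneg_right hcp (by positivity : (0:ℤ) ≤ P * Q),
        mul_le_mul_of_nonneg_right h (by positivity : (0:ℤ) ≤ P)]
  have hR2 : p * a' + c + b * (p * P) < p * P * Q - 1 := by
    rcases hcase with h | h | h
    · nlinarith [mul_le_mul_of_nonneg_left h (by positivity : (0:ℤ) ≤ p),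
        mul_le_mul_of_nonneg_right hbQ (by positivity : (0:ℤ) ≤ p * P)]
    · nlinarith [mul_le_mul_of_nonneg_left ha'P (by positivity : (0:ℤ) ≤ p),
        mul_le_mul_of_nonneg_right hbQ (by positivity : (0:ℤ) ≤ p * P)]
    · nlinarith [mul_le_mul_of_nonneg_left ha'P (by positivity : (0:ℤ) ≤ p),
        mul_le_mul_of_nonneg_right h (by positivity : (0:ℤ) ≤ p * P)]
  have hR10 : 0 ≤ a' + c * (P * Q) + b * P := by positivity
  have hR20 : 0 ≤ p * a' + c + b * (p * P) := by positivity
  constructor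
  · have hPL : P * L = (a' + c * (P * Q) + b * P) + a' * (p * P * Q - 1) := by
      rw [hL]; ring
    rw [hPL, Int.add_mul_ediv_right _ _ (ne_of_gt hDpos),
      Int.ediv_eq_zero_of_lt hR10 hR1, zero_add]
  · have hPL : p * (P * L) = (p * a' + c + b * (p * P)) + (p * a' + c) * (p * P * Q - 1) := by
      rw [hL]; ring
    rw [hPL, Int.add_mul_ediv_right _ _ (ne_of_gt hDpos),
      Int.ediv_eq_zero_of_lt hR20 hR2, zero_add]


set_option maxHeartbeats 1000000 in
/-- Digit formula: for `x = n/d ∈ (0,1)` in lowest terms, `p` a prime with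
`v_p(x − 1) = 0`, and `M` the multiplicative order of `p` mod `d`, the `j`-th
`p`-adic digit of `x − 1` equals `⌊{−p^{M−1−j}·x}·p⌋` for `0 ≤ j < M`. -/
theorem stmt_14 (p : ℕ) (hp : p.Prime) (n : ℤ) (d : ℕ)
    (hcop : Int.gcd n (d : ℤ) = 1) (x : ℚ) (hx : x = (n : ℚ) / (d : ℚ))
    (h0 : 0 < x) (h1 : x < 1)
    (hv : padicValRat p (x - 1) = 0)
    (M : ℕ) (hM : M = orderOf (p : ZMod d))
    (τ : ℕ → ℤ) (hτ : IsTrunc p (x - 1) τ) :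
    ∀ j : ℕ, j < M →
      (τ (j + 1) - τ j) / (p : ℤ) ^ j =
        ⌊Int.fract (-(p : ℚ) ^ (M - 1 - j) * x) * (p : ℚ)⌋ := by
  intro j hj
  haveI : Fact p.Prime := ⟨hp⟩
  have hp2 : (2:ℤ) ≤ (p:ℤ) := by exact_mod_cast hp.two_le
  have hM1 : 1 ≤ M := by omega
  -- d is positive
  have hdQ : (d:ℚ) ≠ 0 := by
    intro h
    rw [hx, h, div_zero] at h0
    exact lt_irrefl 0 h0
  have hdnat : d ≠ 0 := by
    intro h
    exact hdQ (by rw [h]; norm_num)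
  have hd1 : 1 ≤ (d:ℤ) := by exact_mod_cast Nat.one_le_iff_ne_zero.mpr hdnat
  -- d divides p^M - 1
  have hdvd : (d:ℤ) ∣ (p:ℤ)^M - 1 := by
    have h1 : ((p : ZMod d))^M = 1 := by rw [hM]; exact pow_orderOf_eq_one _
    have h2 : (((p:ℤ)^M - 1 : ℤ) : ZMod d) = 0 := by push_cast [h1]; ring
    exact (ZMod.intCast_zmod_eq_zero_iff_dvd _ _).mp h2
  obtain ⟨q, hq⟩ := hdvd
  have h2M : (2:ℤ) ≤ (p:ℤ)^M := by
    calc (2:ℤ) = 2^1 := by norm_num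
    _ ≤ 2^M := pow_le_pow_right₀ (by norm_num) hM1
    _ ≤ (p:ℤ)^M := pow_le_pow_left₀ (by norm_num) hp2 M
  have hDpos : (0:ℤ) < (p:ℤ)^M - 1 := by omega
  have hq1 : 1 ≤ q := by nlinarith
  -- basic bounds on n
  have hdpos : (0:ℚ) < (d:ℚ) := lt_of_le_of_ne (by positivity) (Ne.symm hdQ)
  have hn0 : 0 < n := by
    have : (0:ℚ) < (n:ℚ) := by
      by_contra h
      push_neg at h
      rw [hx] at h0
      nlinarith [div_nonpos_of_nonpos_of_nonneg h (le_of_lt hdpos)]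
    exact_mod_cast this
  have hnd : n < d := by
    have : (n:ℚ) < (d:ℚ) := by
      rw [hx] at h1
      exact (div_lt_one hdpos).mp h1
    exact_mod_cast this
  set L : ℤ := ((d:ℤ) - n) * q with hLdef
  have hL0 : 0 < L := mul_pos (by omega) (by omega)
  have hLD : L < (p:ℤ)^M - 1 := by
    have h' : L ≤ ((d:ℤ) - 1) * q := mul_le_mul_of_nonneg_right (by omega) (by omega)
    nlinarith
  have hDQ : (((p:ℤ)^M - 1 : ℤ) : ℚ) ≠ 0 := Int.cast_ne_zero.mpr (ne_of_gt hDpos)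
  have hcastD : (((p:ℤ)^M - 1 : ℤ) : ℚ) = (p:ℚ)^M - 1 := by push_cast; ring
  have hDQ' : (p:ℚ)^M - 1 ≠ 0 := by rw [← hcastD]; exact hDQ
  have hqQ : (q:ℚ) ≠ 0 := Int.cast_ne_zero.mpr (by omega)
  -- key expression for x - 1
  have hcastdq : (((p:ℤ)^M - 1 : ℤ) : ℚ) = (d:ℚ) * (q:ℚ) := by rw [hq]; push_cast; ring
  have key : x - 1 = -(L:ℚ) / (((p:ℤ)^M - 1 : ℤ) : ℚ) := by
    rw [hx, hLdef, hcastdq]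
    push_cast
    field_simp
    ring
  -- p does not divide p^M - 1
  have hpD : ¬ ((p:ℤ) ∣ (p:ℤ)^M - 1) := by
    intro h
    have h2 : (p:ℤ) ∣ (p:ℤ)^M := dvd_pow_self _ (by omega)
    have h3 : (p:ℤ) ∣ 1 := by
      have h4 := dvd_sub h2 h
      rwa [sub_sub_cancel] at h4
    have := Int.le_of_dvd one_pos h3
    omega
  -- identification of the truncations
  have htau : ∀ i, i ≤ M → τ i = L % (p:ℤ)^i := by
    intro i hiM
    have hppow : (0:ℤ) < (p:ℤ)^i := by positivity
    set t := L % (p:ℤ)^i with htdef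
    have ht0 : 0 ≤ t := Int.emod_nonneg _ (ne_of_gt hppow)
    have htlt : t < (p:ℤ)^i := Int.emod_lt_of_pos _ hppow
    set N : ℤ := -L - t * ((p:ℤ)^M - 1) with hNdef
    have hNneg : N < 0 := by
      have h' : 0 ≤ t * ((p:ℤ)^M - 1) := mul_nonneg ht0 (le_of_lt hDpos)
      rw [hNdef]
      linarith
    have hNdvd : (p:ℤ)^i ∣ N := by
      have h1 : (p:ℤ)^i ∣ L - t := Int.dvd_self_sub_of_emod_eq rfl
      have h2 : (p:ℤ)^i ∣ (p:ℤ)^M := pow_dvd_pow _ hiM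
      have h3 : N = -(L - t) - t * (p:ℤ)^M := by rw [hNdef]; ring
      rw [h3]
      exact dvd_sub (dvd_neg.mpr h1) (h2.mul_left t)
    have hfrac : x - 1 - (t:ℚ) = (N:ℚ) / (((p:ℤ)^M - 1 : ℤ) : ℚ) := by
      rw [key, hNdef, hcastD]
      push_cast
      field_simp
    have hvN : (i:ℤ) ≤ padicValRat p (x - 1 - (t:ℚ)) := by
      rw [hfrac, padicValRat.div (p := p) (Int.cast_ne_zero.mpr (ne_of_lt hNneg)) hDQ]
      rw [padicValRat.of_int, padicValRat.of_int]
      have hD0 : padicValInt p ((p:ℤ)^M - 1) = 0 := padicValInt.eq_zero_of_not_dvd hpD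
      have hN0 : (i:ℤ) ≤ padicValInt p N := by
        rcases (padicValInt_dvd_iff i N).mp hNdvd with h | h
        · exact absurd h (ne_of_lt hNneg)
        · exact_mod_cast h
      omega
    obtain ⟨h1, h2, h3⟩ := hτ i
    have hx1 : x - 1 < 0 := by linarith
    rcases h3 with h3 | h3
    · exfalso
      have : (0:ℚ) ≤ (τ i : ℚ) := by exact_mod_cast h1
      rw [h3] at hx1
      linarith
    by_contra hne
    have hne' : τ i - t ≠ 0 := fun h => hne (by omega)
    have hsum : ((τ i - t : ℤ) : ℚ) = (x - 1 - (t:ℚ)) + -(x - 1 - (τ i : ℚ)) := by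
      push_cast
      ring
    have hval : (i:ℤ) ≤ padicValRat p ((τ i - t : ℤ) : ℚ) := by
      rw [hsum]
      refine le_trans (le_min hvN ?_) (padicValRat.min_le_padicValRat_add (p := p) ?_)
      · rw [padicValRat.neg]; exact h3
      · rw [← hsum]; exact Int.cast_ne_zero.mpr hne'
    rw [padicValRat.of_int] at hval
    have hdvd2 : (p:ℤ)^i ∣ (τ i - t) :=
      (padicValInt_dvd_iff i _).mpr (Or.inr (by exact_mod_cast hval))
    have := Int.eq_zero_of_abs_lt_dvd hdvd2 (by rw [abs_lt]; constructor <;> linarith)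
    exact hne' this
  -- set up digit variables
  set e : ℕ := M - 1 - j with hedef
  set Q : ℤ := (p:ℤ)^j with hQdef
  set P : ℤ := (p:ℤ)^e with hPdef
  have hQpos : (0:ℤ) < Q := by rw [hQdef]; positivity
  have hPpos : (0:ℤ) < P := by rw [hPdef]; positivity
  have hpow : (p:ℤ)^M = (p:ℤ) * P * Q := by
    rw [hPdef, hQdef, show M = 1 + e + j by omega, pow_add, pow_add, pow_one]
  set a : ℤ := L / Q with hadef
  set b : ℤ := L % Q with hbdef
  set c : ℤ := a % (p:ℤ) with hcdef
  set a' : ℤ := a / (p:ℤ) with ha'def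
  have hb0 : 0 ≤ b := Int.emod_nonneg _ (ne_of_gt hQpos)
  have hbQ : b < Q := Int.emod_lt_of_pos _ hQpos
  have ha0 : 0 ≤ a := Int.ediv_nonneg (le_of_lt hL0) (le_of_lt hQpos)
  have hc0 : 0 ≤ c := Int.emod_nonneg _ (by omega)
  have hcp : c < (p:ℤ) := Int.emod_lt_of_pos _ (by omega)
  have ha'0 : 0 ≤ a' := Int.ediv_nonneg ha0 (by omega)
  have ha'P : a' < P := by
    rw [ha'def, Int.ediv_lt_iff_lt_mul (by omega : (0:ℤ) < (p:ℤ)),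
      hadef, Int.ediv_lt_iff_lt_mul hQpos]
    nlinarith
  have hL_expand : L = ((p:ℤ) * a' + c) * Q + b := by
    have h1 := Int.mul_ediv_add_emod L Q
    have h2 := Int.mul_ediv_add_emod a (p:ℤ)
    calc L = Q * a + b := h1.symm
    _ = ((p:ℤ) * a' + c) * Q + b := by rw [show (p:ℤ) * a' + c = a from h2]; ring
  have hLD' : L < (p:ℤ) * P * Q - 1 := by rw [← hpow]; exact hLD
  obtain ⟨hdiv1, hdiv2⟩ := digit_div_aux (p:ℤ) P Q a' b c L hp2 (by omega) (by omega)
    ha'0 (by omega) hc0 (by omega) hb0 (by omega) hL_expand hLD'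
  -- compute the truncations
  have htj : τ j = b := htau j (le_of_lt hj)
  have htj1 : τ (j+1) = Q * c + b := by
    rw [htau (j+1) (by omega)]
    have hpows : (p:ℤ)^(j+1) = Q * (p:ℤ) := by rw [hQdef, pow_succ]
    have hLr : L = (Q * c + b) + (Q * (p:ℤ)) * a' := by
      rw [hL_expand]; ring
    rw [hpows, hLr, Int.add_mul_emod_self_left]
    refine Int.emod_eq_of_lt (add_nonneg (mul_nonneg (le_of_lt hQpos) hc0) hb0) ?_
    nlinarith [mul_le_mul_of_nonneg_left (show c ≤ (p:ℤ) - 1 by omega) (le_of_lt hQpos)]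
  -- LHS
  have hLHS : (τ (j + 1) - τ j) / Q = c := by
    rw [htj, htj1]
    have h' : Q * c + b - b = Q * c := by ring
    rw [h', Int.mul_ediv_cancel_left _ (ne_of_gt hQpos)]
  rw [hLHS]
  -- RHS
  have hxv : x = 1 - (L:ℚ) / (((p:ℤ)^M - 1 : ℤ) : ℚ) := by linear_combination key
  have hfr : Int.fract (-(p:ℚ) ^ e * x)
      = Int.fract (((P * L : ℤ) : ℚ) / (((p:ℤ)^M - 1 : ℤ) : ℚ)) := by
    rw [Int.fract_eq_fract]
    refine ⟨-(p:ℤ)^e, ?_⟩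
    rw [hxv, hPdef, hcastD]
    push_cast
    field_simp
    ring
  rw [hfr]
  set t : ℚ := ((P * L : ℤ) : ℚ) / (((p:ℤ)^M - 1 : ℤ) : ℚ) with htdef
  have hfloor : Int.fract t * (p:ℚ) = t * (p:ℚ) - ((⌊t⌋ * (p:ℤ) : ℤ) : ℚ) := by
    rw [← Int.self_sub_floor]
    push_cast
    ring
  rw [hfloor, Int.floor_sub_intCast]
  -- rewrite the two floors as integer divisions
  obtain ⟨Dn, hDn⟩ : ∃ Dn : ℕ, ((Dn:ℕ):ℤ) = (p:ℤ)^M - 1 := by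
    refine ⟨p^M - 1, ?_⟩
    have h1 : 1 ≤ p^M := Nat.one_le_pow _ _ hp.pos
    push_cast [Nat.cast_sub h1]
    ring
  have hcastDn : (((p:ℤ)^M - 1 : ℤ) : ℚ) = ((Dn:ℕ):ℚ) := by exact_mod_cast hDn.symm
  have hfl1 : ⌊t⌋ = a' := by
    rw [htdef, hcastDn, Rat.floor_intCast_div_natCast, hDn, hpow]
    exact hdiv1
  have hfl2 : ⌊t * (p:ℚ)⌋ = (p:ℤ) * a' + c := by
    have ht2 : t * (p:ℚ) = (((p:ℤ) * (P * L) : ℤ) : ℚ) / ((Dn:ℕ):ℚ) := by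
      rw [htdef, hcastDn]
      push_cast
      ring
    rw [ht2, Rat.floor_intCast_div_natCast, hDn, hpow]
    exact hdiv2
  rw [hfl1, hfl2]
  ring
end

section
/- Let x and y be rational numbers with 0 < x < y < 1, let D be the least common multiple of the denominators of x and y, and let p > D be a prime. Then for every j ≥ 0, the j-th p-adic digit of x − 1 is different from the j-th p-adic digit of y − 1. -/
open scoped BigOperators

lemma aux_c (p D : ℕ) (hp : p.Prime) (hD0 : 0 < D) (hDp : D < p)
    (z : ℚ) (hz0 : -1 < z) (hz1 : z < 0) (M : ℤ) (hM : (M : ℚ) = (D : ℚ) * z)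
    (τ : ℕ → ℤ) (hτ : IsTrunc p z τ) (j : ℕ) :
    ∃ c : ℤ, 0 < c ∧ c < (D : ℤ) ∧ (c : ℚ) * (p : ℚ) ^ j = (D : ℚ) * ((τ j : ℚ) - z) := by
  haveI : Fact p.Prime := ⟨hp⟩
  obtain ⟨h1, h2, h3⟩ := hτ j
  have hτ0 : (0 : ℚ) ≤ (τ j : ℚ) := by exact_mod_cast h1
  have hzτ : z ≠ (τ j : ℚ) := by intro h; rw [h] at hz1; linarith
  have hval : (j : ℤ) ≤ padicValRat p (z - τ j) := h3.resolve_left hzτ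
  set m : ℤ := D * τ j - M with hm
  have hmq : (m : ℚ) = (D : ℚ) * ((τ j : ℚ) - z) := by
    push_cast [hm, hM]; ring
  have hDq : (0:ℚ) < (D:ℚ) := by exact_mod_cast hD0
  have hpq : (0:ℚ) < (p:ℚ) := by exact_mod_cast hp.pos
  have hpj : (0:ℚ) < (p:ℚ)^j := pow_pos hpq j
  have hpos : (0:ℚ) < (τ j : ℚ) - z := by linarith
  have hm0 : (m : ℚ) ≠ 0 := by rw [hmq]; exact (mul_pos hDq hpos).ne'
  have hmne : m ≠ 0 := by exact_mod_cast hm0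
  have hvD : padicValRat p ((D:ℤ) : ℚ) = 0 := by
    rw [padicValRat.of_int]
    have : ¬ (p : ℤ) ∣ (D : ℤ) := by
      rw [Int.natCast_dvd_natCast]
      intro h
      exact absurd (Nat.le_of_dvd hD0 h) (not_le.mpr hDp)
    simp [padicValInt.eq_zero_of_not_dvd this]
  have hvsub : (j : ℤ) ≤ padicValRat p ((τ j : ℚ) - z) := by
    rw [show ((τ j : ℚ) - z) = -(z - (τ j : ℚ)) by ring, padicValRat.neg]
    exact hval
  have hvm : (j : ℤ) ≤ padicValRat p (m : ℚ) := by
    rw [hmq, padicValRat.mul (by exact_mod_cast hDq.ne') hpos.ne']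
    rw [show ((D:ℚ)) = ((D:ℤ):ℚ) by push_cast; ring, hvD]
    simpa using hvsub
  have hdvd : (p : ℤ) ^ j ∣ m := by
    rw [padicValInt_dvd_iff]
    right
    rw [padicValRat.of_int] at hvm
    exact_mod_cast hvm
  obtain ⟨c, hc⟩ := hdvd
  have hq : (c:ℚ) * (p:ℚ)^j = (m:ℚ) := by push_cast [hc]; ring
  refine ⟨c, ?_, ?_, by rw [hq, hmq]⟩
  · have : (0:ℚ) < (c:ℚ) * (p:ℚ)^j := by rw [hq, hmq]; exact mul_pos hDq hpos
    have : (0:ℚ) < (c:ℚ) := by nlinarith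
    exact_mod_cast this
  · have h2' : τ j + 1 ≤ (p:ℤ)^j := h2
    have hτle : (τ j : ℚ) + 1 ≤ (p:ℚ)^j := by exact_mod_cast h2'
    have hub : (τ j : ℚ) - z < (p:ℚ)^j := by linarith
    have hlt : (c:ℚ) * (p:ℚ)^j < (D:ℚ) * (p:ℚ)^j := by
      rw [hq, hmq]; nlinarith
    have : (c:ℚ) < (D:ℚ) := lt_of_mul_lt_mul_right hlt hpj.le
    exact_mod_cast this

lemma aux_M (D : ℕ) (x : ℚ) (hden : x.den ∣ D) :
    ∃ M : ℤ, (M : ℚ) = (D : ℚ) * (x - 1) := by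
  obtain ⟨k, hk⟩ := hden
  refine ⟨k * x.num - D, ?_⟩
  have hd : (x.den : ℚ) ≠ 0 := by exact_mod_cast x.den_nz
  have hkq : (D : ℚ) = (x.den : ℚ) * (k : ℚ) := by exact_mod_cast hk
  have hx : (x.num : ℚ) = x.den * x := by
    rw [mul_comm, ← div_eq_iff hd, Rat.num_div_den]
  push_cast
  rw [hkq, hx]; ring

/-- If `0 < x < y < 1`, `D = lcm` of the denominators of `x` and `y`, and `p > D`
is prime, then for every `j ≥ 0` the `j`-th `p`-adic digits of `x − 1` and
`y − 1` are distinct. -/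
theorem stmt_15 (x y : ℚ) (h0 : 0 < x) (hxy : x < y) (h1 : y < 1)
    (D : ℕ) (hD : D = Nat.lcm x.den y.den)
    (p : ℕ) (hp : p.Prime) (hpD : D < p)
    (τx τy : ℕ → ℤ) (hτx : IsTrunc p (x - 1) τx) (hτy : IsTrunc p (y - 1) τy) :
    ∀ j : ℕ,
      (τx (j + 1) - τx j) / (p : ℤ) ^ j ≠ (τy (j + 1) - τy j) / (p : ℤ) ^ j := by
  intro j hEq
  have hD0 : 0 < D := by
    rw [hD]
    exact Nat.pos_of_ne_zero (Nat.lcm_ne_zero x.den_nz y.den_nz)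
  have hx1 : x < 1 := lt_trans hxy h1
  obtain ⟨Mx, hMx⟩ := aux_M D x (hD ▸ Nat.dvd_lcm_left _ _)
  obtain ⟨My, hMy⟩ := aux_M D y (hD ▸ Nat.dvd_lcm_right _ _)
  obtain ⟨cx, hcx0, hcxD, hcx⟩ := aux_c p D hp hD0 hpD (x - 1)
    (by linarith) (by linarith) Mx hMx τx hτx j
  obtain ⟨cx', _, _, hcx'⟩ := aux_c p D hp hD0 hpD (x - 1)
    (by linarith) (by linarith) Mx hMx τx hτx (j + 1)
  obtain ⟨cy, hcy0, hcyD, hcy⟩ := aux_c p D hp hD0 hpD (y - 1)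
    (by linarith) (by linarith) My hMy τy hτy j
  obtain ⟨cy', _, _, hcy'⟩ := aux_c p D hp hD0 hpD (y - 1)
    (by linarith) (by linarith) My hMy τy hτy (j + 1)
  have hpne : ((p:ℤ))^j ≠ 0 := pow_ne_zero j (by exact_mod_cast hp.pos.ne')
  -- integer identities
  have hZx : (D:ℤ) * (τx (j+1) - τx j) = (p:ℤ)^j * ((p:ℤ) * cx' - cx) := by
    have : (D:ℚ) * ((τx (j+1) : ℚ) - (τx j : ℚ)) = (p:ℚ)^j * ((p:ℚ) * (cx':ℚ) - (cx:ℚ)) := by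
      linear_combination hcx - hcx'
    exact_mod_cast this
  have hZy : (D:ℤ) * (τy (j+1) - τy j) = (p:ℤ)^j * ((p:ℤ) * cy' - cy) := by
    have : (D:ℚ) * ((τy (j+1) : ℚ) - (τy j : ℚ)) = (p:ℚ)^j * ((p:ℚ) * (cy':ℚ) - (cy:ℚ)) := by
      linear_combination hcy - hcy'
    exact_mod_cast this
  have hcop : IsCoprime ((p:ℤ)^j) ((D:ℤ)) := by
    have hnd : ¬ p ∣ D := fun h => absurd (Nat.le_of_dvd hD0 h) (not_le.mpr hpD)
    have h1' : Nat.Coprime (p^j) D := (Nat.Prime.coprime_iff_not_dvd hp |>.mpr hnd).pow_left j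
    have h2' := Nat.isCoprime_iff_coprime.mpr h1'
    rw [show ((p:ℤ))^j = ((p^j : ℕ) : ℤ) by push_cast; ring]
    exact h2'
  have hdx : ∃ dx : ℤ, τx (j+1) - τx j = (p:ℤ)^j * dx :=
    hcop.dvd_of_dvd_mul_left ⟨_, hZx⟩
  have hdy : ∃ dy : ℤ, τy (j+1) - τy j = (p:ℤ)^j * dy :=
    hcop.dvd_of_dvd_mul_left ⟨_, hZy⟩
  obtain ⟨dx, hdxe⟩ := hdx
  obtain ⟨dy, hdye⟩ := hdy
  have hqx : (τx (j+1) - τx j) / (p:ℤ)^j = dx := by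
    rw [hdxe]; exact Int.mul_ediv_cancel_left _ hpne
  have hqy : (τy (j+1) - τy j) / (p:ℤ)^j = dy := by
    rw [hdye]; exact Int.mul_ediv_cancel_left _ hpne
  rw [hqx, hqy] at hEq
  have hDdx : (D:ℤ) * dx = (p:ℤ) * cx' - cx :=
    mul_left_cancel₀ hpne (by rw [← hZx, hdxe]; ring)
  have hDdy : (D:ℤ) * dy = (p:ℤ) * cy' - cy :=
    mul_left_cancel₀ hpne (by rw [← hZy, hdye]; ring)
  have hsub : cx - cy = (p:ℤ) * (cx' - cy') := by
    linear_combination hDdx - hDdy - (D:ℤ) * hEq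
  have hDp' : (D:ℤ) < (p:ℤ) := by exact_mod_cast hpD
  have hcc : cx = cy := by
    have h0' : cx - cy = 0 :=
      Int.eq_zero_of_abs_lt_dvd ⟨cx' - cy', hsub⟩ (abs_lt.mpr ⟨by linarith, by linarith⟩)
    omega
  have hccQ : (cx : ℚ) = (cy : ℚ) := by exact_mod_cast hcc
  have hDQ : (0:ℚ) < (D:ℚ) := by exact_mod_cast hD0
  have hQ : (D:ℚ) * (y - x) = (D:ℚ) * ((τy j : ℚ) - (τx j : ℚ)) := by
    linear_combination hcy - hcx + (p:ℚ)^j * hccQ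
  have hk : (y : ℚ) - x = ((τy j - τx j : ℤ) : ℚ) := by
    have := mul_left_cancel₀ hDQ.ne' hQ
    push_cast
    linarith [this]
  have hk0 : (0:ℚ) < ((τy j - τx j : ℤ) : ℚ) := by rw [← hk]; linarith
  have hk1 : ((τy j - τx j : ℤ) : ℚ) < 1 := by rw [← hk]; linarith
  have : (0:ℤ) < τy j - τx j := by exact_mod_cast hk0
  have : τy j - τx j < 1 := by exact_mod_cast hk1
  omega
end

section
/- Let p be an odd prime. Then for every m ≥ 0, the m-th coefficient A_m = ((1/2)_m)^2/(m!)^2 of the hypergeometric series ₂F₁(1/2, 1/2; 1; z) satisfies v_p(A_m) = 2·c_p(−1/2, m); in particular v_p(A_m) ≥ 0, so the coefficients of ₂F₁(1/2, 1/2; 1; z) are p-adic integers for every odd prime p. -/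
open scoped BigOperators

lemma poch_half (m : ℕ) :
    (ascPochhammer ℚ m).eval (1/2 : ℚ) = ((2*m).factorial : ℚ) / (4 ^ m * m.factorial) := by
  induction m with
  | zero => simp
  | succ n ih =>
    rw [ascPochhammer_succ_eval, ih]
    have h2 : 2 * (n + 1) = 2 * n + 1 + 1 := by ring
    rw [h2, Nat.factorial_succ, Nat.factorial_succ, Nat.factorial_succ]
    push_cast
    have h4 : ((4:ℚ)^n) ≠ 0 := by positivity
    have hf : ((n.factorial : ℚ)) ≠ 0 := by exact_mod_cast n.factorial_ne_zero
    field_simp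
    ring

lemma poch_one (m : ℕ) : (ascPochhammer ℚ m).eval (1 : ℚ) = (m.factorial : ℚ) := by
  induction m with
  | zero => simp
  | succ n ih => rw [ascPochhammer_succ_eval, ih, Nat.factorial_succ]; push_cast; ring

lemma hypCoeff_eq (m : ℕ) :
    hypCoeff (1/2) (1/2) 1 m = (((2*m).choose m : ℚ) / 4 ^ m) ^ 2 := by
  have hc : (((2*m).choose m : ℚ)) = ((2*m).factorial : ℚ) / (m.factorial * m.factorial) := by
    rw [Nat.cast_choose ℚ (by omega : m ≤ 2*m)]
    have : 2*m - m = m := by omega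
    rw [this]
  rw [hypCoeff, poch_half, poch_one, hc]
  have hf : ((m.factorial : ℚ)) ≠ 0 := by exact_mod_cast m.factorial_ne_zero
  have h4 : ((4:ℚ)^m) ≠ 0 := by positivity
  field_simp

lemma val_four_pow (p : ℕ) (hp : p.Prime) (hodd : p ≠ 2) (m : ℕ) :
    padicValRat p ((4:ℚ)^m) = 0 := by
  haveI := Fact.mk hp
  have h4 : padicValRat p (4:ℚ) = 0 := by
    have h : ((4:ℚ)) = ((4:ℕ):ℚ) := by norm_num
    rw [h, padicValRat.of_nat]
    norm_cast
    apply padicValNat.eq_zero_of_not_dvd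
    intro hdvd
    have : p ∣ 2 := hp.dvd_of_dvd_pow (show p ∣ 2^2 by norm_num at hdvd ⊢; exact hdvd)
    exact hodd ((Nat.prime_dvd_prime_iff_eq hp Nat.prime_two).1 this)
  rw [padicValRat.pow (4:ℚ), h4, mul_zero]

lemma val_hypCoeff (p : ℕ) (hp : p.Prime) (hodd : p ≠ 2) (m : ℕ) :
    padicValRat p (hypCoeff (1/2) (1/2) 1 m)
      = 2 * (padicValNat p ((2*m).choose m) : ℤ) := by
  haveI := Fact.mk hp
  have hC : (((2*m).choose m : ℚ)) ≠ 0 := by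
    exact_mod_cast (Nat.choose_pos (by omega : m ≤ 2*m)).ne'
  have h4 : ((4:ℚ)^m) ≠ 0 := by positivity
  rw [hypCoeff_eq, padicValRat.pow (((2*m).choose m : ℚ) / 4 ^ m), padicValRat.div hC h4,
    val_four_pow p hp hodd, ← padicValRat.of_nat]
  push_cast
  ring

lemma tau_eq (p : ℕ) (hp : p.Prime) (hodd : p ≠ 2) (τ : ℕ → ℤ)
    (hτ : IsTrunc p (-(1/2) : ℚ) τ) (j : ℕ) (hj : 1 ≤ j) :
    2 * τ j + 1 = (p:ℤ) ^ j := by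
  haveI := Fact.mk hp
  obtain ⟨h0, h1, h2⟩ := hτ j
  rcases h2 with h | h
  · exfalso
    have h' : (-1 : ℚ) = 2 * (τ j : ℚ) := by rw [← h]; ring  -- -1 = 2τj impossible
    have : (-1 : ℤ) = 2 * τ j := by exact_mod_cast h'
    omega
  · set t : ℤ := 2 * τ j + 1 with hBdef
    have ht0 : 0 < t := by omega
    have heq : (-(1/2) : ℚ) - (τ j : ℚ) = -((t:ℚ) / 2) := by
      rw [hBdef]; push_cast; ring
    have hval2 : padicValRat p (2:ℚ) = 0 := by
      have h : ((2:ℚ)) = ((2:ℕ):ℚ) := by norm_num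
      rw [h, padicValRat.of_nat]
      norm_cast
      apply padicValNat.eq_zero_of_not_dvd
      intro hdvd
      exact hodd ((Nat.prime_dvd_prime_iff_eq hp Nat.prime_two).1 hdvd)
    have htQ : ((t:ℚ)) ≠ 0 := by exact_mod_cast ht0.ne'
    rw [heq, padicValRat.neg, padicValRat.div htQ (by norm_num), hval2, sub_zero,
      padicValRat.of_int] at h
    have hdvd : (p:ℤ)^j ∣ t := by
      have : p ^ j ∣ t.natAbs := by
        rw [padicValNat_dvd_iff_le (by simpa using ht0.ne')]
        exact_mod_cast h
      have h2 := Int.natCast_dvd_natCast.2 this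
      rwa [Int.natCast_pow, Int.natAbs_of_nonneg ht0.le] at h2
    obtain ⟨c, hc⟩ := hdvd
    have hppos : (0:ℤ) < (p:ℤ)^j := pow_pos (by exact_mod_cast hp.pos) j
    have hc1 : 0 < c := by nlinarith
    have hc2 : c < 2 := by nlinarith
    have : c = 1 := by omega
    rw [this, mul_one] at hc
    omega

lemma carries_eq (p : ℕ) (hp : p.Prime) (hodd : p ≠ 2) (τ : ℕ → ℤ)
    (hτ : IsTrunc p (-(1/2) : ℚ) τ) (m : ℕ) :
    carries p τ m = padicValNat p ((2*m).choose m) := by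
  haveI := Fact.mk hp
  have hp1 : 1 < p := hp.one_lt
  have key : ∀ j, 1 ≤ j →
      ((p:ℤ)^j ≤ τ j + ((m % p^j : ℕ) : ℤ) ↔ p^j ≤ m % p^j + m % p^j) := by
    intro j hj
    have ht := tau_eq p hp hodd τ hτ j hj
    obtain ⟨k, hk⟩ := (hp.odd_of_ne_two hodd).pow (n := j)
    have hPc : ((p^j : ℕ) : ℤ) = (p:ℤ)^j := by push_cast; ring
    have hMle : m % p^j < p^j := Nat.mod_lt _ (by positivity)
    generalize m % p^j = M at *
    omega
  rcases Nat.eq_zero_or_pos m with rfl | hm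
  · have hc : carries p τ 0 = 0 := by
      rw [carries]
      convert Set.ncard_empty ℕ using 2
      ext j
      simp only [Set.mem_setOf_eq, Set.mem_empty_iff_false, iff_false, not_and]
      intro hj hle
      have h' := (key j hj).1 (by simpa using hle)
      have : 0 < p ^ j := by positivity
      simp [Nat.zero_mod] at h'
      omega
    simp [hc]
  · set b := Nat.log p (2*m) + 1 with hbdef
    have hb : Nat.log p (2*m) < b := Nat.lt_succ_self _
    rw [padicValNat_choose (by omega : m ≤ 2*m) hb]
    rw [carries]
    have hsub : 2*m - m = m := by omega
    have hset : {j : ℕ | 1 ≤ j ∧ (p:ℤ)^j ≤ τ j + ((m % p^j : ℕ):ℤ)}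
        = ↑((Finset.Ico 1 b).filter fun i => p^i ≤ m % p^i + (2*m - m) % p^i) := by
      ext j
      simp only [Finset.coe_filter, Finset.mem_Ico, Set.mem_setOf_eq, hsub]
      constructor
      · rintro ⟨hj, h⟩
        have h' := (key j hj).1 h
        refine ⟨⟨hj, ?_⟩, h'⟩
        have hmod : m % p^j ≤ m := Nat.mod_le _ _
        have h2 : p^j ≤ 2*m := by omega
        have hlog := (Nat.le_log_iff_pow_le hp1 (by omega : 2*m ≠ 0)).2 h2
        omega
      · rintro ⟨⟨hj, _⟩, h⟩
        exact ⟨hj, (key j hj).2 h⟩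
    rw [hset, Set.ncard_coe_finset]


/-- For every odd prime `p`, the coefficients
`A_m = ((1/2)_m)^2/(m!)^2` of `₂F₁(1/2, 1/2; 1; z)` satisfy
`v_p(A_m) = 2·c_p(−1/2, m) ≥ 0`; in particular they are `p`-adic integers. -/
theorem stmt_17 (p : ℕ) (hp : p.Prime) (hodd : p ≠ 2)
    (τ : ℕ → ℤ) (hτ : IsTrunc p (-(1 / 2) : ℚ) τ) :
    ∀ m : ℕ,
      padicValRat p (hypCoeff (1 / 2) (1 / 2) 1 m) = 2 * (carries p τ m : ℤ) ∧
      0 ≤ padicValRat p (hypCoeff (1 / 2) (1 / 2) 1 m) := by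
  intro m
  have h1 := val_hypCoeff p hp hodd m
  have h2 := carries_eq p hp hodd τ hτ m
  constructor
  · rw [h1, h2]
  · rw [h1]; positivity
end
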